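/- arXiv:1411.1305 — 3 statements merged into one kernel-verified Lean document; each statement's English description precedes it below -/
import Mathlib

section
/- Let A be a supersolvable real central hyperplane arrangement with fundamental chamber c₀ incident to a modular flag. Then a subset I ⊆ A is biclosed if and only if I = S(c₀,c) for some chamber c. -/
open Matrix
open scoped Classical

/-- Ambient space: `ℝⁿ`. -/
abbrev V (n : ℕ) := Fin n → ℝ

/-- The linear functional `x ↦ v ⬝ᵥ x` determined by a normal vector. -/
def hypl {n : ℕ} (v : V n) : V n →ₗ[ℝ] ℝ where
  toFun x := v ⬝ᵥ x
  map_add' x y := by simp [dotProduct_add]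
  map_smul' c x := by simp [dotProduct_smul]

/-- Two normal vectors define the same hyperplane. -/
def SameHyp {n : ℕ} (u w : V n) : Prop := ∀ x, u ⬝ᵥ x = 0 ↔ w ⬝ᵥ x = 0

/-- A finite set of normal vectors represents a (central) hyperplane arrangement
if each normal is nonzero and distinct normals define distinct hyperplanes. -/
def IsArrangement {n : ℕ} (A : Finset (V n)) : Prop :=
  (∀ v ∈ A, v ≠ 0) ∧ ∀ u ∈ A, ∀ w ∈ A, SameHyp u w → u = w

/-- The point `x` realizes the sign vector `c` on the arrangement `A`. -/
def Realizes {n : ℕ} (A : Finset (V n)) (c : V n → Bool) (x : V n) : Prop :=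
  ∀ v ∈ A, if c v then 0 < v ⬝ᵥ x else v ⬝ᵥ x < 0

/-- A chamber of `A`, encoded by its sign vector. -/
def IsChamber {n : ℕ} (A : Finset (V n)) (c : V n → Bool) : Prop :=
  ∃ x, Realizes A c x

/-- The separation set of two chambers: hyperplanes on which their signs differ. -/
noncomputable def SepSet {n : ℕ} (A : Finset (V n)) (c d : V n → Bool) : Finset (V n) :=
  A.filter (fun v => c v ≠ d v)

/-- The localization of `A` at the subspace `ker u ∩ ker w`:
hyperplanes containing this subspace. -/
noncomputable def loc {n : ℕ} (A : Finset (V n)) (u w : V n) : Finset (V n) :=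
  A.filter (fun v => ∀ x, u ⬝ᵥ x = 0 → w ⬝ᵥ x = 0 → v ⬝ᵥ x = 0)

/-- `u, w` span a codimension-2 intersection subspace `ker u ∩ ker w` of `A`. -/
def Codim2 {n : ℕ} (A : Finset (V n)) (u w : V n) : Prop :=
  u ∈ A ∧ w ∈ A ∧ LinearIndependent ℝ ![u, w]

/-- `I` is biclosed w.r.t. the chamber `c₀`: its intersection with each rank-2
localization is the separation set of some chamber of the localization. -/
def IsBiclosed {n : ℕ} (A : Finset (V n)) (c₀ : V n → Bool) (I : Finset (V n)) : Prop :=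
  ∀ u w, Codim2 A u w →
    ∃ d, IsChamber (loc A u w) d ∧ I ∩ loc A u w = SepSet (loc A u w) c₀ d

/-- `I ⊆ A` is convex with respect to `c₀`. -/
def IsConvex {n : ℕ} (A : Finset (V n)) (c₀ : V n → Bool) (I : Finset (V n)) : Prop :=
  ∀ H ∈ A \ I, ∃ e, IsChamber A e ∧ H ∈ SepSet A c₀ e ∧ SepSet A c₀ e ⊆ A \ I

/-- `I` is 2-closed: its intersection with each rank-2 localization is convex there. -/
def Is2Closed {n : ℕ} (A : Finset (V n)) (c₀ : V n → Bool) (I : Finset (V n)) : Prop :=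
  ∀ u w, Codim2 A u w → IsConvex (loc A u w) c₀ (I ∩ loc A u w)

/-- `v` is a wall of the chamber `c`: some point of the closure of `c` lies on the
hyperplane of `v` and strictly off every other hyperplane of `A`. -/
def IsWall {n : ℕ} (A : Finset (V n)) (c : V n → Bool) (v : V n) : Prop :=
  v ∈ A ∧ ∃ x, v ⬝ᵥ x = 0 ∧ ∀ w ∈ A, ¬ SameHyp v w →
    (if c w then 0 < w ⬝ᵥ x else w ⬝ᵥ x < 0)

/-- The sign vector `v` is feasible: some point satisfies all its strict constraints. -/
def Feasible {n : ℕ} (A : Finset (V n)) (v : V n → SignType) : Prop :=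
  ∃ x : V n, ∀ h ∈ A, (v h = 1 → 0 < h ⬝ᵥ x) ∧ (v h = -1 → h ⬝ᵥ x < 0)

/-- A circuit of `A`: a minimal nonzero infeasible sign vector supported on `A`. -/
def IsCircuit {n : ℕ} (A : Finset (V n)) (v : V n → SignType) : Prop :=
  (∀ h, v h ≠ 0 → h ∈ A) ∧ (∃ h, v h ≠ 0) ∧ ¬ Feasible A v ∧
    ∀ w : V n → SignType, (∀ h, w h ≠ 0 → w h = v h) →
      {h | w h ≠ 0} ⊂ {h | v h ≠ 0} → Feasible A w

/-- A reduced gallery from `c₀` to `-c₀` in `A`, crossing hyperplanes `H 0, H 1, …`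
in order. -/
def IsGallery {n N : ℕ} (A : Finset (V n)) (c₀ : V n → Bool) (H : Fin N → V n)
    (d : Fin (N + 1) → V n → Bool) : Prop :=
  (∀ i, IsChamber A (d i)) ∧ d 0 = c₀ ∧ (∀ v ∈ A, d (Fin.last N) v = !c₀ v) ∧
    ∀ i : Fin N, SepSet A (d i.castSucc) (d i.succ) = {H i}

/-- The enumeration `H` of `A` is admissible: on every rank-2 localization, the
induced order is the crossing order of some reduced gallery of the localization. -/
def Admissible {n N : ℕ} (A : Finset (V n)) (c₀ : V n → Bool) (H : Fin N → V n) : Prop :=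
  ∀ u w, Codim2 A u w →
    ∃ (M : ℕ) (G : Fin M → V n) (e : Fin (M + 1) → V n → Bool) (φ : Fin M → Fin N),
      IsGallery (loc A u w) c₀ G e ∧ StrictMono φ ∧ ∀ k, G k = H (φ k)

/-- The intersection lattice of `A`, as a set of subspaces of `ℝⁿ`. -/
def InterLattice {n : ℕ} (A : Finset (V n)) : Set (Submodule ℝ (V n)) :=
  {X | ∃ S : Finset (V n), S ⊆ A ∧ X = S.inf (fun v => LinearMap.ker (hypl v))}

/-- A modular element of the intersection lattice of `A`. -/
def IsModular {n : ℕ} (A : Finset (V n)) (X : Submodule ℝ (V n)) : Prop :=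
  X ∈ InterLattice A ∧ ∀ Y ∈ InterLattice A, X ⊔ Y ∈ InterLattice A

/-- The rank of the arrangement `A`. -/
noncomputable def rankA {n : ℕ} (A : Finset (V n)) : ℕ :=
  Module.finrank ℝ (Submodule.span ℝ (A : Set (V n)))

/-- A modular flag: a maximal chain `⊤ = X 0 > X 1 > ⋯ > X r` of modular
elements of the intersection lattice, with `X i` of codimension `i`. -/
def IsModularFlag {n : ℕ} (A : Finset (V n)) (X : Fin (rankA A + 1) → Submodule ℝ (V n)) : Prop :=
  X 0 = ⊤ ∧ (∀ i, IsModular A (X i)) ∧ (∀ i j, i ≤ j → X j ≤ X i) ∧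
    ∀ i : Fin (rankA A + 1), Module.finrank ℝ (X i) = n - (i : ℕ)

/-- `A` is supersolvable: its intersection lattice has a modular flag. -/
def IsSupersolvable {n : ℕ} (A : Finset (V n)) : Prop :=
  ∃ X : Fin (rankA A + 1) → Submodule ℝ (V n), IsModularFlag A X

/-- The chamber `c` is incident to the subspace `X`:  some point of `X` lies in the
closure of `c` and strictly off every hyperplane of `A` not containing `X`. -/
def IncidentSub {n : ℕ} (A : Finset (V n)) (c : V n → Bool) (X : Submodule ℝ (V n)) : Prop :=
  ∃ x, x ∈ X ∧ ∀ v ∈ A, ¬ X ≤ LinearMap.ker (hypl v) →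
    (if c v then 0 < v ⬝ᵥ x else v ⬝ᵥ x < 0)

/-- The chamber `c` is incident to the codimension-2 subspace `ker u ∩ ker w`. -/
def IncidentLoc {n : ℕ} (A : Finset (V n)) (c : V n → Bool) (u w : V n) : Prop :=
  ∃ x, (∀ v ∈ loc A u w, v ⬝ᵥ x = 0) ∧ ∀ v ∈ A, v ∉ loc A u w →
    (if c v then 0 < v ⬝ᵥ x else v ⬝ᵥ x < 0)

/-- `(A, c₀)` is bineighborly: any chamber is incident to the intersection of any two
of its walls separating it from `-c₀`. -/
def Bineighborly {n : ℕ} (A : Finset (V n)) (c₀ : V n → Bool) : Prop :=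
  ∀ c, IsChamber A c → ∀ u w, IsWall A c u → IsWall A c w →
    u ∈ SepSet A c (fun v => !c₀ v) → w ∈ SepSet A c (fun v => !c₀ v) → IncidentLoc A c u w

/-- Every chamber of `A` is a simplicial cone: its walls are linearly independent
and span the same subspace as `A`. -/
def IsSimplicial {n : ℕ} (A : Finset (V n)) : Prop :=
  ∀ c, IsChamber A c →
    LinearIndependent ℝ ((↑) : {v // IsWall A c v} → V n) ∧
      Submodule.span ℝ {v | IsWall A c v} = Submodule.span ℝ (A : Set (V n))

namespace BiclosedAux

variable {n : ℕ}

lemma hypl_apply (v x : V n) : hypl v x = v ⬝ᵥ x := rfl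

lemma dot_self_ne {v : V n} (hv : v ≠ 0) : v ⬝ᵥ v ≠ 0 := by
  simpa [dotProduct_self_eq_zero] using hv

lemma dot_proportional {u w : V n} (hu : u ≠ 0)
    (h : ∀ x, u ⬝ᵥ x = 0 → w ⬝ᵥ x = 0) : ∃ lam : ℝ, w = lam • u := by
  have huu : u ⬝ᵥ u ≠ 0 := dot_self_ne hu
  set lam := (w ⬝ᵥ u) / (u ⬝ᵥ u) with hlam
  refine ⟨lam, ?_⟩
  have key : ∀ x, w ⬝ᵥ x = lam * (u ⬝ᵥ x) := by
    intro x
    have h1 : u ⬝ᵥ (x - ((u ⬝ᵥ x) / (u ⬝ᵥ u)) • u) = 0 := by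
      simp [dotProduct_sub, dotProduct_smul, smul_eq_mul]
      field_simp
      ring
    have h2 := h _ h1
    simp [dotProduct_sub, dotProduct_smul, smul_eq_mul] at h2
    rw [hlam]
    field_simp at h2 ⊢
    linarith [h2]
  have hq : (w - lam • u) ⬝ᵥ (w - lam • u) = 0 := by
    have h1 : w ⬝ᵥ (w - lam • u) = lam * (u ⬝ᵥ (w - lam • u)) := key _
    simp only [sub_dotProduct, smul_dotProduct, smul_eq_mul] at h1 ⊢
    linarith [h1]
  exact sub_eq_zero.mp (dotProduct_self_eq_zero.mp hq)

lemma same_of_ker_le {A : Finset (V n)} (hA : IsArrangement A)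
    {u w : V n} (hu : u ∈ A) (hw : w ∈ A)
    (h : ∀ x, u ⬝ᵥ x = 0 → w ⬝ᵥ x = 0) : u = w := by
  obtain ⟨lam, rfl⟩ := dot_proportional (hA.1 u hu) h
  have hlam : lam ≠ 0 := by
    rintro rfl
    exact hA.1 _ hw (by simp)
  refine hA.2 u hu _ hw ?_
  intro x
  constructor
  · intro hx
    simp [smul_dotProduct, hx]
  · intro hx
    simp only [smul_dotProduct, smul_eq_mul] at hx
    rcases mul_eq_zero.mp hx with h' | h'
    · exact absurd h' hlam
    · exact h'

lemma pair_indep {A : Finset (V n)} (hA : IsArrangement A)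
    {u w : V n} (hu : u ∈ A) (hw : w ∈ A) (hne : u ≠ w) :
    LinearIndependent ℝ ![u, w] := by
  rw [LinearIndependent.pair_iff]
  intro s t hst
  by_cases ht : t = 0
  · subst ht
    simp only [smul_zero, zero_smul, add_zero] at hst
    rcases smul_eq_zero.mp hst with h' | h'
    · exact ⟨h', rfl⟩
    · exact absurd h' (hA.1 u hu)
  · exfalso
    apply hne
    have hw' : w = (-s / t) • u := by
      have h1 : t • w = (-s) • u := by
        rw [neg_smul]
        linear_combination (norm := module) hst
      have h2 : t⁻¹ • (t • w) = t⁻¹ • ((-s) • u) := by rw [h1]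
      rw [smul_smul, smul_smul, inv_mul_cancel₀ ht, one_smul] at h2
      rw [h2, div_eq_inv_mul]
    refine same_of_ker_le hA hu hw ?_
    intro x hx
    rw [hw']
    simp [smul_dotProduct, hx]

lemma finrank_ker_hypl {u : V n} (hu : u ≠ 0) :
    Module.finrank ℝ (LinearMap.ker (hypl u)) + 1 = n := by
  have h1 := LinearMap.finrank_range_add_finrank_ker (hypl u)
  have h2 : Module.finrank ℝ (V n) = n := by
    simp [Module.finrank_pi]
  have hrange : Module.finrank ℝ (LinearMap.range (hypl u)) = 1 := by
    refine le_antisymm ?_ ?_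
    · simpa [Module.finrank_self] using Submodule.finrank_le (LinearMap.range (hypl u))
    · rw [Nat.one_le_iff_ne_zero]
      intro h0
      have hbot := Submodule.finrank_eq_zero.mp h0
      have : hypl u u = 0 := by
        have : hypl u u ∈ LinearMap.range (hypl u) := ⟨u, rfl⟩
        rw [hbot] at this
        simpa using this
      exact dot_self_ne hu this
  rw [hrange, h2] at h1
  omega

lemma D_vanish {u w v₀ y : V n} (hv₀ : v₀ ≠ 0)
    (hloc : ∀ x, u ⬝ᵥ x = 0 → w ⬝ᵥ x = 0 → v₀ ⬝ᵥ x = 0)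
    (hy0 : v₀ ⬝ᵥ y = 0) (huy : u ⬝ᵥ y ≠ 0) :
    ∀ x, v₀ ⬝ᵥ x = 0 → (u ⬝ᵥ x) * (w ⬝ᵥ y) - (u ⬝ᵥ y) * (w ⬝ᵥ x) = 0 := by
  intro x hx
  by_contra hD
  set p := x - ((u ⬝ᵥ x) / (u ⬝ᵥ y)) • y with hp
  have hup : u ⬝ᵥ p = 0 := by
    simp only [hp, dotProduct_sub, dotProduct_smul, smul_eq_mul]
    field_simp
    ring
  have hwp : w ⬝ᵥ p ≠ 0 := by
    simp only [hp, dotProduct_sub, dotProduct_smul, smul_eq_mul]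
    intro hcon
    apply hD
    field_simp at hcon
    linarith [hcon]
  have hvp : v₀ ⬝ᵥ p = 0 := by
    simp [hp, dotProduct_sub, dotProduct_smul, smul_eq_mul, hx, hy0]
  have hkeru : ∀ q, u ⬝ᵥ q = 0 → v₀ ⬝ᵥ q = 0 := by
    intro q hq
    have h1 : u ⬝ᵥ (q - ((w ⬝ᵥ q) / (w ⬝ᵥ p)) • p) = 0 := by
      simp [dotProduct_sub, dotProduct_smul, smul_eq_mul, hq, hup]
    have h2 : w ⬝ᵥ (q - ((w ⬝ᵥ q) / (w ⬝ᵥ p)) • p) = 0 := by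
      simp only [dotProduct_sub, dotProduct_smul, smul_eq_mul]
      field_simp
      ring
    have h3 := hloc _ h1 h2
    simp only [dotProduct_sub, dotProduct_smul, smul_eq_mul, hvp,
      mul_zero, sub_zero] at h3
    exact h3
  have hall : ∀ q, v₀ ⬝ᵥ q = 0 := by
    intro q
    have h1 : u ⬝ᵥ (q - ((u ⬝ᵥ q) / (u ⬝ᵥ y)) • y) = 0 := by
      simp only [dotProduct_sub, dotProduct_smul, smul_eq_mul]
      field_simp
      ring
    have h2 := hkeru _ h1
    simp only [dotProduct_sub, dotProduct_smul, smul_eq_mul, hy0,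
      mul_zero, sub_zero] at h2
    exact h2
  exact dot_self_ne hv₀ (hall v₀)

lemma key_ineq {u w v₀ y x' z : V n} (hv₀ : v₀ ≠ 0)
    (hloc : ∀ x, u ⬝ᵥ x = 0 → w ⬝ᵥ x = 0 → v₀ ⬝ᵥ x = 0)
    (hy0 : v₀ ⬝ᵥ y = 0) (huy : u ⬝ᵥ y ≠ 0) (hwy : w ⬝ᵥ y ≠ 0)
    (huz : (u ⬝ᵥ z) * (u ⬝ᵥ y) < 0) (hwz : 0 < (w ⬝ᵥ z) * (w ⬝ᵥ y))
    (hvzx : 0 < (v₀ ⬝ᵥ z) * (v₀ ⬝ᵥ x')) :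
    -(w ⬝ᵥ x') / (w ⬝ᵥ y) < -(u ⬝ᵥ x') / (u ⬝ᵥ y) := by
  have hD := D_vanish hv₀ hloc hy0 huy
  have hvv0 : (0:ℝ) ≤ v₀ ⬝ᵥ v₀ := Finset.sum_nonneg fun i _ => mul_self_nonneg _
  have hvv : (0:ℝ) < v₀ ⬝ᵥ v₀ := lt_of_le_of_ne hvv0 (Ne.symm (dot_self_ne hv₀))
  have hlin : ∀ x, ((u ⬝ᵥ x) * (w ⬝ᵥ y) - (u ⬝ᵥ y) * (w ⬝ᵥ x)) * (v₀ ⬝ᵥ v₀)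
      = ((u ⬝ᵥ v₀) * (w ⬝ᵥ y) - (u ⬝ᵥ y) * (w ⬝ᵥ v₀)) * (v₀ ⬝ᵥ x) := by
    intro x
    have h0 : v₀ ⬝ᵥ (x - ((v₀ ⬝ᵥ x) / (v₀ ⬝ᵥ v₀)) • v₀) = 0 := by
      simp only [dotProduct_sub, dotProduct_smul, smul_eq_mul]
      field_simp
      ring
    have h1 := hD _ h0
    simp only [dotProduct_sub, dotProduct_smul, smul_eq_mul] at h1
    have hvv' : v₀ ⬝ᵥ v₀ ≠ 0 := ne_of_gt hvv
    field_simp at h1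
    nlinarith [h1]
  -- sign of D z * (a*b)
  have ha2 : 0 < (u ⬝ᵥ y)^2 := by positivity
  have hb2 : 0 < (w ⬝ᵥ y)^2 := by positivity
  have hDz : ((u ⬝ᵥ z) * (w ⬝ᵥ y) - (u ⬝ᵥ y) * (w ⬝ᵥ z)) * ((u ⬝ᵥ y) * (w ⬝ᵥ y)) < 0 := by
    nlinarith [mul_pos (neg_pos.mpr huz) hb2, mul_pos hwz ha2]
  have hzne : v₀ ⬝ᵥ z ≠ 0 := by
    intro h0
    rw [h0] at hvzx
    simp at hvzx
  have hz2 : 0 < (v₀ ⬝ᵥ z)^2 := by positivity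
  have hDx : ((u ⬝ᵥ x') * (w ⬝ᵥ y) - (u ⬝ᵥ y) * (w ⬝ᵥ x')) * ((u ⬝ᵥ y) * (w ⬝ᵥ y)) < 0 := by
    have e1 := hlin z
    have e2 := hlin x'
    have key : ((u ⬝ᵥ x') * (w ⬝ᵥ y) - (u ⬝ᵥ y) * (w ⬝ᵥ x')) * ((u ⬝ᵥ y) * (w ⬝ᵥ y))
          * ((v₀ ⬝ᵥ v₀) * (v₀ ⬝ᵥ z)^2)
        = (((u ⬝ᵥ z) * (w ⬝ᵥ y) - (u ⬝ᵥ y) * (w ⬝ᵥ z)) * ((u ⬝ᵥ y) * (w ⬝ᵥ y)))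
          * ((v₀ ⬝ᵥ v₀) * ((v₀ ⬝ᵥ z) * (v₀ ⬝ᵥ x'))) := by
      linear_combination ((u ⬝ᵥ y) * (w ⬝ᵥ y) * (v₀ ⬝ᵥ z)^2) * e2
        - ((u ⬝ᵥ y) * (w ⬝ᵥ y) * (v₀ ⬝ᵥ z) * (v₀ ⬝ᵥ x')) * e1
    nlinarith [key, mul_neg_of_neg_of_pos hDz (mul_pos hvv hvzx), mul_pos hvv hz2]
  have hab : (u ⬝ᵥ y) * (w ⬝ᵥ y) ≠ 0 := mul_ne_zero huy hwy
  have hgoal : 0 < -(u ⬝ᵥ x') / (u ⬝ᵥ y) - -(w ⬝ᵥ x') / (w ⬝ᵥ y) := by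
    have heq : -(u ⬝ᵥ x') / (u ⬝ᵥ y) - -(w ⬝ᵥ x') / (w ⬝ᵥ y)
        = -(((u ⬝ᵥ x') * (w ⬝ᵥ y) - (u ⬝ᵥ y) * (w ⬝ᵥ x'))) / ((u ⬝ᵥ y) * (w ⬝ᵥ y)) := by
      field_simp
      ring
    rw [heq, div_pos_iff]
    rcases lt_or_gt_of_ne hab with h | h
    · right
      exact ⟨by nlinarith, h⟩
    · left
      exact ⟨by nlinarith, h⟩
  linarith


lemma sign_ne_zero {a : ℝ} {s : Bool} (h : if s then 0 < a else a < 0) : a ≠ 0 := by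
  cases s
  · simp only [Bool.false_eq_true, if_false] at h
    exact ne_of_lt h
  · simp only [if_true] at h
    exact ne_of_gt h

lemma sign_mul_pos {a b : ℝ} {s : Bool} (ha : if s then 0 < a else a < 0)
    (hb : if s then 0 < b else b < 0) : 0 < a * b := by
  cases s
  · simp only [Bool.false_eq_true, if_false] at ha hb
    exact mul_pos_of_neg_of_neg ha hb
  · simp only [if_true] at ha hb
    exact mul_pos ha hb

lemma sign_mul_neg {a b : ℝ} {s t : Bool} (hst : s ≠ t)
    (ha : if s then 0 < a else a < 0) (hb : if t then 0 < b else b < 0) : a * b < 0 := by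
  cases s <;> cases t
  · exact absurd rfl hst
  · simp only [Bool.false_eq_true, if_false, if_true] at ha hb
    exact mul_neg_of_neg_of_pos ha hb
  · simp only [Bool.false_eq_true, if_false, if_true] at ha hb
    exact mul_neg_of_pos_of_neg ha hb
  · exact absurd rfl hst

lemma cross_lt {a b s : ℝ} (h : s < -a / b) :
    (0 < b → a + s * b < 0) ∧ (b < 0 → 0 < a + s * b) := by
  constructor <;> intro hbs
  · have := (lt_div_iff₀ hbs).mp h
    linarith
  · have := (lt_div_iff_of_neg hbs).mp h
    linarith

lemma cross_gt {a b s : ℝ} (h : -a / b < s) :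
    (0 < b → 0 < a + s * b) ∧ (b < 0 → a + s * b < 0) := by
  constructor <;> intro hbs
  · have := (div_lt_iff₀ hbs).mp h
    linarith
  · have := (div_lt_iff_of_neg hbs).mp h
    linarith

lemma exists_sep {α : Type*} (J K : Finset α) (T : α → ℝ)
    (h : ∀ u ∈ J, ∀ w ∈ K, T w < T u) :
    ∃ s : ℝ, (∀ v ∈ J, s < T v) ∧ (∀ v ∈ K, T v < s) := by
  rcases J.eq_empty_or_nonempty with hJ | hJ
  · rcases K.eq_empty_or_nonempty with hK | hK
    · exact ⟨0, by simp [hJ], by simp [hK]⟩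
    · refine ⟨K.sup' hK T + 1, by simp [hJ], fun v hv => ?_⟩
      have := Finset.le_sup' T hv
      linarith
  · rcases K.eq_empty_or_nonempty with hK | hK
    · refine ⟨J.inf' hJ T - 1, fun v hv => ?_, by simp [hK]⟩
      have := Finset.inf'_le T hv
      linarith
    · obtain ⟨a, ha, hae⟩ := Finset.exists_mem_eq_sup' hK T
      obtain ⟨b, hb, hbe⟩ := Finset.exists_mem_eq_inf' hJ T
      have hlt : K.sup' hK T < J.inf' hJ T := by
        rw [hae, hbe]
        exact h b hb a ha
      refine ⟨(K.sup' hK T + J.inf' hJ T) / 2, fun v hv => ?_, fun v hv => ?_⟩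
      · have := Finset.inf'_le T hv
        linarith
      · have := Finset.le_sup' T hv
        linarith

lemma finrank_inf_ker_ge (S : Finset (V n)) :
    n ≤ Module.finrank ℝ ↥(S.inf fun v => LinearMap.ker (hypl v))
      + Module.finrank ℝ ↥(Submodule.span ℝ (S : Set (V n))) := by
  set W := Submodule.span ℝ (S : Set (V n)) with hW
  set f : V n →ₗ[ℝ] (W →ₗ[ℝ] ℝ) :=
    { toFun := fun x =>
        { toFun := fun v => (v : V n) ⬝ᵥ x
          map_add' := fun a b => by simp [add_dotProduct]
          map_smul' := fun cc a => by simp [smul_dotProduct] }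
      map_add' := fun a b => by ext v; simp [dotProduct_add]
      map_smul' := fun cc a => by ext v; simp [dotProduct_smul] } with hf
  have hker : LinearMap.ker f ≤ S.inf fun v => LinearMap.ker (hypl v) := by
    intro x hx
    rw [Submodule.mem_finsetInf]
    intro v hv
    have h1 := LinearMap.congr_fun (LinearMap.mem_ker.mp hx) ⟨v, Submodule.subset_span hv⟩
    exact LinearMap.mem_ker.mpr h1
  have h1 := LinearMap.finrank_range_add_finrank_ker f
  have h2 : Module.finrank ℝ (V n) = n := by simp [Module.finrank_pi]
  have h3 : Module.finrank ℝ ↥(LinearMap.range f) ≤ Module.finrank ℝ ↥W := by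
    refine le_trans (Submodule.finrank_le _) (le_of_eq ?_)
    exact Subspace.dual_finrank_eq
  have h4 := Submodule.finrank_mono hker
  omega

lemma exists_base {A : Finset (V n)} (hA : IsArrangement A)
    {Xi Xi1 : Submodule ℝ (V n)} {u w : V n}
    (hmod : ∀ Y ∈ InterLattice A, Xi ⊔ Y ∈ InterLattice A)
    (hu : u ∈ A) (hw : w ∈ A) (hne : u ≠ w)
    (h1u : Xi1 ≤ LinearMap.ker (hypl u)) (h1w : Xi1 ≤ LinearMap.ker (hypl w))
    (h1i : Xi1 ≤ Xi)
    (hrk : Module.finrank ℝ Xi1 + 1 = Module.finrank ℝ Xi) :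
    ∃ v₀ ∈ A, Xi ≤ LinearMap.ker (hypl v₀) ∧
      LinearMap.ker (hypl u) ⊓ LinearMap.ker (hypl w) ≤ LinearMap.ker (hypl v₀) := by
  set Y := LinearMap.ker (hypl u) ⊓ LinearMap.ker (hypl w) with hY
  have hYlat : Y ∈ InterLattice A := by
    refine ⟨{u, w}, ?_, ?_⟩
    · intro v hv
      simp only [Finset.mem_insert, Finset.mem_singleton] at hv
      rcases hv with rfl | rfl <;> assumption
    · rw [Finset.inf_insert, Finset.inf_singleton]
  obtain ⟨S, hSsub, hSeq⟩ := hmod Y hYlat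
  have hSne : S.Nonempty := by
    rw [Finset.nonempty_iff_ne_empty]
    rintro rfl
    rw [Finset.inf_empty] at hSeq
    -- finrank contradiction
    have hku : Module.finrank ℝ (LinearMap.ker (hypl u)) + 1 = n :=
      finrank_ker_hypl (hA.1 u hu)
    have hYlt : Y < LinearMap.ker (hypl u) := by
      refine lt_of_le_of_ne inf_le_left ?_
      intro heq
      apply hne
      refine same_of_ker_le hA hu hw ?_
      intro x hx
      have hxY : x ∈ Y := heq ▸ (LinearMap.mem_ker.mpr hx)
      exact LinearMap.mem_ker.mp hxY.2
    have hfY := Submodule.finrank_lt_finrank_of_lt hYlt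
    have hsupinf := Submodule.finrank_sup_add_finrank_inf_eq Xi Y
    have hXiY : Module.finrank ℝ Xi1 ≤ Module.finrank ℝ ↥(Xi ⊓ Y) :=
      Submodule.finrank_mono (le_inf h1i (le_inf h1u h1w))
    have htop : Module.finrank ℝ ↥(Xi ⊔ Y) = n := by
      rw [hSeq, finrank_top]
      simp [Module.finrank_pi]
    omega
  obtain ⟨v₀, hv₀S⟩ := hSne
  refine ⟨v₀, hSsub hv₀S, ?_, ?_⟩
  · exact le_trans (le_trans le_sup_left (le_of_eq hSeq)) (Finset.inf_le hv₀S)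
  · exact le_trans (le_trans le_sup_right (le_of_eq hSeq)) (Finset.inf_le hv₀S)

end BiclosedAux

theorem supersolvable_biclosed_iff_separable {n : ℕ} (A : Finset (V n))
    (hA : IsArrangement A) (c₀ : V n → Bool) (hc₀ : IsChamber A c₀)
    (hss : ∃ X : Fin (rankA A + 1) → Submodule ℝ (V n),
      IsModularFlag A X ∧ ∀ i, IncidentSub A c₀ (X i))
    (I : Finset (V n)) (hIA : I ⊆ A) :
    IsBiclosed A c₀ I ↔ ∃ c, IsChamber A c ∧ I = SepSet A c₀ c := by
  classical
  constructor
  · -- forward direction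
    intro hbic
    obtain ⟨X, hflag, hinc⟩ := hss
    obtain ⟨hX0, hmod, hXmono, hXrank⟩ := hflag
    set c : V n → Bool := fun v => if v ∈ I then !c₀ v else c₀ v with hcdef
    have hrn : rankA A ≤ n := by
      have h1 : rankA A ≤ Module.finrank ℝ (V n) := Submodule.finrank_le _
      simpa [Module.finrank_pi] using h1
    have key : ∀ i : ℕ, ∀ hi : i ≤ rankA A, ∃ x : V n,
        Realizes (A.filter fun v => X ⟨i, Nat.lt_succ_of_le hi⟩ ≤ LinearMap.ker (hypl v)) c x := by
      intro i
      induction i with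
      | zero =>
        intro hi
        refine ⟨0, ?_⟩
        intro v hv
        rw [Finset.mem_filter] at hv
        exfalso
        have e0 : (⟨0, Nat.lt_succ_of_le hi⟩ : Fin (rankA A + 1)) = 0 := by
          simp [Fin.ext_iff]
        rw [e0, hX0, top_le_iff, LinearMap.ker_eq_top] at hv
        have : v ⬝ᵥ v = 0 := by
          have := congrArg (fun f : V n →ₗ[ℝ] ℝ => f v) hv.2
          simpa [BiclosedAux.hypl_apply] using this
        exact hA.1 v hv.1 (dotProduct_self_eq_zero.mp this)
      | succ i ih =>
        intro hi1
        have hir : i ≤ rankA A := Nat.le_of_succ_le hi1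
        obtain ⟨x', hx'⟩ := ih hir
        obtain ⟨y, hyX, hy⟩ := hinc ⟨i, Nat.lt_succ_of_le hir⟩
        set Xi : Submodule ℝ (V n) := X ⟨i, Nat.lt_succ_of_le hir⟩ with hXi
        set Xi1 : Submodule ℝ (V n) := X ⟨i + 1, Nat.lt_succ_of_le hi1⟩ with hXi1
        set Ai := A.filter (fun v => Xi ≤ LinearMap.ker (hypl v)) with hAidef
        set Ai1 := A.filter (fun v => Xi1 ≤ LinearMap.ker (hypl v)) with hAi1def
        have hXle : Xi1 ≤ Xi := by
          refine hXmono _ _ ?_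
          rw [Fin.mk_le_mk]
          omega
        have hyzero : ∀ v ∈ Ai, v ⬝ᵥ y = 0 := by
          intro v hv
          rw [Finset.mem_filter] at hv
          exact LinearMap.mem_ker.mp (hv.2 hyX)
        have hysign : ∀ v ∈ A, v ∉ Ai → if c₀ v then 0 < v ⬝ᵥ y else v ⬝ᵥ y < 0 := by
          intro v hv hvn
          refine hy v hv ?_
          intro hle
          exact hvn (Finset.mem_filter.mpr ⟨hv, hle⟩)
        set T : V n → ℝ := fun v => -(v ⬝ᵥ x') / (v ⬝ᵥ y) with hT
        set Fi := Ai1 \ Ai with hFidef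
        set J := I ∩ Fi with hJdef
        set K := Fi \ J with hKdef
        have hcomp : ∀ u' ∈ J, ∀ w' ∈ K, T w' < T u' := by
          intro u' hu' w' hw'
          have hu'I : u' ∈ I := (Finset.mem_inter.mp hu').1
          have hu'F : u' ∈ Fi := (Finset.mem_inter.mp hu').2
          have hw'F : w' ∈ Fi := (Finset.mem_sdiff.mp hw').1
          have hw'I : w' ∉ I := by
            intro h
            exact (Finset.mem_sdiff.mp hw').2 (Finset.mem_inter.mpr ⟨h, hw'F⟩)
          have hu'A1 : u' ∈ Ai1 := (Finset.mem_sdiff.mp hu'F).1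
          have hu'nAi : u' ∉ Ai := (Finset.mem_sdiff.mp hu'F).2
          have hw'A1 : w' ∈ Ai1 := (Finset.mem_sdiff.mp hw'F).1
          have hw'nAi : w' ∉ Ai := (Finset.mem_sdiff.mp hw'F).2
          have hu'A : u' ∈ A := (Finset.mem_filter.mp hu'A1).1
          have hw'A : w' ∈ A := (Finset.mem_filter.mp hw'A1).1
          have hu'X : Xi1 ≤ LinearMap.ker (hypl u') := (Finset.mem_filter.mp hu'A1).2
          have hw'X : Xi1 ≤ LinearMap.ker (hypl w') := (Finset.mem_filter.mp hw'A1).2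
          have hne : u' ≠ w' := by
            rintro rfl
            exact hw'I hu'I
          have hrk : Module.finrank ℝ Xi1 + 1 = Module.finrank ℝ Xi := by
            rw [hXi, hXi1, hXrank, hXrank]
            simp only []
            omega
          obtain ⟨v₀, hv₀A, hv₀Xi, hv₀Y⟩ :=
            BiclosedAux.exists_base hA (hmod ⟨i, Nat.lt_succ_of_le hir⟩).2
              hu'A hw'A hne hu'X hw'X hXle hrk
          have hCod : Codim2 A u' w' := ⟨hu'A, hw'A, BiclosedAux.pair_indep hA hu'A hw'A hne⟩
          obtain ⟨d, ⟨z, hz⟩, hsep⟩ := hbic u' w' hCod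
          have hu'loc : u' ∈ loc A u' w' := by
            rw [loc, Finset.mem_filter]
            exact ⟨hu'A, fun x h _ => h⟩
          have hw'loc : w' ∈ loc A u' w' := by
            rw [loc, Finset.mem_filter]
            exact ⟨hw'A, fun x _ h => h⟩
          have hv₀loc : v₀ ∈ loc A u' w' := by
            rw [loc, Finset.mem_filter]
            refine ⟨hv₀A, fun x h1 h2 => ?_⟩
            exact LinearMap.mem_ker.mp
              (hv₀Y (Submodule.mem_inf.mpr ⟨LinearMap.mem_ker.mpr h1, LinearMap.mem_ker.mpr h2⟩))
          have hv₀Ai : v₀ ∈ Ai := Finset.mem_filter.mpr ⟨hv₀A, hv₀Xi⟩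
          -- d-signs
          have hdu' : d u' ≠ c₀ u' := by
            have hmem : u' ∈ SepSet (loc A u' w') c₀ d := by
              rw [← hsep]
              exact Finset.mem_inter.mpr ⟨hu'I, hu'loc⟩
            have := (Finset.mem_filter.mp hmem).2
            exact fun h => this h.symm
          have hdw' : d w' = c₀ w' := by
            have hmem : w' ∉ SepSet (loc A u' w') c₀ d := by
              rw [← hsep]
              intro h
              exact hw'I (Finset.mem_inter.mp h).1
            by_contra h
            exact hmem (Finset.mem_filter.mpr ⟨hw'loc, fun h' => h h'.symm⟩)
          have hdv₀ : d v₀ = c v₀ := by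
            by_cases hvI : v₀ ∈ I
            · have hmem : v₀ ∈ SepSet (loc A u' w') c₀ d := by
                rw [← hsep]
                exact Finset.mem_inter.mpr ⟨hvI, hv₀loc⟩
              have h2 := (Finset.mem_filter.mp hmem).2
              rw [hcdef]
              simp only [hvI, if_true]
              cases hc : c₀ v₀ <;> cases hd : d v₀ <;> simp_all
            · have hmem : v₀ ∉ SepSet (loc A u' w') c₀ d := by
                rw [← hsep]
                intro h
                exact hvI (Finset.mem_inter.mp h).1
              rw [hcdef]
              simp only [hvI, if_false]
              by_contra h
              exact hmem (Finset.mem_filter.mpr ⟨hv₀loc, fun h' => h h'.symm⟩)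
          -- numeric signs
          have hyu' := hysign u' hu'A hu'nAi
          have hyw' := hysign w' hw'A hw'nAi
          have hyu'ne : u' ⬝ᵥ y ≠ 0 := BiclosedAux.sign_ne_zero hyu'
          have hyw'ne : w' ⬝ᵥ y ≠ 0 := BiclosedAux.sign_ne_zero hyw'
          have hzu' := hz u' hu'loc
          have hzw' := hz w' hw'loc
          have hzv₀ := hz v₀ hv₀loc
          have hx'v₀ := hx' v₀ hv₀Ai
          rw [hdw'] at hzw'
          rw [hdv₀] at hzv₀
          have huz : (u' ⬝ᵥ z) * (u' ⬝ᵥ y) < 0 :=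
            BiclosedAux.sign_mul_neg hdu' hzu' hyu'
          have hwz : 0 < (w' ⬝ᵥ z) * (w' ⬝ᵥ y) :=
            BiclosedAux.sign_mul_pos hzw' hyw'
          have hvzx : 0 < (v₀ ⬝ᵥ z) * (v₀ ⬝ᵥ x') :=
            BiclosedAux.sign_mul_pos hzv₀ hx'v₀
          have hlocd : ∀ x, u' ⬝ᵥ x = 0 → w' ⬝ᵥ x = 0 → v₀ ⬝ᵥ x = 0 := by
            intro x h1 h2
            exact LinearMap.mem_ker.mp
              (hv₀Y (Submodule.mem_inf.mpr ⟨LinearMap.mem_ker.mpr h1, LinearMap.mem_ker.mpr h2⟩))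
          exact BiclosedAux.key_ineq (hA.1 v₀ hv₀A) hlocd (hyzero v₀ hv₀Ai)
            hyu'ne hyw'ne huz hwz hvzx
        obtain ⟨s, hsJ, hsK⟩ := BiclosedAux.exists_sep J K T hcomp
        refine ⟨x' + s • y, ?_⟩
        intro v hv
        by_cases hvAi : v ∈ Ai
        · have h1 : v ⬝ᵥ (x' + s • y) = v ⬝ᵥ x' := by
            simp [dotProduct_add, dotProduct_smul, hyzero v hvAi]
          rw [h1]
          exact hx' v hvAi
        · have hvF : v ∈ Fi := Finset.mem_sdiff.mpr ⟨hv, hvAi⟩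
          have hvA : v ∈ A := (Finset.mem_filter.mp hv).1
          have hyv := hysign v hvA hvAi
          have hval : v ⬝ᵥ (x' + s • y) = v ⬝ᵥ x' + s * (v ⬝ᵥ y) := by
            simp [dotProduct_add, dotProduct_smul, smul_eq_mul]
          by_cases hvI : v ∈ I
          · have hvJ : v ∈ J := Finset.mem_inter.mpr ⟨hvI, hvF⟩
            have hsv : s < -(v ⬝ᵥ x') / (v ⬝ᵥ y) := hsJ v hvJ
            have hcv : c v = !c₀ v := by rw [hcdef]; simp [hvI]
            rw [hval, hcv]
            cases hc : c₀ v
            · simp only [hc, Bool.false_eq_true, if_false] at hyv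
              simp only [Bool.not_false, if_true]
              exact (BiclosedAux.cross_lt hsv).2 hyv
            · simp only [hc, if_true] at hyv
              simp only [Bool.not_true, Bool.false_eq_true, if_false]
              exact (BiclosedAux.cross_lt hsv).1 hyv
          · have hvK : v ∈ K := by
              rw [hKdef, Finset.mem_sdiff]
              refine ⟨hvF, fun h => hvI (Finset.mem_inter.mp h).1⟩
            have hsv : -(v ⬝ᵥ x') / (v ⬝ᵥ y) < s := hsK v hvK
            have hcv : c v = c₀ v := by rw [hcdef]; simp [hvI]
            rw [hval, hcv]
            cases hc : c₀ v
            · simp only [hc, Bool.false_eq_true, if_false] at hyv ⊢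
              exact (BiclosedAux.cross_gt hsv).2 hyv
            · simp only [hc, if_true] at hyv ⊢
              exact (BiclosedAux.cross_gt hsv).1 hyv
    -- conclude from i = rankA A
    obtain ⟨x, hx⟩ := key (rankA A) le_rfl
    have hAr : (A.filter fun v =>
        X ⟨rankA A, Nat.lt_succ_of_le le_rfl⟩ ≤ LinearMap.ker (hypl v)) = A := by
      rw [Finset.filter_eq_self]
      intro v hv
      obtain ⟨S, hSsub, hSeq⟩ := (hmod ⟨rankA A, Nat.lt_succ_of_le le_rfl⟩).1
      have hZle : (A.inf fun v => LinearMap.ker (hypl v)) ≤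
          X ⟨rankA A, Nat.lt_succ_of_le le_rfl⟩ := by
        rw [hSeq]
        exact Finset.inf_mono hSsub
      have hfr := BiclosedAux.finrank_inf_ker_ge A
      have hXr : Module.finrank ℝ (X ⟨rankA A, Nat.lt_succ_of_le le_rfl⟩) = n - rankA A := by
        simpa using hXrank ⟨rankA A, Nat.lt_succ_of_le le_rfl⟩
      have heq : (A.inf fun v => LinearMap.ker (hypl v)) =
          X ⟨rankA A, Nat.lt_succ_of_le le_rfl⟩ := by
        refine Submodule.eq_of_le_of_finrank_le hZle ?_
        rw [hXr]
        have hrdef : rankA A = Module.finrank ℝ (Submodule.span ℝ (A : Set (V n))) := rfl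
        omega
      rw [← heq]
      exact Finset.inf_le hv
    rw [hAr] at hx
    refine ⟨c, ⟨x, hx⟩, ?_⟩
    ext v
    rw [SepSet, Finset.mem_filter]
    constructor
    · intro hvI
      refine ⟨hIA hvI, ?_⟩
      rw [hcdef]
      simp [hvI]
    · rintro ⟨hvA, hne⟩
      by_contra hvI
      rw [hcdef] at hne
      simp [hvI] at hne
  · -- reverse direction
    rintro ⟨c, ⟨xc, hxc⟩, rfl⟩
    intro u w hcod
    refine ⟨c, ⟨xc, fun v hv => hxc v ?_⟩, ?_⟩
    · rw [loc, Finset.mem_filter] at hv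
      exact hv.1
    · ext v
      rw [SepSet, SepSet, loc, Finset.mem_inter]
      simp only [Finset.mem_filter]
      tauto
end

section
/- Let A be a supersolvable real central hyperplane arrangement with fundamental chamber c₀ incident to a modular flag. Then for any two chambers c, d, the separation set S(c₀, c ∨ d) of the join in the chamber lattice equals the 2-closure of S(c₀,c) ∪ S(c₀,d). -/
open Matrix
open scoped Classical

/-! ### Auxiliary development -/

namespace SJ

variable {n : ℕ}

/-- Signed normal vector: positive side = side of `c₀`. -/
noncomputable def sgn (c₀ : V n → Bool) (v : V n) : V n := if c₀ v then v else -v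

/-- Signed value of `x` against hyperplane `v`; positive iff on the `c₀` side. -/
noncomputable def val (c₀ : V n → Bool) (v x : V n) : ℝ := sgn c₀ v ⬝ᵥ x

lemma val_eq (c₀ : V n → Bool) (v x : V n) :
    val c₀ v x = if c₀ v then v ⬝ᵥ x else -(v ⬝ᵥ x) := by
  unfold val sgn
  by_cases h : c₀ v <;> simp [h, neg_dotProduct]

lemma val_zero_iff (c₀ : V n → Bool) (v x : V n) : val c₀ v x = 0 ↔ v ⬝ᵥ x = 0 := by
  rw [val_eq]; by_cases h : c₀ v <;> simp [h]

lemma val_neg (c₀ : V n → Bool) (v x : V n) : val c₀ v (-x) = -val c₀ v x := by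
  unfold val; simp [dotProduct_neg]

lemma val_add (c₀ : V n → Bool) (v x y : V n) :
    val c₀ v (x + y) = val c₀ v x + val c₀ v y := by
  unfold val; simp [dotProduct_add]

lemma val_smul (c₀ : V n → Bool) (v : V n) (t : ℝ) (x : V n) :
    val c₀ v (t • x) = t * val c₀ v x := by
  unfold val; simp [dotProduct_smul, smul_eq_mul]

lemma continuous_val (c₀ : V n → Bool) (v : V n) : Continuous (fun x => val c₀ v x) := by
  unfold val dotProduct
  exact continuous_finset_sum _ fun i _ => continuous_const.mul (continuous_apply i)

lemma continuous_dot (v : V n) : Continuous (fun x => v ⬝ᵥ x) := by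
  unfold dotProduct
  exact continuous_finset_sum _ fun i _ => continuous_const.mul (continuous_apply i)

/-- Value dictionary for realизers. -/
lemma realizes_val {A : Finset (V n)} {c₀ e : V n → Bool} {x : V n}
    (hx : Realizes A e x) {v : V n} (hv : v ∈ A) :
    (0 < val c₀ v x ↔ e v = c₀ v) ∧ val c₀ v x ≠ 0 := by
  have h := hx v hv
  rw [val_eq]
  cases hc : c₀ v <;> cases he : e v <;> simp [hc, he] at h ⊢ <;> try constructor
  all_goals first
    | linarith
    | (intro hh; linarith)
    | (constructor <;> intro hh <;> linarith)

lemma realizes_val_neg {A : Finset (V n)} {c₀ e : V n → Bool} {x : V n}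
    (hx : Realizes A e x) {v : V n} (hv : v ∈ A) :
    val c₀ v x < 0 ↔ e v ≠ c₀ v := by
  obtain ⟨h1, h2⟩ := realizes_val (c₀ := c₀) hx hv
  constructor
  · intro h hcon; rw [← h1] at hcon; linarith
  · intro h
    rcases lt_trichotomy (val c₀ v x) 0 with h' | h' | h'
    · exact h'
    · exact absurd h' h2
    · exact absurd (h1.1 h') h

lemma mem_sepSet_iff {A : Finset (V n)} {c₀ e : V n → Bool} {x : V n}
    (hx : Realizes A e x) {v : V n} (hv : v ∈ A) :
    v ∈ SepSet A c₀ e ↔ val c₀ v x < 0 := by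
  rw [SepSet, Finset.mem_filter]
  rw [realizes_val_neg (c₀ := c₀) hx hv]
  simp [hv]
  tauto

/-- Realizers restrict to subsets. -/
lemma Realizes.mono {A B : Finset (V n)} {e : V n → Bool} {x : V n}
    (h : Realizes A e x) (hBA : B ⊆ A) : Realizes B e x := fun v hv => h v (hBA hv)

lemma sepSet_inter {A L : Finset (V n)} (hLA : L ⊆ A) (c₀ e : V n → Bool) :
    SepSet A c₀ e ∩ L = SepSet L c₀ e := by
  ext v; simp only [SepSet, Finset.mem_inter, Finset.mem_filter]
  constructor
  · rintro ⟨⟨_, h⟩, hL⟩; exact ⟨hL, h⟩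
  · rintro ⟨hL, h⟩; exact ⟨⟨hLA hL, h⟩, hL⟩

/-- The sign vector of a generic point. -/
noncomputable def mkSig (x : V n) : V n → Bool := fun v => decide (0 < v ⬝ᵥ x)

lemma mkSig_realizes {A : Finset (V n)} {x : V n} (h : ∀ v ∈ A, v ⬝ᵥ x ≠ 0) :
    Realizes A (mkSig x) x := by
  intro v hv
  by_cases hp : 0 < v ⬝ᵥ x
  · simp [mkSig, hp]
  · have : v ⬝ᵥ x < 0 := lt_of_le_of_ne (not_lt.1 hp) (h v hv)
    simp [mkSig, hp, this]

lemma mkSig_chamber {A : Finset (V n)} {x : V n} (h : ∀ v ∈ A, v ⬝ᵥ x ≠ 0) :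
    IsChamber A (mkSig x) := ⟨x, mkSig_realizes h⟩

/-- The negated sign vector realizes at `-x`. -/
lemma neg_realizes {A : Finset (V n)} {e : V n → Bool} {x : V n} (h : Realizes A e x) :
    Realizes A (fun v => !(e v)) (-x) := by
  intro v hv
  have := h v hv
  cases he : e v <;> simp [he, dotProduct_neg] at this ⊢ <;> linarith

/-- Avoidance: a nonempty open set contains a point avoiding finitely many hyperplanes. -/
lemma exists_avoid (F : Finset (V n)) (hF : ∀ q ∈ F, q ≠ 0)
    (U : Set (V n)) (hU : IsOpen U) (x : V n) (hx : x ∈ U) :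
    ∃ y ∈ U, ∀ q ∈ F, q ⬝ᵥ y ≠ 0 := by
  classical
  induction F using Finset.induction generalizing U x with
  | empty => exact ⟨x, hx, by simp⟩
  | @insert q F hq ih =>
    have hqne : q ≠ 0 := hF q (Finset.mem_insert_self q F)
    -- find a point of U where q doesn't vanish
    have hstep : ∃ x' ∈ U, q ⬝ᵥ x' ≠ 0 := by
      by_cases h0 : q ⬝ᵥ x ≠ 0
      · exact ⟨x, hx, h0⟩
      · push_neg at h0
        obtain ⟨δ, hδpos, hball⟩ := Metric.isOpen_iff.1 hU x hx
        have hqq : 0 < q ⬝ᵥ q := by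
          rcases (dotProduct_self_eq_zero (v := q)).not.2 hqne with h
          have : 0 ≤ q ⬝ᵥ q := Finset.sum_nonneg fun i _ => mul_self_nonneg _
          exact lt_of_le_of_ne this (Ne.symm h)
        set ε : ℝ := δ / (2 * (‖q‖ + 1)) with hε
        have hqnorm : 0 < ‖q‖ + 1 := by positivity
        have hεpos : 0 < ε := by positivity
        refine ⟨x + ε • q, ?_, ?_⟩
        · apply hball
          rw [Metric.mem_ball, dist_eq_norm]
          have h0' : x + ε • q - x = ε • q := by abel
          rw [h0', norm_smul, Real.norm_eq_abs, abs_of_pos hεpos]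
          calc ε * ‖q‖ ≤ ε * (‖q‖ + 1) := by nlinarith [norm_nonneg q]
            _ = δ / 2 := by rw [hε, div_mul_eq_mul_div, div_eq_div_iff (by positivity) (by norm_num)]; ring
            _ < δ := by linarith
        · rw [dotProduct_add, h0, dotProduct_smul, zero_add, smul_eq_mul]
          positivity
    obtain ⟨x', hx'U, hx'q⟩ := hstep
    have hUopen : IsOpen (U ∩ {y | q ⬝ᵥ y ≠ 0}) :=
      hU.inter ((isOpen_ne_fun (continuous_dot q) continuous_const))
    obtain ⟨y, hyU, hyF⟩ := ih (fun r hr => hF r (Finset.mem_insert_of_mem hr))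
      (U ∩ {y | q ⬝ᵥ y ≠ 0}) hUopen x' ⟨hx'U, hx'q⟩
    exact ⟨y, hyU.1, fun r hr => by
      rcases Finset.mem_insert.1 hr with rfl | hr
      · exact hyU.2
      · exact hyF r hr⟩

/-- The set of realizers of a sign vector is open. -/
lemma isOpen_realizes (A : Finset (V n)) (e : V n → Bool) : IsOpen {x | Realizes A e x} := by
  classical
  have : {x | Realizes A e x} = ⋂ v ∈ A, {x | if e v then 0 < v ⬝ᵥ x else v ⬝ᵥ x < 0} := by
    ext x; simp [Realizes, Set.mem_iInter]
  rw [this]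
  apply isOpen_biInter_finset
  intro v _
  by_cases he : e v
  · simp only [he, if_true]
    exact isOpen_lt continuous_const (continuous_dot v)
  · simp only [he, if_false]
    exact isOpen_lt (continuous_dot v) continuous_const

/-- Distinct hyperplanes of an arrangement have independent normals. -/
lemma pair_indep {A : Finset (V n)} (hA : IsArrangement A) {u w : V n}
    (hu : u ∈ A) (hw : w ∈ A) (huw : u ≠ w) : LinearIndependent ℝ ![u, w] := by
  rw [LinearIndependent.pair_iff]
  intro s t hst
  by_contra hcon
  have hune : u ≠ 0 := hA.1 u hu
  have hwne : w ≠ 0 := hA.1 w hw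
  by_cases ht : t = 0
  · subst ht
    simp only [smul_zero, zero_smul, add_zero] at hst
    rcases smul_eq_zero.1 hst with h | h
    · exact hcon ⟨h, rfl⟩
    · exact hune h
  · have hw_eq : w = (-s/t) • u := by
      have h1 : t • w = (-s) • u := by
        rw [neg_smul]
        exact eq_neg_of_add_eq_zero_right hst
      calc w = (t⁻¹ * t) • w := by rw [inv_mul_cancel₀ ht, one_smul]
        _ = t⁻¹ • (t • w) := by rw [mul_smul]
        _ = t⁻¹ • ((-s) • u) := by rw [h1]
        _ = (-s/t) • u := by rw [smul_smul]; congr 1; field_simp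
    set k : ℝ := -s/t with hk
    have hkne : k ≠ 0 := by
      intro h0; rw [h0, zero_smul] at hw_eq; exact hwne hw_eq
    have : SameHyp u w := by
      intro x
      rw [hw_eq, smul_dotProduct, smul_eq_mul]
      constructor
      · intro h; rw [h, mul_zero]
      · intro h; exact (mul_eq_zero.1 h).resolve_left hkne
    exact huw (hA.2 u hu w hw this)


/-! ### Orthogonality toolkit -/

@[simp] lemma hypl_apply (v x : V n) : hypl v x = v ⬝ᵥ x := rfl

lemma finrank_V (n : ℕ) : Module.finrank ℝ (V n) = n := by
  simpa using Module.finrank_pi ℝ (η := Fin n)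

noncomputable def eqv (n : ℕ) : EuclideanSpace ℝ (Fin n) ≃ₗ[ℝ] V n :=
  WithLp.linearEquiv 2 ℝ (Fin n → ℝ)

@[simp] lemma eqv_apply (x : EuclideanSpace ℝ (Fin n)) (i : Fin n) : eqv n x i = x i := rfl

noncomputable def perpSpan (S : Finset (V n)) : Submodule ℝ (V n) :=
  S.inf fun v => LinearMap.ker (hypl v)

lemma mem_perpSpan {S : Finset (V n)} {x : V n} :
    x ∈ perpSpan S ↔ ∀ v ∈ S, v ⬝ᵥ x = 0 := by
  simp [perpSpan, Submodule.mem_finsetInf]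

lemma inner_eq_dot (u y : EuclideanSpace ℝ (Fin n)) :
    (inner ℝ u y : ℝ) = (eqv n u) ⬝ᵥ (eqv n y) := by
  simp only [PiLp.inner_apply, RCLike.inner_apply, dotProduct, eqv_apply, conj_trivial]; exact Finset.sum_congr rfl fun i _ => mul_comm _ _

noncomputable def sp (S : Finset (V n)) : Submodule ℝ (EuclideanSpace ℝ (Fin n)) :=
  Submodule.span ℝ ((eqv n).symm '' (S : Set (V n)))

lemma mem_perpSpan_iff_orth {S : Finset (V n)} {x : V n} :
    x ∈ perpSpan S ↔ (eqv n).symm x ∈ (sp S)ᗮ := by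
  rw [mem_perpSpan]
  constructor
  · intro h
    rw [Submodule.mem_orthogonal]
    intro u hu
    refine Submodule.span_induction (p := fun u _ => (inner ℝ u ((eqv n).symm x) : ℝ) = 0)
      ?_ ?_ ?_ ?_ hu
    · rintro v ⟨v', hv', rfl⟩
      rw [inner_eq_dot]
      simpa using h v' hv'
    · simp
    · intro a b _ _ ha hb; rw [inner_add_left, ha, hb, add_zero]
    · intro r a _ ha; rw [real_inner_smul_left, ha, mul_zero]
  · intro h v hv
    have hmem : (eqv n).symm v ∈ sp S := Submodule.subset_span ⟨v, hv, rfl⟩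
    have h0 := ((Submodule.mem_orthogonal _ _).1 h) _ hmem
    rw [inner_eq_dot] at h0
    simpa using h0

lemma perpSpan_eq_map (S : Finset (V n)) :
    perpSpan S = Submodule.map (eqv n : EuclideanSpace ℝ (Fin n) →ₗ[ℝ] V n) ((sp S)ᗮ) := by
  ext x
  rw [mem_perpSpan_iff_orth]
  constructor
  · intro h; exact ⟨(eqv n).symm x, h, by simp⟩
  · rintro ⟨y, hy, rfl⟩; rwa [LinearEquiv.coe_coe, LinearEquiv.symm_apply_apply]

lemma finrank_perpSpan_add (S : Finset (V n)) :
    Module.finrank ℝ (perpSpan S) + Module.finrank ℝ (Submodule.span ℝ (S : Set (V n))) = n := by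
  have h1 : Module.finrank ℝ (perpSpan S) = Module.finrank ℝ ((sp S)ᗮ) := by
    rw [perpSpan_eq_map]
    exact LinearEquiv.finrank_map_eq (eqv n) _
  have h2 : Module.finrank ℝ (sp S) = Module.finrank ℝ (Submodule.span ℝ (S : Set (V n))) := by
    have : sp S = Submodule.map ((eqv n).symm : V n →ₗ[ℝ] EuclideanSpace ℝ (Fin n))
        (Submodule.span ℝ (S : Set (V n))) := by
      rw [sp, Submodule.map_span]; rfl
    rw [this]
    exact LinearEquiv.finrank_map_eq _ _
  have h3 := Submodule.finrank_add_finrank_orthogonal (K := sp S)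
  rw [finrank_euclideanSpace_fin] at h3
  omega

lemma mem_span_of_perp_le {S : Finset (V n)} {v : V n}
    (h : perpSpan S ≤ LinearMap.ker (hypl v)) :
    v ∈ Submodule.span ℝ (S : Set (V n)) := by
  have hv' : (eqv n).symm v ∈ ((sp S)ᗮ)ᗮ := by
    rw [Submodule.mem_orthogonal _ _]
    intro u hu
    have hmem : eqv n u ∈ perpSpan S := by
      rw [mem_perpSpan_iff_orth]; simpa using hu
    have h0 : v ⬝ᵥ (eqv n u) = 0 := by simpa using h hmem
    rw [inner_eq_dot]
    simp only [LinearEquiv.apply_symm_apply]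
    rwa [dotProduct_comm]
  rw [Submodule.orthogonal_orthogonal] at hv'
  rw [sp] at hv'
  rw [← LinearEquiv.coe_coe, ← Submodule.map_span] at hv'
  obtain ⟨y, hy, hy2⟩ := hv'
  have : y = v := by
    have := congrArg (eqv n) hy2
    simpa using this
  rwa [← this]

lemma perpSpan_antitone {S T : Finset (V n)} (h : S ⊆ T) : perpSpan T ≤ perpSpan S := by
  intro x hx
  rw [mem_perpSpan] at hx ⊢
  exact fun v hv => hx v (h hv)

lemma perpSpan_le_ker {S : Finset (V n)} {v : V n} (hv : v ∈ S) :
    perpSpan S ≤ LinearMap.ker (hypl v) := by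
  intro x hx
  rw [mem_perpSpan] at hx
  simpa using hx v hv

lemma perpSpan_pair (u w : V n) :
    perpSpan {u, w} = LinearMap.ker (hypl u) ⊓ LinearMap.ker (hypl w) := by
  ext x; rw [mem_perpSpan]; simp

lemma mem_loc_iff {A : Finset (V n)} {u w v : V n} :
    v ∈ loc A u w ↔ v ∈ A ∧ perpSpan {u, w} ≤ LinearMap.ker (hypl v) := by
  rw [loc, Finset.mem_filter]
  constructor
  · rintro ⟨hA, h⟩
    refine ⟨hA, fun x hx => ?_⟩
    rw [mem_perpSpan] at hx
    simpa using h x (by simpa using hx u (by simp)) (by simpa using hx w (by simp))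
  · rintro ⟨hA, h⟩
    refine ⟨hA, fun x hu hw => ?_⟩
    have : x ∈ perpSpan {u, w} := by rw [mem_perpSpan]; intro v' hv'; rcases Finset.mem_insert.1 hv' with rfl | hv'
                                     · exact hu
                                     · rw [Finset.mem_singleton.1 hv']; exact hw
    simpa using h this

lemma loc_mem_span {A : Finset (V n)} {u w v : V n} (h : v ∈ loc A u w) :
    v ∈ Submodule.span ℝ ({u, w} : Set (V n)) := by
  have h2 := (mem_loc_iff.1 h).2
  have := mem_span_of_perp_le (S := ({u, w} : Finset (V n))) h2
  simpa using this

lemma finrank_span_pair {u w : V n} (h : LinearIndependent ℝ ![u, w]) :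
    Module.finrank ℝ (Submodule.span ℝ ({u, w} : Set (V n))) = 2 := by
  have hr : Set.range ![u, w] = {u, w} := by
    ext z; simp [Matrix.range_cons, Matrix.range_empty]
    tauto
  have := finrank_span_eq_card h
  rw [hr] at this
  simpa using this

lemma finrank_perpSpan_pair {u w : V n} (h : LinearIndependent ℝ ![u, w]) :
    Module.finrank ℝ (perpSpan ({u, w} : Finset (V n))) + 2 = n := by
  have := finrank_perpSpan_add ({u, w} : Finset (V n))
  have h2 : ((({u, w} : Finset (V n)) : Set (V n))) = ({u, w} : Set (V n)) := by simp
  rw [h2, finrank_span_pair h] at this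
  exact this

lemma finrank_ker_hypl {v : V n} (hv : v ≠ 0) :
    Module.finrank ℝ (LinearMap.ker (hypl v)) + 1 = n := by
  have h1 : perpSpan ({v} : Finset (V n)) = LinearMap.ker (hypl v) := by
    ext x; rw [mem_perpSpan]; simp
  have := finrank_perpSpan_add ({v} : Finset (V n))
  rw [h1] at this
  have h2 : ((({v} : Finset (V n)) : Set (V n))) = ({v} : Set (V n)) := by simp
  rw [h2, finrank_span_singleton hv] at this
  exact this

/-! ### Intersection lattice helpers -/

lemma interLattice_mem {A : Finset (V n)} {Z : Submodule ℝ (V n)} :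
    Z ∈ InterLattice A ↔ ∃ S : Finset (V n), S ⊆ A ∧ Z = perpSpan S := Iff.rfl

lemma interLattice_closed {A : Finset (V n)} {Z : Submodule ℝ (V n)}
    (hZ : Z ∈ InterLattice A) :
    Z = perpSpan (A.filter fun v => Z ≤ LinearMap.ker (hypl v)) := by
  obtain ⟨S, hSA, rfl⟩ := hZ
  apply le_antisymm
  · intro x hx
    rw [show x ∈ perpSpan (Finset.filter (fun v => (S.inf fun v => LinearMap.ker (hypl v)) ≤ LinearMap.ker (hypl v)) A) ↔ _ from mem_perpSpan]
    intro v hv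
    rw [Finset.mem_filter] at hv
    simpa using hv.2 hx
  · apply perpSpan_antitone
    intro v hv
    rw [Finset.mem_filter]
    exact ⟨hSA hv, perpSpan_le_ker hv⟩


/-! ### Rank-2 sweep machinery -/

noncomputable def eps (c₀ : V n → Bool) (v : V n) : ℝ := if c₀ v then 1 else -1

lemma sgn_eq_smul (c₀ : V n → Bool) (v : V n) : sgn c₀ v = eps c₀ v • v := by
  unfold sgn eps; by_cases h : c₀ v <;> simp [h]

lemma eps_ne_zero (c₀ : V n → Bool) (v : V n) : eps c₀ v ≠ 0 := by
  unfold eps; by_cases h : c₀ v <;> simp [h]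

lemma eps_sq (c₀ : V n → Bool) (v : V n) : eps c₀ v * eps c₀ v = 1 := by
  unfold eps; by_cases h : c₀ v <;> simp [h]

lemma val_sub (c₀ : V n → Bool) (v x y : V n) :
    val c₀ v (x - y) = val c₀ v x - val c₀ v y := by
  rw [sub_eq_add_neg, val_add, val_neg, sub_eq_add_neg]

/-- A generic sweep across a rank-≤2 subarrangement `L`. -/
structure Sweep (c₀ : V n → Bool) (L : Finset (V n)) where
  x₀ : V n
  y : V n
  pos : ∀ v ∈ L, 0 < val c₀ v x₀
  neg : ∀ v ∈ L, val c₀ v y < 0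
  inj : ∀ a ∈ L, ∀ b ∈ L, a ≠ b →
    val c₀ a x₀ / (val c₀ a x₀ - val c₀ a y) ≠ val c₀ b x₀ / (val c₀ b x₀ - val c₀ b y)

variable {c₀ : V n → Bool} {L : Finset (V n)}

noncomputable def Sweep.t (S : Sweep c₀ L) (v : V n) : ℝ :=
  val c₀ v S.x₀ / (val c₀ v S.x₀ - val c₀ v S.y)

lemma Sweep.t_inj (S : Sweep c₀ L) {a b : V n} (ha : a ∈ L) (hb : b ∈ L) (hab : a ≠ b) :
    S.t a ≠ S.t b := S.inj a ha b hb hab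

lemma Sweep.D_pos (S : Sweep c₀ L) {v : V n} (hv : v ∈ L) :
    0 < val c₀ v S.x₀ - val c₀ v S.y := by
  have h1 := S.pos v hv
  have h2 := S.neg v hv
  linarith

noncomputable def Sweep.p (S : Sweep c₀ L) (v : V n) : V n := S.x₀ + S.t v • (S.y - S.x₀)

lemma Sweep.val_p (S : Sweep c₀ L) {b v : V n} (hb : b ∈ L) (hv : v ∈ L) :
    val c₀ b (S.p v) = (val c₀ b S.x₀ - val c₀ b S.y) * (S.t b - S.t v) := by
  have hDb := S.D_pos hb
  have hDv := S.D_pos hv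
  unfold Sweep.p
  rw [val_add, val_smul, val_sub]
  unfold Sweep.t
  field_simp
  ring

lemma Sweep.val_p_pos (S : Sweep c₀ L) {b v : V n} (hb : b ∈ L) (hv : v ∈ L) :
    (0 < val c₀ b (S.p v)) ↔ S.t v < S.t b := by
  rw [S.val_p hb hv]
  have hD := S.D_pos hb
  constructor
  · intro h; nlinarith
  · intro h; nlinarith

lemma Sweep.val_p_neg (S : Sweep c₀ L) {b v : V n} (hb : b ∈ L) (hv : v ∈ L) :
    (val c₀ b (S.p v) < 0) ↔ S.t b < S.t v := by
  rw [S.val_p hb hv]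
  have hD := S.D_pos hb
  constructor
  · intro h; nlinarith
  · intro h; nlinarith

/-- `L` lies in a plane: any element is in the span of any two independent ones. -/
def Plane (L : Finset (V n)) : Prop :=
  ∀ a ∈ L, ∀ b ∈ L, ∀ c ∈ L, a ≠ c → b ∈ Submodule.span ℝ ({a, c} : Set (V n))

/-- The fundamental betweenness lemma: a hyperplane crossed between two others
is a positive combination of them. -/
lemma Sweep.between (S : Sweep c₀ L) (hpl : Plane L) {a b c : V n} (ha : a ∈ L) (hb : b ∈ L) (hc : c ∈ L)
    (h1 : S.t a < S.t b) (h2 : S.t b < S.t c) :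
    ∃ α γ : ℝ, 0 < α ∧ 0 < γ ∧ ∀ x, val c₀ b x = α * val c₀ a x + γ * val c₀ c x := by
  have hac : a ≠ c := by
    intro h; subst h; exact absurd rfl (ne_of_lt (h1.trans h2))
  obtain ⟨s, r, hsr⟩ := Submodule.mem_span_pair.1 (hpl a ha b hb c hc hac)
  -- b = s • a + r • c ; pass to signed versions
  set α : ℝ := eps c₀ b * s * eps c₀ a with hα
  set γ : ℝ := eps c₀ b * r * eps c₀ c with hγ
  have hval : ∀ x, val c₀ b x = α * val c₀ a x + γ * val c₀ c x := by
    intro x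
    have hb2 : eps c₀ b • b = eps c₀ b • (s • a + r • c) := by rw [hsr]
    unfold val
    rw [sgn_eq_smul c₀ b, hb2, sgn_eq_smul c₀ a, sgn_eq_smul c₀ c]
    rw [smul_add, smul_smul, smul_smul]
    rw [add_dotProduct, smul_dotProduct, smul_dotProduct,
      smul_dotProduct, smul_dotProduct]
    simp only [smul_eq_mul, hα, hγ]
    have ha2 := eps_sq c₀ a
    have hc2 := eps_sq c₀ c
    linear_combination (-(eps c₀ b * s * (a ⬝ᵥ x))) * ha2 + (-(eps c₀ b * r * (c ⬝ᵥ x))) * hc2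
  refine ⟨α, γ, ?_, ?_, hval⟩
  · -- evaluate at p c : val b < 0, val a < 0, val c = 0
    have hbc : val c₀ b (S.p c) < 0 := (S.val_p_neg hb hc).2 h2
    have hacv : val c₀ a (S.p c) < 0 := (S.val_p_neg ha hc).2 (h1.trans h2)
    have hcc : val c₀ c (S.p c) = 0 := by
      rw [S.val_p hc hc]; ring
    have := hval (S.p c)
    rw [hcc, mul_zero, add_zero] at this
    nlinarith
  · -- evaluate at p a : val b > 0, val c > 0, val a = 0
    have hba : 0 < val c₀ b (S.p a) := (S.val_p_pos hb ha).2 h1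
    have hca : 0 < val c₀ c (S.p a) := (S.val_p_pos hc ha).2 (h1.trans h2)
    have haa : val c₀ a (S.p a) = 0 := by
      rw [S.val_p ha ha]; ring
    have := hval (S.p a)
    rw [haa, mul_zero, zero_add] at this
    nlinarith

lemma Sweep.neg3 (S : Sweep c₀ L) (hpl : Plane L) {a b c : V n} (ha : a ∈ L) (hb : b ∈ L) (hc : c ∈ L)
    (h1 : S.t a < S.t b) (h2 : S.t b < S.t c) {z : V n}
    (hza : val c₀ a z < 0) (hzc : val c₀ c z < 0) : val c₀ b z < 0 := by
  obtain ⟨α, γ, hα, hγ, hval⟩ := S.between hpl ha hb hc h1 h2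
  rw [hval z]
  nlinarith

lemma Sweep.pos3 (S : Sweep c₀ L) (hpl : Plane L) {a b c : V n} (ha : a ∈ L) (hb : b ∈ L) (hc : c ∈ L)
    (h1 : S.t a < S.t b) (h2 : S.t b < S.t c) {z : V n}
    (hza : 0 < val c₀ a z) (hzc : 0 < val c₀ c z) : 0 < val c₀ b z := by
  obtain ⟨α, γ, hα, hγ, hval⟩ := S.between hpl ha hb hc h1 h2
  rw [hval z]
  nlinarith

def Sweep.DownClosed (S : Sweep c₀ L) (T : Finset (V n)) : Prop :=
  ∀ a ∈ L, ∀ b ∈ L, S.t a < S.t b → b ∈ T → a ∈ T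

def Sweep.UpClosed (S : Sweep c₀ L) (T : Finset (V n)) : Prop :=
  ∀ a ∈ L, ∀ b ∈ L, S.t a < S.t b → a ∈ T → b ∈ T

/-- The negative part of a generic point is down- or up-closed. -/
lemma Sweep.end_of_generic (S : Sweep c₀ L) (hpl : Plane L) {z : V n} (hz : ∀ v ∈ L, val c₀ v z ≠ 0) :
    S.DownClosed (L.filter fun v => val c₀ v z < 0) ∨
      S.UpClosed (L.filter fun v => val c₀ v z < 0) := by
  by_contra hcon
  push_neg at hcon
  obtain ⟨hnd, hnu⟩ := hcon
  unfold Sweep.DownClosed at hnd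
  unfold Sweep.UpClosed at hnu
  push_neg at hnd hnu
  obtain ⟨a, ha, b, hb, hab, hbT, haT⟩ := hnd
  obtain ⟨c, hc, d, hd, hcd, hcT, hdT⟩ := hnu
  rw [Finset.mem_filter] at hbT hcT
  have hbz : val c₀ b z < 0 := hbT.2
  have hcz : val c₀ c z < 0 := hcT.2
  have haz : 0 < val c₀ a z := by
    rcases lt_trichotomy (val c₀ a z) 0 with h | h | h
    · exact absurd (Finset.mem_filter.2 ⟨ha, h⟩) haT
    · exact absurd h (hz a ha)
    · exact h
  have hdz : 0 < val c₀ d z := by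
    rcases lt_trichotomy (val c₀ d z) 0 with h | h | h
    · exact absurd (Finset.mem_filter.2 ⟨hd, h⟩) hdT
    · exact absurd h (hz d hd)
    · exact h
  have hbd : b ≠ d := by
    intro h; subst h; linarith
  rcases lt_or_gt_of_ne (S.t_inj hb hd hbd) with h | h
  · -- t a < t b < t d, a,d positive ⇒ b positive, contradiction
    have := S.pos3 hpl ha hb hd hab h haz hdz
    linarith
  · -- t c < t d < t b, c,b negative ⇒ d negative
    have := S.neg3 hpl hc hd hb hcd h hcz hbz
    linarith

/-- Separation sets of chambers of `L` are end-intervals. -/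
lemma Sweep.sep_end (S : Sweep c₀ L) (hpl : Plane L) {e : V n → Bool} (he : IsChamber L e) :
    S.DownClosed (SepSet L c₀ e) ∨ S.UpClosed (SepSet L c₀ e) := by
  obtain ⟨z, hz⟩ := he
  have hsep : SepSet L c₀ e = L.filter fun v => val c₀ v z < 0 := by
    ext v
    constructor
    · intro hv
      have hvL : v ∈ L := Finset.filter_subset _ _ hv
      exact Finset.mem_filter.2 ⟨hvL, (mem_sepSet_iff hz hvL).1 hv⟩
    · intro hv
      rw [Finset.mem_filter] at hv
      exact (mem_sepSet_iff hz hv.1).2 hv.2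
  rw [hsep]
  exact S.end_of_generic hpl fun v hv => (realizes_val (c₀ := c₀) hz hv).2

/-- Down-closed subsets of `L` are nested. -/
lemma Sweep.down_nested (S : Sweep c₀ L) {T₁ T₂ : Finset (V n)}
    (h1 : T₁ ⊆ L) (h2 : T₂ ⊆ L) (hd1 : S.DownClosed T₁) (hd2 : S.DownClosed T₂) :
    T₁ ⊆ T₂ ∨ T₂ ⊆ T₁ := by
  by_contra hcon
  push_neg at hcon
  obtain ⟨x, hx1, hx2⟩ := Finset.not_subset.1 hcon.1
  obtain ⟨y, hy2, hy1⟩ := Finset.not_subset.1 hcon.2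
  have hxy : x ≠ y := by rintro rfl; exact hx2 hy2
  rcases lt_or_gt_of_ne (S.t_inj (h1 hx1) (h2 hy2) hxy) with h | h
  · exact hx2 (hd2 x (h1 hx1) y (h2 hy2) h hy2)
  · exact hy1 (hd1 y (h2 hy2) x (h1 hx1) h hx1)

lemma Sweep.up_nested (S : Sweep c₀ L) {T₁ T₂ : Finset (V n)}
    (h1 : T₁ ⊆ L) (h2 : T₂ ⊆ L) (hu1 : S.UpClosed T₁) (hu2 : S.UpClosed T₂) :
    T₁ ⊆ T₂ ∨ T₂ ⊆ T₁ := by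
  by_contra hcon
  push_neg at hcon
  obtain ⟨x, hx1, hx2⟩ := Finset.not_subset.1 hcon.1
  obtain ⟨y, hy2, hy1⟩ := Finset.not_subset.1 hcon.2
  have hxy : x ≠ y := by rintro rfl; exact hx2 hy2
  rcases lt_or_gt_of_ne (S.t_inj (h1 hx1) (h2 hy2) hxy) with h | h
  · exact hy1 (hu1 x (h1 hx1) y (h2 hy2) h hx1)
  · exact hx2 (hu2 y (h2 hy2) x (h1 hx1) h hy2)

/-- Existence of a sweep with endpoint in a given open set of `L`-negative points. -/
lemma exists_sweep_in {A : Finset (V n)} (hA : IsArrangement A) {c₀ : V n → Bool} {x₀ : V n}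
    (hx₀ : Realizes A c₀ x₀) {L : Finset (V n)} (hL : L ⊆ A)
    (U : Set (V n)) (hU : IsOpen U) (y₀ : V n) (hy₀ : y₀ ∈ U)
    (hUneg : ∀ y ∈ U, ∀ v ∈ L, val c₀ v y < 0) :
    ∃ S : Sweep c₀ L, S.x₀ = x₀ ∧ S.y ∈ U := by
  classical
  have hpos : ∀ v ∈ L, 0 < val c₀ v x₀ := fun v hv =>
    (realizes_val (c₀ := c₀) hx₀ (hL hv)).1.2 rfl
  set F : Finset (V n) := ((L ×ˢ L).filter fun p => p.1 ≠ p.2).image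
    (fun p => val c₀ p.1 x₀ • sgn c₀ p.2 - val c₀ p.2 x₀ • sgn c₀ p.1) with hF
  have hFne : ∀ q ∈ F, q ≠ 0 := by
    intro q hq
    rw [hF, Finset.mem_image] at hq
    obtain ⟨⟨a, b⟩, hab, rfl⟩ := hq
    rw [Finset.mem_filter, Finset.mem_product] at hab
    obtain ⟨⟨haL, hbL⟩, hne⟩ := hab
    intro h0
    have hind := pair_indep hA (hL haL) (hL hbL) hne
    rw [LinearIndependent.pair_iff] at hind
    have : (-(val c₀ b x₀ * eps c₀ a)) • a + (val c₀ a x₀ * eps c₀ b) • b = 0 := by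
      rw [sgn_eq_smul, sgn_eq_smul] at h0
      rw [smul_smul, smul_smul] at h0
      rw [sub_eq_zero] at h0
      rw [neg_smul, neg_add_eq_zero]
      exact h0.symm
    have := (hind _ _ this).2
    have hA0 : val c₀ a x₀ ≠ 0 := ne_of_gt (hpos a haL)
    exact (mul_ne_zero hA0 (eps_ne_zero c₀ b)) this
  obtain ⟨y, hyU, hyF⟩ := exists_avoid F hFne U hU y₀ hy₀
  have hyneg : ∀ v ∈ L, val c₀ v y < 0 := hUneg y hyU
  refine ⟨⟨x₀, y, hpos, hyneg, ?_⟩, rfl, hyU⟩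
  intro a ha b hb hab heq
  have hq : val c₀ a x₀ • sgn c₀ b - val c₀ b x₀ • sgn c₀ a ∈ F := by
    rw [hF, Finset.mem_image]
    exact ⟨(a, b), Finset.mem_filter.2 ⟨Finset.mem_product.2 ⟨ha, hb⟩, hab⟩, rfl⟩
  have hDa : 0 < val c₀ a x₀ - val c₀ a y := by have := hpos a ha; have := hyneg a ha; linarith
  have hDb : 0 < val c₀ b x₀ - val c₀ b y := by have := hpos b hb; have := hyneg b hb; linarith
  rw [div_eq_div_iff (ne_of_gt hDa) (ne_of_gt hDb)] at heq
  have hdot : (val c₀ a x₀ • sgn c₀ b - val c₀ b x₀ • sgn c₀ a) ⬝ᵥ y = 0 := by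
    rw [sub_dotProduct, smul_dotProduct, smul_dotProduct]
    show val c₀ a x₀ • val c₀ b y - val c₀ b x₀ • val c₀ a y = 0
    simp only [smul_eq_mul]
    nlinarith
  exact hyF _ hq hdot


/-! ### More sweep lemmas -/

noncomputable def Sweep.q (S : Sweep c₀ L) (s : ℝ) : V n := S.x₀ + s • (S.y - S.x₀)

lemma Sweep.val_q (S : Sweep c₀ L) (v : V n) (s : ℝ) :
    val c₀ v (S.q s) = val c₀ v S.x₀ + s * (val c₀ v S.y - val c₀ v S.x₀) := by
  unfold Sweep.q
  rw [val_add, val_smul, val_sub]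

lemma Sweep.val_q_sign (S : Sweep c₀ L) {v : V n} (hv : v ∈ L) (s : ℝ) :
    val c₀ v (S.q s) = (val c₀ v S.x₀ - val c₀ v S.y) * (S.t v - s) := by
  rw [S.val_q]
  have hD := S.D_pos hv
  unfold Sweep.t
  field_simp
  ring

lemma Sweep.val_q_pos (S : Sweep c₀ L) {v : V n} (hv : v ∈ L) {s : ℝ} (h : s < S.t v) :
    0 < val c₀ v (S.q s) := by
  rw [S.val_q_sign hv]
  have hD := S.D_pos hv
  nlinarith

lemma Sweep.val_q_neg (S : Sweep c₀ L) {v : V n} (hv : v ∈ L) {s : ℝ} (h : S.t v < s) :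
    val c₀ v (S.q s) < 0 := by
  rw [S.val_q_sign hv]
  have hD := S.D_pos hv
  nlinarith

lemma Sweep.t_mem (S : Sweep c₀ L) {v : V n} (hv : v ∈ L) : 0 < S.t v ∧ S.t v < 1 := by
  have h1 := S.pos v hv
  have h2 := S.neg v hv
  have hD := S.D_pos hv
  unfold Sweep.t
  constructor
  · exact div_pos h1 hD
  · rw [div_lt_one hD]; linarith

/-- The sign vector of a point, relative to base `c₀`. -/
lemma mkSig_eq_iff {c₀ : V n → Bool} {p v : V n} (h : val c₀ v p ≠ 0) :
    (mkSig p v = c₀ v) ↔ 0 < val c₀ v p := by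
  rw [val_eq] at h ⊢
  unfold mkSig
  by_cases hc : c₀ v
  · rw [if_pos hc] at h ⊢
    rw [hc]
    simp
  · rw [if_neg hc] at h ⊢
    rw [Bool.not_eq_true] at hc
    rw [hc, decide_eq_false_iff_not, not_lt, neg_pos]
    have hne : v ⬝ᵥ p ≠ 0 := fun h0 => h (by rw [h0, neg_zero])
    exact ⟨fun h1 => lt_of_le_of_ne h1 hne, le_of_lt⟩

/-- loc is a subset of A, and contains its generators. -/
lemma loc_subset {A : Finset (V n)} (u w : V n) : loc A u w ⊆ A :=
  Finset.filter_subset _ _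

lemma mem_loc_left {A : Finset (V n)} {u w : V n} (hu : u ∈ A) : u ∈ loc A u w := by
  rw [loc, Finset.mem_filter]
  exact ⟨hu, fun x h _ => h⟩

lemma mem_loc_right {A : Finset (V n)} {u w : V n} (hw : w ∈ A) : w ∈ loc A u w := by
  rw [loc, Finset.mem_filter]
  exact ⟨hw, fun x _ h => h⟩

/-- A rank-2 localization lies in a plane. -/
lemma loc_plane {A : Finset (V n)} (hA : IsArrangement A) {u w : V n}
    (hcd : Codim2 A u w) : Plane (loc A u w) := by
  obtain ⟨hu, hw, hind⟩ := hcd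
  intro a ha b hb c hc hac
  have hW : ∀ v ∈ loc A u w, v ∈ Submodule.span ℝ ({u, w} : Set (V n)) :=
    fun v hv => loc_mem_span hv
  have haA : a ∈ A := loc_subset u w ha
  have hcA : c ∈ A := loc_subset u w hc
  have hacind : LinearIndependent ℝ ![a, c] := pair_indep hA haA hcA hac
  have hle : Submodule.span ℝ ({a, c} : Set (V n)) ≤ Submodule.span ℝ ({u, w} : Set (V n)) := by
    rw [Submodule.span_le]
    intro z hz
    simp only [Set.mem_insert_iff, Set.mem_singleton_iff] at hz
    rcases hz with h | h
    · rw [h]; exact hW a ha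
    · rw [h]; exact hW c hc
  have heq : Submodule.span ℝ ({a, c} : Set (V n)) = Submodule.span ℝ ({u, w} : Set (V n)) := by
    apply Submodule.eq_of_le_of_finrank_le hle
    rw [finrank_span_pair hacind, finrank_span_pair hind]
  rw [heq]
  exact hW b hb

/-- Build a sweep across a localization. -/
lemma loc_sweep {A : Finset (V n)} (hA : IsArrangement A) {c₀ : V n → Bool} {x₀ : V n}
    (hx₀ : Realizes A c₀ x₀) (u w : V n) :
    ∃ S : Sweep c₀ (loc A u w), S.x₀ = x₀ := by
  set L := loc A u w with hL
  have hLsub : L ⊆ A := loc_subset u w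
  have hUopen : IsOpen {y : V n | ∀ v ∈ L, val c₀ v y < 0} := by
    have : {y : V n | ∀ v ∈ L, val c₀ v y < 0} = ⋂ v ∈ L, {y | val c₀ v y < 0} := by
      ext y; simp
    rw [this]
    exact isOpen_biInter_finset fun v _ => isOpen_lt (continuous_val c₀ v) continuous_const
  have hx₀mem : -x₀ ∈ {y : V n | ∀ v ∈ L, val c₀ v y < 0} := by
    intro v hv
    rw [val_neg]
    have := (realizes_val (c₀ := c₀) hx₀ (hLsub hv)).1.2 rfl
    linarith
  obtain ⟨S, hS1, _⟩ := exists_sweep_in hA hx₀ hLsub _ hUopen (-x₀) hx₀mem (fun y hy => hy)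
  exact ⟨S, hS1⟩

/-- 2-closedness means: in every localization, `J` is an interval for the sweep order. -/
lemma twoClosed_interval {A : Finset (V n)} (hA : IsArrangement A) {c₀ : V n → Bool}
    {J : Finset (V n)} (hJ : Is2Closed A c₀ J) {u w : V n} (hcd : Codim2 A u w)
    (S : Sweep c₀ (loc A u w)) {a b c : V n}
    (ha : a ∈ loc A u w) (hb : b ∈ loc A u w) (hc : c ∈ loc A u w)
    (h1 : S.t a < S.t b) (h2 : S.t b < S.t c) (haJ : a ∈ J) (hcJ : c ∈ J) : b ∈ J := by
  by_contra hbJ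
  have hbin : b ∈ loc A u w \ (J ∩ loc A u w) := by
    rw [Finset.mem_sdiff]
    exact ⟨hb, fun hmem => hbJ (Finset.mem_inter.1 hmem).1⟩
  obtain ⟨e, he, hbe, hesub⟩ := hJ u w hcd b hbin
  rcases S.sep_end (loc_plane hA hcd) he with hdown | hup
  · have haSep : a ∈ SepSet (loc A u w) c₀ e := hdown a ha b hb h1 hbe
    have := hesub haSep
    rw [Finset.mem_sdiff] at this
    exact this.2 (Finset.mem_inter.2 ⟨haJ, ha⟩)
  · have hcSep : c ∈ SepSet (loc A u w) c₀ e := hup b hb c hc h2 hbe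
    have := hesub hcSep
    rw [Finset.mem_sdiff] at this
    exact this.2 (Finset.mem_inter.2 ⟨hcJ, hc⟩)

/-- A hyperplane whose complement in `L` is a realizable separation set sits at an end. -/
lemma sep_erase_end {c₀ : V n → Bool} {L : Finset (V n)} (S : Sweep c₀ L) (hpl : Plane L)
    {v' : V n} (hv' : v' ∈ L) {z : V n}
    (hz : ∀ v ∈ L, v ≠ v' → val c₀ v z < 0) (hz' : 0 < val c₀ v' z) :
    (∀ b ∈ L, b ≠ v' → S.t v' < S.t b) ∨ (∀ b ∈ L, b ≠ v' → S.t b < S.t v') := by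
  have hne : ∀ v ∈ L, val c₀ v z ≠ 0 := by
    intro v hv
    by_cases h : v = v'
    · subst h; exact ne_of_gt hz'
    · exact ne_of_lt (hz v hv h)
  have hfil : L.filter (fun v => val c₀ v z < 0) = L.erase v' := by
    ext v
    rw [Finset.mem_filter, Finset.mem_erase]
    constructor
    · rintro ⟨hvL, hvz⟩
      refine ⟨?_, hvL⟩
      rintro rfl
      linarith
    · rintro ⟨hvne, hvL⟩
      exact ⟨hvL, hz v hvL hvne⟩
  rcases S.end_of_generic hpl hne with hdown | hup
  · rw [hfil] at hdown
    right
    intro b hb hbne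
    rcases lt_or_gt_of_ne (S.t_inj hb hv' hbne) with h | h
    · exact h
    · exact absurd (Finset.mem_erase.1 (hdown v' hv' b hb h
        (Finset.mem_erase.2 ⟨hbne, hb⟩))).1 (by simp)
  · rw [hfil] at hup
    left
    intro b hb hbne
    rcases lt_or_gt_of_ne (S.t_inj hb hv' hbne) with h | h
    · exact absurd (Finset.mem_erase.1 (hup b hb v' hv' h
        (Finset.mem_erase.2 ⟨hbne, hb⟩))).1 (by simp)
    · exact h

/-- Choose a positive δ making finitely many linear perturbations small. -/
lemma exists_small (L' : Finset (V n)) (f g : V n → ℝ) (hf : ∀ b ∈ L', 0 < f b) :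
    ∃ δ : ℝ, 0 < δ ∧ ∀ b ∈ L', δ * g b < f b := by
  have hev : ∀ᶠ δ in nhdsWithin (0:ℝ) (Set.Ioi 0), ∀ b ∈ L', δ * g b < f b := by
    rw [Filter.eventually_all_finset]
    intro b hb
    have htend : Filter.Tendsto (fun δ : ℝ => δ * g b) (nhdsWithin (0:ℝ) (Set.Ioi 0)) (nhds 0) := by
      have : Filter.Tendsto (fun δ : ℝ => δ * g b) (nhds 0) (nhds (0 * g b)) :=
        (continuous_id.mul continuous_const).tendsto 0
      rw [zero_mul] at this
      exact this.mono_left nhdsWithin_le_nhds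
    exact htend.eventually_lt_const (hf b hb)
  have hpos : ∀ᶠ δ in nhdsWithin (0:ℝ) (Set.Ioi 0), 0 < δ :=
    eventually_mem_nhdsWithin.mono fun δ h => h
  obtain ⟨δ, h1, h2⟩ := (hpos.and hev).exists
  exact ⟨δ, h1, h2⟩

/-- Choose an M making finitely many linear combinations positive. -/
lemma exists_large (L' : Finset (V n)) (f g : V n → ℝ) (hg : ∀ b ∈ L', 0 < g b) :
    ∃ M : ℝ, 0 < M ∧ ∀ b ∈ L', 0 < f b + M * g b := by
  have hev : ∀ᶠ M in Filter.atTop, ∀ b ∈ L', 0 < f b + M * g b := by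
    rw [Filter.eventually_all_finset]
    intro b hb
    have htend : Filter.Tendsto (fun M : ℝ => f b + M * g b) Filter.atTop Filter.atTop := by
      apply Filter.tendsto_atTop_add_const_left
      exact Filter.Tendsto.atTop_mul_const (hg b hb) Filter.tendsto_id
    exact htend.eventually_gt_atTop 0
  obtain ⟨M, h1, h2⟩ := ((Filter.eventually_gt_atTop (0:ℝ)).and hev).exists
  exact ⟨M, h1, h2⟩


/-- Between two chambers one can take a single elementary step from the first. -/
lemma cross_one {A : Finset (V n)} (hA : IsArrangement A) {μ1 μ2 : V n → Bool}
    (h1 : IsChamber A μ1) (h2 : IsChamber A μ2)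
    (hD2 : 2 ≤ (A.filter fun v => μ1 v ≠ μ2 v).card) :
    ∃ e β, IsChamber A e ∧ β ∈ A.filter (fun v => μ1 v ≠ μ2 v) ∧
      (∀ v ∈ A, v ≠ β → e v = μ1 v) ∧ e β ≠ μ1 β := by
  classical
  obtain ⟨z1, hz1⟩ := h1
  obtain ⟨z2, hz2⟩ := h2
  set D := A.filter (fun v => μ1 v ≠ μ2 v) with hDdef
  have hDsub : D ⊆ A := Finset.filter_subset _ _
  have hUneg : ∀ y ∈ {y | Realizes A μ2 y}, ∀ v ∈ D, val μ1 v y < 0 := by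
    intro y hy v hv
    rw [hDdef, Finset.mem_filter] at hv
    exact (realizes_val_neg (c₀ := μ1) hy hv.1).2 (Ne.symm hv.2)
  obtain ⟨S, hSx, hSy⟩ := exists_sweep_in hA (c₀ := μ1) hz1 hDsub
    {y | Realizes A μ2 y} (isOpen_realizes A μ2) z2 hz2 hUneg
  have hzS : Realizes A μ2 S.y := hSy
  have hDne : D.Nonempty := Finset.card_pos.1 (by omega)
  obtain ⟨β, hβD, hβmin⟩ := Finset.exists_min_image D S.t hDne
  have hDe : (D.erase β).Nonempty := by
    rw [← Finset.card_pos, Finset.card_erase_of_mem hβD]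
    omega
  obtain ⟨β₂, hβ₂D, hβ₂min⟩ := Finset.exists_min_image (D.erase β) S.t hDe
  have hβ₂ne : β₂ ≠ β := (Finset.mem_erase.1 hβ₂D).1
  have hβ₂Din : β₂ ∈ D := (Finset.mem_erase.1 hβ₂D).2
  have htlt : S.t β < S.t β₂ :=
    lt_of_le_of_ne (hβmin β₂ hβ₂Din) (S.t_inj hβD hβ₂Din hβ₂ne.symm)
  set s := (S.t β + S.t β₂) / 2 with hs
  have hs1 : S.t β < s := by rw [hs]; linarith
  have hs2 : s < S.t β₂ := by rw [hs]; linarith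
  have hs0 : 0 < s := by
    have := (S.t_mem hβD).1
    linarith
  have hslt1 : s < 1 := by
    have := (S.t_mem hβ₂Din).2
    linarith
  set p := S.q s with hp
  -- compute signs of p
  have hsign : ∀ v ∈ A, (v = β → val μ1 v p < 0) ∧ (v ≠ β → 0 < val μ1 v p) := by
    intro v hv
    constructor
    · rintro rfl
      exact S.val_q_neg hβD hs1
    · intro hvβ
      by_cases hvD : v ∈ D
      · have hvmem : v ∈ D.erase β := Finset.mem_erase.2 ⟨hvβ, hvD⟩
        have : s < S.t v := lt_of_lt_of_le hs2 (hβ₂min v hvmem)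
        exact S.val_q_pos hvD this
      · have hx0 : 0 < val μ1 v S.x₀ := by
          rw [hSx]
          exact (realizes_val (c₀ := μ1) hz1 hv).1.2 rfl
        have hy0 : 0 < val μ1 v S.y := by
          apply (realizes_val (c₀ := μ1) hzS hv).1.2
          rw [hDdef, Finset.mem_filter] at hvD
          push_neg at hvD
          exact (hvD hv).symm
        rw [hp, S.val_q]
        nlinarith
  have hne0 : ∀ v ∈ A, v ⬝ᵥ p ≠ 0 := by
    intro v hv h0
    have h0' : val μ1 v p = 0 := (val_zero_iff μ1 v p).2 h0
    by_cases hvβ : v = β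
    · exact absurd h0' (ne_of_lt ((hsign v hv).1 hvβ))
    · exact absurd h0' (ne_of_gt ((hsign v hv).2 hvβ))
  refine ⟨mkSig p, β, mkSig_chamber hne0, hβD, ?_, ?_⟩
  · intro v hv hvβ
    have hpos := (hsign v hv).2 hvβ
    exact (mkSig_eq_iff (ne_of_gt hpos)).2 hpos
  · have hneg := (hsign β (hDsub hβD)).1 rfl
    intro hcon
    exact absurd ((mkSig_eq_iff (ne_of_lt hneg)).1 hcon) (by linarith)


/-! ### Modularity and flags -/

lemma rankA_le (A : Finset (V n)) : rankA A ≤ n := by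
  have := Submodule.finrank_le (Submodule.span ℝ (A : Set (V n)))
  simpa [rankA] using this

lemma rankA_zero_empty {A : Finset (V n)} (hA : IsArrangement A) (h : rankA A = 0) :
    A = ∅ := by
  by_contra hne
  obtain ⟨v, hv⟩ := Finset.nonempty_of_ne_empty hne
  have hvmem : v ∈ Submodule.span ℝ (A : Set (V n)) := Submodule.subset_span hv
  have hbot : Submodule.span ℝ (A : Set (V n)) = ⊥ :=
    Submodule.finrank_eq_zero.1 h
  rw [hbot, Submodule.mem_bot] at hvmem
  exact hA.1 v hv hvmem

lemma finrank_perpSpan_A (A : Finset (V n)) :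
    Module.finrank ℝ (perpSpan A) + rankA A = n := by
  have := finrank_perpSpan_add A
  rwa [show Module.finrank ℝ (Submodule.span ℝ (A : Set (V n))) = rankA A from rfl] at this

/-- The unique hyperplane of the modular subarrangement through a codim-2 flat. -/
lemma modular_loc_elem {A : Finset (V n)} (hA : IsArrangement A) {Xm : Submodule ℝ (V n)}
    (hmod : IsModular A Xm) {r : ℕ} (hr1 : 1 ≤ r) (hrank : rankA A = r)
    (hXdim : Module.finrank ℝ Xm = n - (r - 1))
    {u w : V n} (hu : u ∈ A) (hw : w ∈ A) (huw : u ≠ w)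
    (huA' : ¬ Xm ≤ LinearMap.ker (hypl u)) (hwA' : ¬ Xm ≤ LinearMap.ker (hypl w)) :
    ∃ v', v' ∈ loc A u w ∧ Xm ≤ LinearMap.ker (hypl v') := by
  classical
  have hind : LinearIndependent ℝ ![u, w] := pair_indep hA hu hw huw
  have hY : perpSpan ({u, w} : Finset (V n)) ∈ InterLattice A := by
    refine ⟨{u, w}, ?_, rfl⟩
    intro z hz
    rcases Finset.mem_insert.1 hz with rfl | hz
    · exact hu
    · rw [Finset.mem_singleton.1 hz]; exact hw
  set Y := perpSpan ({u, w} : Finset (V n)) with hYdef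
  have hZmem : Xm ⊔ Y ∈ InterLattice A := hmod.2 Y hY
  have hfY : Module.finrank ℝ Y + 2 = n := finrank_perpSpan_pair hind
  -- center bounds
  have hcen_le : perpSpan A ≤ Xm ⊓ Y := by
    apply le_inf
    · obtain ⟨S, hSA, hXS⟩ := hmod.1
      rw [hXS]
      exact perpSpan_antitone hSA
    · apply perpSpan_antitone
      intro z hz
      rcases Finset.mem_insert.1 hz with rfl | hz
      · exact hu
      · rw [Finset.mem_singleton.1 hz]; exact hw
  have hfcen : Module.finrank ℝ (perpSpan A) + r = n := by
    have := finrank_perpSpan_A A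
    rwa [hrank] at this
  have hinfle : Xm ⊓ Y ≤ Xm ⊓ LinearMap.ker (hypl u) :=
    inf_le_inf_left Xm (perpSpan_le_ker (by simp))
  have hlt : Xm ⊓ LinearMap.ker (hypl u) < Xm := by
    apply lt_of_le_of_ne inf_le_left
    intro heq
    apply huA'
    rw [← heq]
    exact inf_le_right
  have hflt : Module.finrank ℝ (Xm ⊓ LinearMap.ker (hypl u) : Submodule ℝ (V n))
      < Module.finrank ℝ Xm := Submodule.finrank_lt_finrank_of_lt hlt
  have hmono1 : Module.finrank ℝ (perpSpan A) ≤
      Module.finrank ℝ (Xm ⊓ Y : Submodule ℝ (V n)) := Submodule.finrank_mono hcen_le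
  have hmono2 : Module.finrank ℝ (Xm ⊓ Y : Submodule ℝ (V n)) ≤
      Module.finrank ℝ (Xm ⊓ LinearMap.ker (hypl u) : Submodule ℝ (V n)) :=
    Submodule.finrank_mono hinfle
  have hsupinf := Submodule.finrank_sup_add_finrank_inf_eq Xm Y
  have hrn : r ≤ n := by rw [← hrank]; exact rankA_le A
  have hfZ : Module.finrank ℝ (Xm ⊔ Y : Submodule ℝ (V n)) = n - 1 := by omega
  obtain ⟨S, hSA, hZS⟩ := hZmem
  have hSne : S.Nonempty := by
    rw [Finset.nonempty_iff_ne_empty]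
    rintro rfl
    have hZtop : Xm ⊔ Y = ⊤ := by rw [hZS, Finset.inf_empty]
    have : Module.finrank ℝ (Xm ⊔ Y : Submodule ℝ (V n)) = n := by
      rw [hZtop]
      rw [finrank_top, finrank_V]
    omega
  obtain ⟨v₀, hv₀⟩ := hSne
  have hv₀A : v₀ ∈ A := hSA hv₀
  have hZle : Xm ⊔ Y ≤ LinearMap.ker (hypl v₀) := by
    rw [hZS]
    exact perpSpan_le_ker hv₀
  have hker : Module.finrank ℝ (LinearMap.ker (hypl v₀) : Submodule ℝ (V n)) + 1 = n :=
    finrank_ker_hypl (hA.1 v₀ hv₀A)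
  have hZeq : Xm ⊔ Y = LinearMap.ker (hypl v₀) := by
    apply Submodule.eq_of_le_of_finrank_le hZle
    omega
  refine ⟨v₀, ?_, ?_⟩
  · rw [mem_loc_iff]
    refine ⟨hv₀A, ?_⟩
    calc perpSpan ({u, w} : Finset (V n)) = Y := rfl
      _ ≤ Xm ⊔ Y := le_sup_right
      _ = LinearMap.ker (hypl v₀) := hZeq
  · calc Xm ≤ Xm ⊔ Y := le_sup_left
      _ = LinearMap.ker (hypl v₀) := hZeq

/-- If two distinct elements of a localization lie in `A'`, so does everything. -/
lemma loc_two_in_Aprime {A : Finset (V n)} (hA : IsArrangement A)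
    {Xm : Submodule ℝ (V n)} {u w : V n} (hcd : Codim2 A u w)
    {v1 v2 : V n} (h1 : v1 ∈ loc A u w) (h2 : v2 ∈ loc A u w) (hne : v1 ≠ v2)
    (hx1 : Xm ≤ LinearMap.ker (hypl v1)) (hx2 : Xm ≤ LinearMap.ker (hypl v2))
    {b : V n} (hb : b ∈ loc A u w) : Xm ≤ LinearMap.ker (hypl b) := by
  have hmem := loc_plane hA hcd v1 h1 b hb v2 h2 hne
  obtain ⟨s, t, hst⟩ := Submodule.mem_span_pair.1 hmem
  intro x hx
  have e1 : v1 ⬝ᵥ x = 0 := by simpa using hx1 hx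
  have e2 : v2 ⬝ᵥ x = 0 := by simpa using hx2 hx
  simp only [LinearMap.mem_ker, hypl_apply]
  rw [← hst, add_dotProduct, smul_dotProduct, smul_dotProduct, e1, e2]
  simp

/-- Membership of flats over `A'`. -/
lemma restrict_interLattice {A : Finset (V n)} {Xm : Submodule ℝ (V n)}
    {Z : Submodule ℝ (V n)} (hZ : Z ∈ InterLattice A) (hle : Xm ≤ Z) :
    Z ∈ InterLattice (A.filter fun v => Xm ≤ LinearMap.ker (hypl v)) := by
  refine ⟨A.filter (fun v => Z ≤ LinearMap.ker (hypl v)), ?_, interLattice_closed hZ⟩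
  intro v hv
  rw [Finset.mem_filter] at hv ⊢
  exact ⟨hv.1, hle.trans hv.2⟩


/-! ### Local combinatorial lemmas -/

lemma dot_self_pos {v : V n} (hv : v ≠ 0) : 0 < v ⬝ᵥ v := by
  have h1 : 0 ≤ v ⬝ᵥ v := Finset.sum_nonneg fun i _ => mul_self_nonneg _
  have h2 : v ⬝ᵥ v ≠ 0 := fun h => hv ((dotProduct_self_eq_zero).1 h)
  exact lt_of_le_of_ne h1 (Ne.symm h2)

lemma sgn_dot_self (c₀ : V n → Bool) (v : V n) : sgn c₀ v ⬝ᵥ sgn c₀ v = v ⬝ᵥ v := by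
  unfold sgn
  by_cases h : c₀ v <;> simp [h, neg_dotProduct, dotProduct_neg]

lemma bool_eq_of_iff {a b c : Bool} (h : (a = c) ↔ (b = c)) : a = b := by
  cases a <;> cases b <;> cases c <;> simp_all

/-- Two comparable end-intervals sharing the end element: comparability. -/
lemma local_compare {c₀ : V n → Bool} {L : Finset (V n)} (S : Sweep c₀ L)
    {v' b1 b2 : V n} (hv' : v' ∈ L) (hb1 : b1 ∈ L) (hb2 : b2 ∈ L)
    (hb1v : b1 ≠ v') (hb2v : b2 ≠ v') (hb12 : b1 ≠ b2)
    (hend : (∀ a ∈ L, a ≠ v' → S.t v' < S.t a) ∨ (∀ a ∈ L, a ≠ v' → S.t a < S.t v'))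
    {T1 T2 : Finset (V n)} (h1sub : T1 ⊆ L) (h2sub : T2 ⊆ L)
    (h1end : S.DownClosed T1 ∨ S.UpClosed T1) (h2end : S.DownClosed T2 ∨ S.UpClosed T2)
    (hvmem : v' ∈ T1 ↔ v' ∈ T2)
    (m1 : b1 ∈ T1) (m2 : b1 ∉ T2) (m3 : b2 ∈ T2) (m4 : b2 ∉ T1) : False := by
  have hnest : T1 ⊆ T2 ∨ T2 ⊆ T1 → False := by
    rintro (h | h)
    · exact m2 (h m1)
    · exact m4 (h m3)
  rcases hend with hmin | hmax
  · -- v' is minimal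
    by_cases hv1 : v' ∈ T1
    · have hv2 : v' ∈ T2 := hvmem.1 hv1
      have hd1 : S.DownClosed T1 := by
        rcases h1end with h | h
        · exact h
        · exact absurd (h v' hv' b2 hb2 (hmin b2 hb2 hb2v) hv1) m4
      have hd2 : S.DownClosed T2 := by
        rcases h2end with h | h
        · exact h
        · exact absurd (h v' hv' b1 hb1 (hmin b1 hb1 hb1v) hv2) m2
      exact hnest (S.down_nested h1sub h2sub hd1 hd2)
    · have hv2 : v' ∉ T2 := fun h => hv1 (hvmem.2 h)
      have hu1 : S.UpClosed T1 := by
        rcases h1end with h | h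
        · exact absurd (h v' hv' b1 hb1 (hmin b1 hb1 hb1v) m1) hv1
        · exact h
      have hu2 : S.UpClosed T2 := by
        rcases h2end with h | h
        · exact absurd (h v' hv' b2 hb2 (hmin b2 hb2 hb2v) m3) hv2
        · exact h
      exact hnest (S.up_nested h1sub h2sub hu1 hu2)
  · -- v' is maximal
    by_cases hv1 : v' ∈ T1
    · have hv2 : v' ∈ T2 := hvmem.1 hv1
      have hu1 : S.UpClosed T1 := by
        rcases h1end with h | h
        · exact absurd (h b2 hb2 v' hv' (hmax b2 hb2 hb2v) hv1) m4
        · exact h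
      have hu2 : S.UpClosed T2 := by
        rcases h2end with h | h
        · exact absurd (h b1 hb1 v' hv' (hmax b1 hb1 hb1v) hv2) m2
        · exact h
      exact hnest (S.up_nested h1sub h2sub hu1 hu2)
    · have hv2 : v' ∉ T2 := fun h => hv1 (hvmem.2 h)
      have hd1 : S.DownClosed T1 := by
        rcases h1end with h | h
        · exact h
        · exact absurd (h b1 hb1 v' hv' (hmax b1 hb1 hb1v) m1) hv1
      have hd2 : S.DownClosed T2 := by
        rcases h2end with h | h
        · exact h
        · exact absurd (h b2 hb2 v' hv' (hmax b2 hb2 hb2v) m3) hv2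
      exact hnest (S.down_nested h1sub h2sub hd1 hd2)

/-- The local forcing lemma. -/
lemma local_force {c₀ : V n → Bool} {L : Finset (V n)} (S : Sweep c₀ L)
    (P : V n → Prop)
    {v' h b : V n} (hv' : v' ∈ L) (hh : h ∈ L) (hb : b ∈ L)
    (hhv : h ≠ v') (hbv : b ≠ v') (hhb : h ≠ b)
    (hend : (∀ a ∈ L, a ≠ v' → S.t v' < S.t a) ∨ (∀ a ∈ L, a ≠ v' → S.t a < S.t v'))
    {TR : Finset (V n)} (hTRsub : TR ⊆ L)
    (hRend : S.DownClosed TR ∨ S.UpClosed TR)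
    (hR1 : h ∈ TR) (hR2 : b ∉ TR)
    (hJint : ∀ a₁ ∈ L, ∀ a₂ ∈ L, ∀ a₃ ∈ L,
      S.t a₁ < S.t a₂ → S.t a₂ < S.t a₃ → P a₁ → P a₃ → P a₂)
    (hbJ : P b)
    (hcase : (v' ∈ TR ∧ P v') ∨ (v' ∉ TR ∧ ∃ Tg : Finset (V n), Tg ⊆ L ∧
      (S.DownClosed Tg ∨ S.UpClosed Tg) ∧ v' ∉ Tg ∧ b ∈ Tg ∧ ∀ x ∈ Tg, P x)) :
    P h := by
  rcases hend with hmin | hmax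
  · rcases hcase with ⟨hvT, hvP⟩ | ⟨hvT, Tg, hTgsub, hTgend, hvTg, hbTg, hTgP⟩
    · have hd : S.DownClosed TR := by
        rcases hRend with hR | hR
        · exact hR
        · exact absurd (hR v' hv' b hb (hmin b hb hbv) hvT) hR2
      have hthb : S.t h < S.t b := by
        rcases lt_or_gt_of_ne (S.t_inj hh hb hhb) with hlt | hgt
        · exact hlt
        · exact absurd (hd b hb h hh hgt hR1) hR2
      exact hJint v' hv' h hh b hb (hmin h hh hhv) hthb hvP hbJ
    · have hu : S.UpClosed TR := by
        rcases hRend with hR | hR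
        · exact absurd (hR v' hv' h hh (hmin h hh hhv) hR1) hvT
        · exact hR
      have htbh : S.t b < S.t h := by
        rcases lt_or_gt_of_ne (S.t_inj hh hb hhb) with hlt | hgt
        · exact absurd (hu h hh b hb hlt hR1) hR2
        · exact hgt
      have hug : S.UpClosed Tg := by
        rcases hTgend with hG | hG
        · exact absurd (hG v' hv' b hb (hmin b hb hbv) hbTg) hvTg
        · exact hG
      exact hTgP h (hug b hb h hh htbh hbTg)
  · rcases hcase with ⟨hvT, hvP⟩ | ⟨hvT, Tg, hTgsub, hTgend, hvTg, hbTg, hTgP⟩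
    · have hu : S.UpClosed TR := by
        rcases hRend with hR | hR
        · exact absurd (hR b hb v' hv' (hmax b hb hbv) hvT) hR2
        · exact hR
      have htbh : S.t b < S.t h := by
        rcases lt_or_gt_of_ne (S.t_inj hh hb hhb) with hlt | hgt
        · exact absurd (hu h hh b hb hlt hR1) hR2
        · exact hgt
      exact hJint b hb h hh v' hv' htbh (hmax h hh hhv) hbJ hvP
    · have hd : S.DownClosed TR := by
        rcases hRend with hR | hR
        · exact hR
        · exact absurd (hR h hh v' hv' (hmax h hh hhv) hR1) hvT
      have hthb : S.t h < S.t b := by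
        rcases lt_or_gt_of_ne (S.t_inj hh hb hhb) with hlt | hgt
        · exact hlt
        · exact absurd (hd b hb h hh hgt hR1) hR2
      have hdg : S.DownClosed Tg := by
        rcases hTgend with hG | hG
        · exact hG
        · exact absurd (hG b hb v' hv' (hmax b hb hbv) hbTg) hvTg
      exact hTgP h (hdg h hh b hb hthb hbTg)


/-! ### Glue lemmas -/

/-- Localizations inside `A'` agree with localizations of `A`. -/
lemma loc_sub_Aprime {A : Finset (V n)} {Xm : Submodule ℝ (V n)} {u w : V n}
    (hu : Xm ≤ LinearMap.ker (hypl u)) (hw : Xm ≤ LinearMap.ker (hypl w)) :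
    loc A u w ⊆ A.filter (fun v => Xm ≤ LinearMap.ker (hypl v)) := by
  intro v hv
  rw [mem_loc_iff] at hv
  rw [Finset.mem_filter]
  refine ⟨hv.1, ?_⟩
  refine le_trans ?_ hv.2
  intro x hx
  rw [mem_perpSpan]
  intro z hz
  rcases Finset.mem_insert.1 hz with rfl | hz
  · simpa using hu hx
  · rw [Finset.mem_singleton.1 hz]; simpa using hw hx

lemma loc_restrict {A : Finset (V n)} {Xm : Submodule ℝ (V n)} {u w : V n}
    (hu : Xm ≤ LinearMap.ker (hypl u)) (hw : Xm ≤ LinearMap.ker (hypl w)) :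
    loc (A.filter (fun v => Xm ≤ LinearMap.ker (hypl v))) u w = loc A u w := by
  ext v
  rw [mem_loc_iff, mem_loc_iff, Finset.mem_filter]
  constructor
  · rintro ⟨⟨hvA, _⟩, h2⟩; exact ⟨hvA, h2⟩
  · rintro ⟨hvA, h2⟩
    have : v ∈ loc A u w := mem_loc_iff.2 ⟨hvA, h2⟩
    have := loc_sub_Aprime hu hw this
    rw [Finset.mem_filter] at this
    exact ⟨⟨hvA, this.2⟩, h2⟩

/-- 2-closedness restricts to `A'`. -/
lemma twoClosed_restrict {A : Finset (V n)} {c₀ : V n → Bool} {J : Finset (V n)}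
    (hJ : Is2Closed A c₀ J) {Xm : Submodule ℝ (V n)} :
    Is2Closed (A.filter (fun v => Xm ≤ LinearMap.ker (hypl v))) c₀
      (J ∩ A.filter (fun v => Xm ≤ LinearMap.ker (hypl v))) := by
  intro u w hcd
  obtain ⟨hu, hw, hind⟩ := hcd
  rw [Finset.mem_filter] at hu hw
  have hcdA : Codim2 A u w := ⟨hu.1, hw.1, hind⟩
  have hloc := loc_restrict (A := A) hu.2 hw.2
  rw [hloc]
  have hJeq : J ∩ A.filter (fun v => Xm ≤ LinearMap.ker (hypl v)) ∩ loc A u w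
      = J ∩ loc A u w := by
    ext v
    simp only [Finset.mem_inter, Finset.mem_filter]
    constructor
    · rintro ⟨⟨h1, _⟩, h3⟩; exact ⟨h1, h3⟩
    · rintro ⟨h1, h3⟩
      have := loc_sub_Aprime (A := A) hu.2 hw.2 h3
      rw [Finset.mem_filter] at this
      exact ⟨⟨h1, this.1, this.2⟩, h3⟩
  rw [hJeq]
  exact hJ u w hcdA

/-- Sep sets of chambers agreeing on a subset agree there. -/
lemma sepSet_congr {A' : Finset (V n)} {c₀ μ m' : V n → Bool}
    (h : ∀ v ∈ A', μ v = m' v) : SepSet A' c₀ μ = SepSet A' c₀ m' := by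
  unfold SepSet
  apply Finset.filter_congr
  intro v hv
  rw [h v hv]

/-- The difference set of two chambers over the same base. -/
lemma diff_eq_sdiff {A A' : Finset (V n)} {c₀ μP μR m' : V n → Bool}
    (hP : ∀ v ∈ A', μP v = m' v) (hR : ∀ v ∈ A', μR v = m' v)
    {P R : Finset (V n)} (hPs : SepSet A c₀ μP ∩ (A \ A') = P)
    (hRs : SepSet A c₀ μR ∩ (A \ A') = R) (hPR : P ⊆ R) :
    A.filter (fun v => μP v ≠ μR v) = R \ P := by
  ext v
  rw [Finset.mem_filter, Finset.mem_sdiff]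
  by_cases hvA : v ∈ A
  · by_cases hvA' : v ∈ A'
    · have h1 : μP v = μR v := by rw [hP v hvA', hR v hvA']
      have hvR : v ∉ R := by
        rw [← hRs]
        intro h
        exact (Finset.mem_sdiff.1 (Finset.mem_inter.1 h).2).2 hvA'
      simp [hvA, h1, hvR]
    · have hvB : v ∈ A \ A' := Finset.mem_sdiff.2 ⟨hvA, hvA'⟩
      have hmemP : v ∈ P ↔ (c₀ v ≠ μP v) := by
        rw [← hPs, Finset.mem_inter, SepSet, Finset.mem_filter]
        constructor
        · rintro ⟨⟨_, h⟩, _⟩; exact h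
        · intro h; exact ⟨⟨hvA, h⟩, hvB⟩
      have hmemR : v ∈ R ↔ (c₀ v ≠ μR v) := by
        rw [← hRs, Finset.mem_inter, SepSet, Finset.mem_filter]
        constructor
        · rintro ⟨⟨_, h⟩, _⟩; exact h
        · intro h; exact ⟨⟨hvA, h⟩, hvB⟩
      have hPRv : (c₀ v ≠ μP v) → (c₀ v ≠ μR v) := fun h => hmemR.1 (hPR (hmemP.2 h))
      simp only [hvA, true_and, hmemP, hmemR]
      cases hc : c₀ v <;> cases hp : μP v <;> cases hr : μR v <;> simp_all
  · have hvR : v ∉ R := by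
      rw [← hRs]
      intro h
      exact hvA (Finset.mem_sdiff.1 (Finset.mem_inter.1 h).2).1
    simp [hvA, hvR]


/-- KEY: in a localization at two non-`A'` hyperplanes, there is a unique `A'`-hyperplane,
and it sits at an end of the sweep order. -/
lemma key_end {A : Finset (V n)} (hA : IsArrangement A) {c₀ : V n → Bool}
    {Xm : Submodule ℝ (V n)} (hmod : IsModular A Xm) {r : ℕ} (hr1 : 1 ≤ r)
    (hrank : rankA A = r) (hXdim : Module.finrank ℝ Xm = n - (r - 1))
    {xs : V n} (hxsX : xs ∈ Xm)
    (hxs : ∀ v ∈ A, ¬ Xm ≤ LinearMap.ker (hypl v) → 0 < val c₀ v xs)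
    {b1 b2 : V n} (hb1 : b1 ∈ A) (hb2 : b2 ∈ A) (h12 : b1 ≠ b2)
    (hb1B : ¬ Xm ≤ LinearMap.ker (hypl b1)) (hb2B : ¬ Xm ≤ LinearMap.ker (hypl b2))
    (S : Sweep c₀ (loc A b1 b2)) :
    ∃ v', v' ∈ loc A b1 b2 ∧ Xm ≤ LinearMap.ker (hypl v') ∧
      (∀ v ∈ loc A b1 b2, v ≠ v' → ¬ Xm ≤ LinearMap.ker (hypl v)) ∧
      ((∀ a ∈ loc A b1 b2, a ≠ v' → S.t v' < S.t a) ∨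
       (∀ a ∈ loc A b1 b2, a ≠ v' → S.t a < S.t v')) := by
  classical
  have hcd : Codim2 A b1 b2 := ⟨hb1, hb2, pair_indep hA hb1 hb2 h12⟩
  obtain ⟨v', hv'loc, hv'X⟩ := modular_loc_elem hA hmod hr1 hrank hXdim hb1 hb2 h12 hb1B hb2B
  have huniq : ∀ v ∈ loc A b1 b2, v ≠ v' → ¬ Xm ≤ LinearMap.ker (hypl v) := by
    intro v hv hne hXv
    exact hb1B (loc_two_in_Aprime hA hcd hv hv'loc hne hXv hv'X (mem_loc_left hb1))
  -- construct a realizing point for the chamber separating everything except v'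
  obtain ⟨δ, hδ, hδsm⟩ := exists_small ((loc A b1 b2).erase v') (fun v => val c₀ v xs)
    (fun v => sgn c₀ v ⬝ᵥ sgn c₀ v')
    (fun v hv => by
      have hvL := (Finset.mem_erase.1 hv).2
      have hvne := (Finset.mem_erase.1 hv).1
      exact hxs v (loc_subset b1 b2 hvL) (huniq v hvL hvne))
  set z := -xs + δ • sgn c₀ v' with hz
  have hvalz : ∀ v, val c₀ v z = -(val c₀ v xs) + δ * (sgn c₀ v ⬝ᵥ sgn c₀ v') := by
    intro v
    rw [hz, val_add, val_neg]
    congr 1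
    unfold val
    rw [dotProduct_smul, smul_eq_mul]
  have hzneg : ∀ v ∈ loc A b1 b2, v ≠ v' → val c₀ v z < 0 := by
    intro v hv hvne
    rw [hvalz]
    have := hδsm v (Finset.mem_erase.2 ⟨hvne, hv⟩)
    linarith only [this]
  have hzpos : 0 < val c₀ v' z := by
    rw [hvalz]
    have h0 : val c₀ v' xs = 0 := by
      rw [val_zero_iff]
      simpa using hv'X hxsX
    have hpos : 0 < sgn c₀ v' ⬝ᵥ sgn c₀ v' := by
      rw [sgn_dot_self]
      exact dot_self_pos (hA.1 v' (loc_subset b1 b2 hv'loc))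
    rw [h0]
    have := mul_pos hδ hpos
    linarith only [this]
  exact ⟨v', hv'loc, hv'X, huniq,
    sep_erase_end S (loc_plane hA hcd) hv'loc hzneg hzpos⟩


/-- Comparability of fibers over the same `A'`-chamber (pairwise version). -/
lemma fiber_pair {A : Finset (V n)} (hA : IsArrangement A) {c₀ : V n → Bool} {x₀ : V n}
    (hx₀ : Realizes A c₀ x₀)
    {Xm : Submodule ℝ (V n)} (hmod : IsModular A Xm) {r : ℕ} (hr1 : 1 ≤ r)
    (hrank : rankA A = r) (hXdim : Module.finrank ℝ Xm = n - (r - 1))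
    {xs : V n} (hxsX : xs ∈ Xm)
    (hxs : ∀ v ∈ A, ¬ Xm ≤ LinearMap.ker (hypl v) → 0 < val c₀ v xs)
    {m' μ1 μ2 : V n → Bool} (h1 : IsChamber A μ1) (h2 : IsChamber A μ2)
    (ha1 : ∀ v ∈ A, Xm ≤ LinearMap.ker (hypl v) → μ1 v = m' v)
    (ha2 : ∀ v ∈ A, Xm ≤ LinearMap.ker (hypl v) → μ2 v = m' v)
    {b1 b2 : V n} (hb1A : b1 ∈ A) (hb2A : b2 ∈ A)
    (hb1B : ¬ Xm ≤ LinearMap.ker (hypl b1)) (hb2B : ¬ Xm ≤ LinearMap.ker (hypl b2))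
    (hm1 : c₀ b1 ≠ μ1 b1) (hm2 : c₀ b1 = μ2 b1)
    (hm3 : c₀ b2 ≠ μ2 b2) (hm4 : c₀ b2 = μ1 b2) : False := by
  classical
  have h12 : b1 ≠ b2 := by
    rintro rfl
    rw [hm4] at hm1
    exact hm1 rfl
  obtain ⟨S, hSx⟩ := loc_sweep hA hx₀ b1 b2
  obtain ⟨v', hv'loc, hv'X, huniq, hend⟩ :=
    key_end hA hmod hr1 hrank hXdim hxsX hxs hb1A hb2A h12 hb1B hb2B S
  have hcd : Codim2 A b1 b2 := ⟨hb1A, hb2A, pair_indep hA hb1A hb2A h12⟩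
  have hpl := loc_plane hA hcd
  have hv'A : v' ∈ A := loc_subset b1 b2 hv'loc
  have hb1loc : b1 ∈ loc A b1 b2 := mem_loc_left hb1A
  have hb2loc : b2 ∈ loc A b1 b2 := mem_loc_right hb2A
  have hb1v : b1 ≠ v' := by rintro rfl; exact hb1B hv'X
  have hb2v : b2 ≠ v' := by rintro rfl; exact hb2B hv'X
  have hT1end := S.sep_end hpl (h1.imp fun z hz => Realizes.mono hz (loc_subset b1 b2))
  have hT2end := S.sep_end hpl (h2.imp fun z hz => Realizes.mono hz (loc_subset b1 b2))
  refine local_compare S hv'loc hb1loc hb2loc hb1v hb2v h12 hend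
    (Finset.filter_subset _ _) (Finset.filter_subset _ _) hT1end hT2end ?_ ?_ ?_ ?_ ?_
  · -- v' membership agreement
    have hmv : μ1 v' = μ2 v' := by rw [ha1 v' hv'A hv'X, ha2 v' hv'A hv'X]
    show v' ∈ Finset.filter (fun v => c₀ v ≠ μ1 v) (loc A b1 b2) ↔
      v' ∈ Finset.filter (fun v => c₀ v ≠ μ2 v) (loc A b1 b2)
    rw [Finset.mem_filter, Finset.mem_filter, hmv]
  · exact Finset.mem_filter.2 ⟨hb1loc, hm1⟩
  · intro hmem
    exact (Finset.mem_filter.1 hmem).2 hm2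
  · exact Finset.mem_filter.2 ⟨hb2loc, hm3⟩
  · intro hmem
    exact (Finset.mem_filter.1 hmem).2 hm4

/-- Forcing: an element below a forced element of `B` is itself forced into `J`. -/
lemma force_elem {A : Finset (V n)} (hA : IsArrangement A) {c₀ : V n → Bool} {x₀ : V n}
    (hx₀ : Realizes A c₀ x₀)
    {Xm : Submodule ℝ (V n)} (hmod : IsModular A Xm) {r : ℕ} (hr1 : 1 ≤ r)
    (hrank : rankA A = r) (hXdim : Module.finrank ℝ Xm = n - (r - 1))
    {xs : V n} (hxsX : xs ∈ Xm)
    (hxs : ∀ v ∈ A, ¬ Xm ≤ LinearMap.ker (hypl v) → 0 < val c₀ v xs)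
    {J : Finset (V n)} (hJ2 : Is2Closed A c₀ J)
    {m' : V n → Bool} (hS'J : ∀ v ∈ A, Xm ≤ LinearMap.ker (hypl v) → c₀ v ≠ m' v → v ∈ J)
    {g : V n → Bool} (hg : IsChamber A g) (hgJ : SepSet A c₀ g ⊆ J)
    (hgA' : ∀ v ∈ A, Xm ≤ LinearMap.ker (hypl v) → c₀ v ≠ g v → c₀ v ≠ m' v)
    {μR : V n → Bool} (hμR : IsChamber A μR)
    (hμRm : ∀ v ∈ A, Xm ≤ LinearMap.ker (hypl v) → μR v = m' v)
    {h b : V n} (hhA : h ∈ A) (hbA : b ∈ A)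
    (hhB : ¬ Xm ≤ LinearMap.ker (hypl h)) (hbB : ¬ Xm ≤ LinearMap.ker (hypl b)) (hhb : h ≠ b)
    (hhR : c₀ h ≠ μR h) (hbR : c₀ b = μR b) (hbg : c₀ b ≠ g b) (hbJ : b ∈ J) : h ∈ J := by
  classical
  obtain ⟨S, hSx⟩ := loc_sweep hA hx₀ h b
  obtain ⟨v', hv'loc, hv'X, huniq, hend⟩ :=
    key_end hA hmod hr1 hrank hXdim hxsX hxs hhA hbA hhb hhB hbB S
  have hcd : Codim2 A h b := ⟨hhA, hbA, pair_indep hA hhA hbA hhb⟩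
  have hpl := loc_plane hA hcd
  have hv'A : v' ∈ A := loc_subset h b hv'loc
  have hhloc : h ∈ loc A h b := mem_loc_left hhA
  have hbloc : b ∈ loc A h b := mem_loc_right hbA
  have hhv : h ≠ v' := by rintro rfl; exact hhB hv'X
  have hbv : b ≠ v' := by rintro rfl; exact hbB hv'X
  have hRend := S.sep_end hpl (hμR.imp fun z hz => Realizes.mono hz (loc_subset h b))
  have hJint : ∀ a₁ ∈ loc A h b, ∀ a₂ ∈ loc A h b, ∀ a₃ ∈ loc A h b,
      S.t a₁ < S.t a₂ → S.t a₂ < S.t a₃ → a₁ ∈ J → a₃ ∈ J → a₂ ∈ J := by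
    intro a₁ ha₁ a₂ ha₂ a₃ ha₃ ht1 ht2 hJ1 hJ3
    exact twoClosed_interval hA hJ2 hcd S ha₁ ha₂ ha₃ ht1 ht2 hJ1 hJ3
  refine local_force S (· ∈ J) hv'loc hhloc hbloc hhv hbv hhb hend
    (Finset.filter_subset _ _) hRend
    (Finset.mem_filter.2 ⟨hhloc, hhR⟩)
    (fun hmem => (Finset.mem_filter.1 hmem).2 hbR) hJint hbJ ?_
  by_cases hv'sep : c₀ v' ≠ m' v'
  · left
    constructor
    · exact Finset.mem_filter.2 ⟨hv'loc, by rw [hμRm v' hv'A hv'X]; exact hv'sep⟩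
    · exact hS'J v' hv'A hv'X hv'sep
  · right
    push_neg at hv'sep
    refine ⟨?_, SepSet (loc A h b) c₀ g, Finset.filter_subset _ _,
      S.sep_end hpl (hg.imp fun z hz => Realizes.mono hz (loc_subset h b)), ?_, ?_, ?_⟩
    · intro hmem
      have hmem2 := (Finset.mem_filter.1 hmem).2
      rw [hμRm v' hv'A hv'X] at hmem2
      exact hmem2 hv'sep
    · intro hmem
      exact hgA' v' hv'A hv'X (Finset.mem_filter.1 hmem).2 hv'sep
    · exact Finset.mem_filter.2 ⟨hbloc, hbg⟩
    · intro x hx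
      rw [SepSet, Finset.mem_filter] at hx
      refine hgJ ?_
      rw [SepSet, Finset.mem_filter]
      exact ⟨loc_subset h b hx.1, hx.2⟩

/-- Extreme fibers: over any `A'`-chamber there are chambers of `A` whose `B`-part is
everything (`σ = true`) or nothing (`σ = false`). -/
lemma fiber_ext {A : Finset (V n)} (hA : IsArrangement A) {c₀ m' : V n → Bool}
    {Xm : Submodule ℝ (V n)} {x' xs : V n}
    (hx' : Realizes (A.filter fun v => Xm ≤ LinearMap.ker (hypl v)) m' x')
    (hxs : ∀ v ∈ A, ¬ Xm ≤ LinearMap.ker (hypl v) → 0 < val c₀ v xs)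
    (hxsX : ∀ v ∈ A, Xm ≤ LinearMap.ker (hypl v) → v ⬝ᵥ xs = 0) (σ : Bool) :
    ∃ μ, IsChamber A μ ∧ (∀ v ∈ A, Xm ≤ LinearMap.ker (hypl v) → μ v = m' v) ∧
      ∀ v ∈ A, ¬ Xm ≤ LinearMap.ker (hypl v) → (c₀ v ≠ μ v ↔ σ = true) := by
  classical
  obtain ⟨M, hM, hMlarge⟩ := exists_large (A.filter fun v => ¬ Xm ≤ LinearMap.ker (hypl v))
    (fun v => if σ then -(val c₀ v x') else val c₀ v x') (fun v => val c₀ v xs)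
    (fun v hv => hxs v (Finset.mem_filter.1 hv).1 (Finset.mem_filter.1 hv).2)
  set z := x' + (if σ then -M else M) • xs with hzdef
  have hvalz : ∀ v, val c₀ v z = val c₀ v x' + (if σ then -M else M) * val c₀ v xs := by
    intro v
    rw [hzdef, val_add, val_smul]
  have hvalA' : ∀ v ∈ A, Xm ≤ LinearMap.ker (hypl v) → val c₀ v z = val c₀ v x' := by
    intro v hv hX
    rw [hvalz]
    have h0 : val c₀ v xs = 0 := (val_zero_iff c₀ v xs).2 (hxsX v hv hX)
    rw [h0, mul_zero, add_zero]
  have hvalB : ∀ v ∈ A, ¬ Xm ≤ LinearMap.ker (hypl v) →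
      (if σ = true then val c₀ v z < 0 else 0 < val c₀ v z) := by
    intro v hv hX
    have hlarge := hMlarge v (Finset.mem_filter.2 ⟨hv, hX⟩)
    rw [hvalz]
    by_cases hσ : σ = true
    · simp only [hσ, if_true] at hlarge ⊢
      linarith only [hlarge]
    · rw [Bool.not_eq_true] at hσ
      simp only [hσ] at hlarge ⊢
      simp only [Bool.false_eq_true, if_false] at hlarge ⊢
      linarith only [hlarge]
  have hne : ∀ v ∈ A, v ⬝ᵥ z ≠ 0 := by
    intro v hv h0
    have h0' : val c₀ v z = 0 := (val_zero_iff c₀ v z).2 h0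
    by_cases hX : Xm ≤ LinearMap.ker (hypl v)
    · have heq := hvalA' v hv hX
      rw [h0'] at heq
      have h2 := (realizes_val (c₀ := c₀) hx' (Finset.mem_filter.2 ⟨hv, hX⟩)).2
      exact h2 heq.symm
    · have hB := hvalB v hv hX
      by_cases hσ : σ = true
      · rw [hσ] at hB; simp only [if_true] at hB; rw [h0'] at hB; linarith only [hB]
      · rw [Bool.not_eq_true] at hσ; rw [hσ] at hB
        simp only [Bool.false_eq_true, if_false] at hB
        rw [h0'] at hB; linarith only [hB]
  refine ⟨mkSig z, mkSig_chamber hne, ?_, ?_⟩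
  · intro v hv hX
    have hvz : val c₀ v z = val c₀ v x' := hvalA' v hv hX
    have hval0 : val c₀ v z ≠ 0 := by
      intro h0
      exact hne v hv ((val_zero_iff c₀ v z).1 h0)
    apply bool_eq_of_iff (c := c₀ v)
    rw [mkSig_eq_iff hval0, hvz]
    exact (realizes_val (c₀ := c₀) hx' (Finset.mem_filter.2 ⟨hv, hX⟩)).1
  · intro v hv hX
    have hval0 : val c₀ v z ≠ 0 := by
      intro h0
      exact hne v hv ((val_zero_iff c₀ v z).1 h0)
    have hB := hvalB v hv hX
    constructor
    · intro hmem
      by_contra hσ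
      rw [Bool.not_eq_true] at hσ
      rw [hσ] at hB
      simp only [Bool.false_eq_true, if_false] at hB
      have := (mkSig_eq_iff (c₀ := c₀) hval0).2 hB
      exact hmem this.symm
    · intro hσ
      rw [hσ] at hB
      simp only [if_true] at hB
      intro hcon
      have := (mkSig_eq_iff (c₀ := c₀) hval0).1 hcon.symm
      linarith only [this, hB]


/-- The main lemma: existence of a minimum chamber above two chambers among
2-closed sets, for supersolvable arrangements with incident base chamber. -/
lemma main_lemma (N : ℕ) : ∀ (A : Finset (V n)), A.card ≤ N → IsArrangement A →
    ∀ c₀ : V n → Bool, IsChamber A c₀ →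
    (∃ X : Fin (rankA A + 1) → Submodule ℝ (V n),
      IsModularFlag A X ∧ ∀ i, IncidentSub A c₀ (X i)) →
    ∀ c d : V n → Bool, IsChamber A c → IsChamber A d →
    ∃ m : V n → Bool, IsChamber A m ∧
      SepSet A c₀ c ∪ SepSet A c₀ d ⊆ SepSet A c₀ m ∧
      ∀ J : Finset (V n), Is2Closed A c₀ J → SepSet A c₀ c ∪ SepSet A c₀ d ⊆ J →
        SepSet A c₀ m ⊆ J := by
  induction N with
  | zero =>
    intro A hcard hA c₀ hc₀ hss c d hc hd
    have hAe : A = ∅ := Finset.card_eq_zero.1 (le_antisymm hcard (Nat.zero_le _))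
    subst hAe
    refine ⟨c, hc, ?_, ?_⟩
    · intro v hv
      rcases Finset.mem_union.1 hv with h | h <;>
        exact absurd (Finset.filter_subset _ _ h) (Finset.notMem_empty v)
    · intro J _ _ v hv
      exact absurd (Finset.filter_subset _ _ hv) (Finset.notMem_empty v)
  | succ N ih =>
    intro A hcard hA c₀ hc₀ hss c d hc hd
    by_cases hr0 : rankA A = 0
    · have hAe : A = ∅ := rankA_zero_empty hA hr0
      subst hAe
      refine ⟨c, hc, ?_, ?_⟩
      · intro v hv
        rcases Finset.mem_union.1 hv with h | h <;>
          exact absurd (Finset.filter_subset _ _ h) (Finset.notMem_empty v)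
      · intro J _ _ v hv
        exact absurd (Finset.filter_subset _ _ hv) (Finset.notMem_empty v)
    set r := rankA A with hrdef
    obtain ⟨X, hflag, hinc⟩ := hss
    obtain ⟨hX0, hXmod, hXmono, hXdims⟩ := hflag
    have hr1 : 1 ≤ r := Nat.one_le_iff_ne_zero.2 hr0
    have hrn : r ≤ n := by rw [hrdef]; exact rankA_le A
    set ir1 : Fin (r + 1) := ⟨r - 1, by omega⟩ with hir1
    set Xm := X ir1 with hXmdef
    have hXmdim : Module.finrank ℝ Xm = n - (r - 1) := by
      have h1 := hXdims ir1
      simpa using h1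
    set A' := A.filter (fun v => Xm ≤ LinearMap.ker (hypl v)) with hA'def
    have hA'sub : A' ⊆ A := Finset.filter_subset _ _
    have hA'arr : IsArrangement A' :=
      ⟨fun v hv => hA.1 v (hA'sub hv),
       fun u hu w hw hsh => hA.2 u (hA'sub hu) w (hA'sub hw) hsh⟩
    have hXmA' : Xm = perpSpan A' := interLattice_closed (hXmod ir1).1
    have hrk' : rankA A' = r - 1 := by
      have h1 := finrank_perpSpan_A A'
      rw [← hXmA'] at h1
      omega
    have hBfact : ∀ v ∈ A, v ∉ A' → ¬ Xm ≤ LinearMap.ker (hypl v) := by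
      intro v hv hvA' hle
      exact hvA' (Finset.mem_filter.2 ⟨hv, hle⟩)
    have hBne : ∃ b, b ∈ A ∧ b ∉ A' := by
      by_contra hcon
      push_neg at hcon
      have hAA : A' = A := le_antisymm hA'sub (fun v hv => hcon v hv)
      rw [hAA] at hrk'
      omega
    have hcard' : A'.card ≤ N := by
      obtain ⟨b, hbA, hbA'⟩ := hBne
      have hlt : A'.card < A.card :=
        Finset.card_lt_card ⟨hA'sub, fun hsub => hbA' (hsub hbA)⟩
      omega
    have hltr : ∀ i : Fin (rankA A' + 1), (i : ℕ) < r + 1 := by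
      intro i
      have h2 := i.2
      omega
    have hmemL : ∀ i : Fin (rankA A' + 1), Xm ≤ X ⟨i.1, hltr i⟩ := by
      intro i
      apply hXmono
      show (⟨i.1, hltr i⟩ : Fin (r+1)) ≤ ir1
      rw [hir1, Fin.mk_le_mk]
      have h2 := i.2
      omega
    have hss' : ∃ X'' : Fin (rankA A' + 1) → Submodule ℝ (V n),
        IsModularFlag A' X'' ∧ ∀ i, IncidentSub A' c₀ (X'' i) := by
      refine ⟨fun i => X ⟨i.1, hltr i⟩, ⟨?_, ?_, ?_, ?_⟩, ?_⟩
      · show X ⟨(0 : Fin (rankA A' + 1)).1, hltr 0⟩ = ⊤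
        have h0 : (⟨(0 : Fin (rankA A' + 1)).1, hltr 0⟩ : Fin (r+1)) = 0 := by
          apply Fin.ext
          simp
        rw [h0]
        exact hX0
      · intro i
        constructor
        · exact restrict_interLattice (hXmod ⟨i.1, hltr i⟩).1 (hmemL i)
        · intro Y hY
          have hYA : Y ∈ InterLattice A := by
            obtain ⟨SS, hSS, rfl⟩ := hY
            exact ⟨SS, hSS.trans hA'sub, rfl⟩
          exact restrict_interLattice ((hXmod ⟨i.1, hltr i⟩).2 Y hYA)
            (le_trans (hmemL i) le_sup_left)
      · intro i j hij
        exact hXmono ⟨i.1, hltr i⟩ ⟨j.1, hltr j⟩ hij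
      · intro i
        have h1 := hXdims ⟨i.1, hltr i⟩
        simpa using h1
      · intro i
        obtain ⟨x, hxX, hxv⟩ := hinc ⟨i.1, hltr i⟩
        exact ⟨x, hxX, fun v hv hker => hxv v (hA'sub hv) hker⟩
    have hc₀' : IsChamber A' c₀ := hc₀.imp fun x hx => Realizes.mono hx hA'sub
    have hc' : IsChamber A' c := hc.imp fun x hx => Realizes.mono hx hA'sub
    have hd' : IsChamber A' d := hd.imp fun x hx => Realizes.mono hx hA'sub
    obtain ⟨m', hm'ch, hm'ub, hm'min⟩ := ih A' hcard' hA'arr c₀ hc₀' hss' c d hc' hd'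
    obtain ⟨xs, hxsX, hxsv⟩ := hinc ir1
    have hxs : ∀ v ∈ A, ¬ Xm ≤ LinearMap.ker (hypl v) → 0 < val c₀ v xs := by
      intro v hv hker
      have h1 := hxsv v hv hker
      rw [val_eq]
      by_cases hcv : c₀ v
      · rw [if_pos hcv]
        rw [if_pos hcv] at h1
        exact h1
      · rw [if_neg hcv]
        rw [if_neg hcv] at h1
        linarith only [h1]
    have hxs0 : ∀ v ∈ A, Xm ≤ LinearMap.ker (hypl v) → v ⬝ᵥ xs = 0 := by
      intro v hv hle
      simpa using hle hxsX
    obtain ⟨x₀, hx₀⟩ := hc₀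
    have hoverconv : ∀ (μ : V n → Bool), (∀ v ∈ A', μ v = m' v) ↔
        (∀ v ∈ A, Xm ≤ LinearMap.ker (hypl v) → μ v = m' v) := by
      intro μ
      constructor
      · intro hμ v hv hle
        exact hμ v (Finset.mem_filter.2 ⟨hv, hle⟩)
      · intro hμ v hv
        exact hμ v (hA'sub hv) (Finset.mem_filter.1 hv).2
    -- B-part characterization helper
    have hchar : ∀ (μ : V n → Bool) (T : Finset (V n)), SepSet A c₀ μ ∩ (A \ A') = T →
        ∀ v ∈ A \ A', (v ∈ T ↔ c₀ v ≠ μ v) := by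
      intro μ T hT v hvB
      rw [← hT, Finset.mem_inter]
      constructor
      · rintro ⟨h1, _⟩
        exact (Finset.mem_filter.1 h1).2
      · intro h1
        exact ⟨Finset.mem_filter.2 ⟨(Finset.mem_sdiff.1 hvB).1, h1⟩, hvB⟩
    -- the fiber family
    set F : Finset (Finset (V n)) := (A \ A').powerset.filter
      (fun T => ∃ μ, IsChamber A μ ∧ (∀ v ∈ A', μ v = m' v) ∧
        SepSet A c₀ μ ∩ (A \ A') = T) with hFdef
    obtain ⟨x', hx'⟩ := hm'ch
    have hx'filter : Realizes (A.filter fun v => Xm ≤ LinearMap.ker (hypl v)) m' x' := hx'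
    -- extreme elements
    have hextreme : ∀ σ : Bool, (if σ then A \ A' else ∅) ∈ F := by
      intro σ
      obtain ⟨μ, hμch, hμover, hμB⟩ := fiber_ext hA hx'filter hxs hxs0 σ
      rw [hFdef, Finset.mem_filter]
      constructor
      · rw [Finset.mem_powerset]
        by_cases hσ : σ = true <;> simp [hσ]
      · refine ⟨μ, hμch, (hoverconv μ).2 hμover, ?_⟩
        ext v
        rw [Finset.mem_inter]
        constructor
        · rintro ⟨h1, h2⟩
          have hvA := (Finset.mem_sdiff.1 h2).1
          have hvnA' := (Finset.mem_sdiff.1 h2).2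
          have hsep := (Finset.mem_filter.1 h1).2
          have hiff := hμB v hvA (hBfact v hvA hvnA')
          have hσt : σ = true := hiff.1 hsep
          rw [hσt]
          simpa using h2
        · intro h2
          by_cases hσ : σ = true
          · rw [hσ] at h2
            simp only [if_true] at h2
            have hvA := (Finset.mem_sdiff.1 h2).1
            have hvnA' := (Finset.mem_sdiff.1 h2).2
            refine ⟨Finset.mem_filter.2 ⟨hvA, ?_⟩, h2⟩
            exact (hμB v hvA (hBfact v hvA hvnA')).2 hσ
          · rw [Bool.not_eq_true] at hσ
            rw [hσ] at h2
            simp only [Bool.false_eq_true, if_false] at h2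
            exact absurd h2 (Finset.notMem_empty v)
    have htopF : (A \ A') ∈ F := by
      have h1 := hextreme true
      simpa using h1
    have hbotF : (∅ : Finset (V n)) ∈ F := by
      have h1 := hextreme false
      simpa using h1
    -- chain property
    have hchain : ∀ T1 ∈ F, ∀ T2 ∈ F, T1 ⊆ T2 ∨ T2 ⊆ T1 := by
      intro T1 hT1 T2 hT2
      rw [hFdef, Finset.mem_filter] at hT1 hT2
      obtain ⟨hT1p, μ1, hμ1ch, hμ1over, hμ1sep⟩ := hT1
      obtain ⟨hT2p, μ2, hμ2ch, hμ2over, hμ2sep⟩ := hT2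
      by_contra hcon
      push_neg at hcon
      obtain ⟨b1, hb1T1, hb1T2⟩ := Finset.not_subset.1 hcon.1
      obtain ⟨b2, hb2T2, hb2T1⟩ := Finset.not_subset.1 hcon.2
      have hb1B : b1 ∈ A \ A' := Finset.mem_powerset.1 hT1p hb1T1
      have hb2B : b2 ∈ A \ A' := Finset.mem_powerset.1 hT2p hb2T2
      have hb1A : b1 ∈ A := (Finset.mem_sdiff.1 hb1B).1
      have hb2A : b2 ∈ A := (Finset.mem_sdiff.1 hb2B).1
      have hm1 : c₀ b1 ≠ μ1 b1 := (hchar μ1 T1 hμ1sep b1 hb1B).1 hb1T1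
      have hm2 : c₀ b1 = μ2 b1 := by
        by_contra hne
        exact hb1T2 ((hchar μ2 T2 hμ2sep b1 hb1B).2 hne)
      have hm3 : c₀ b2 ≠ μ2 b2 := (hchar μ2 T2 hμ2sep b2 hb2B).1 hb2T2
      have hm4 : c₀ b2 = μ1 b2 := by
        by_contra hne
        exact hb2T1 ((hchar μ1 T1 hμ1sep b2 hb2B).2 hne)
      exact fiber_pair hA hx₀ (hXmod ir1) hr1 hrdef.symm hXmdim hxsX hxs
        hμ1ch hμ2ch ((hoverconv μ1).1 hμ1over) ((hoverconv μ2).1 hμ2over)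
        hb1A hb2A (hBfact b1 hb1A (Finset.mem_sdiff.1 hb1B).2)
        (hBfact b2 hb2A (Finset.mem_sdiff.1 hb2B).2) hm1 hm2 hm3 hm4
    -- Q : minimal fiber element above U ∩ B
    set UB := (SepSet A c₀ c ∪ SepSet A c₀ d) ∩ (A \ A') with hUBdef
    set C := F.filter (fun T => UB ⊆ T) with hCdef
    have hCne : C.Nonempty := by
      refine ⟨A \ A', ?_⟩
      rw [hCdef, Finset.mem_filter]
      exact ⟨htopF, Finset.inter_subset_right⟩
    obtain ⟨Q, hQC, hQmin⟩ := Finset.exists_min_image C Finset.card hCne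
    have hQF : Q ∈ F := (Finset.mem_filter.1 hQC).1
    have hQUB : UB ⊆ Q := (Finset.mem_filter.1 hQC).2
    have hQleast : ∀ T ∈ C, Q ⊆ T := by
      intro T hT
      rcases hchain Q hQF T (Finset.mem_filter.1 hT).1 with hsub | hsub
      · exact hsub
      · have heq : T = Q := Finset.eq_of_subset_of_card_le hsub (hQmin T hT)
        rw [heq]
    have hQF' := hQF
    rw [hFdef, Finset.mem_filter] at hQF'
    obtain ⟨hQpow, m, hmch, hmover, hmsep⟩ := hQF'
    refine ⟨m, hmch, ?_, ?_⟩
    · -- upper bound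
      intro v hv
      have hvA : v ∈ A := by
        rcases Finset.mem_union.1 hv with h1 | h1 <;> exact (Finset.mem_filter.1 h1).1
      by_cases hvA' : v ∈ A'
      · have hvsep' : v ∈ SepSet A' c₀ c ∪ SepSet A' c₀ d := by
          rcases Finset.mem_union.1 hv with h1 | h1
          · exact Finset.mem_union_left _
              (Finset.mem_filter.2 ⟨hvA', (Finset.mem_filter.1 h1).2⟩)
          · exact Finset.mem_union_right _
              (Finset.mem_filter.2 ⟨hvA', (Finset.mem_filter.1 h1).2⟩)
        have hvm' := hm'ub hvsep'
        have hne := (Finset.mem_filter.1 hvm').2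
        refine Finset.mem_filter.2 ⟨hvA, ?_⟩
        rw [hmover v hvA']
        exact hne
      · have hvB : v ∈ A \ A' := Finset.mem_sdiff.2 ⟨hvA, hvA'⟩
        have hvQ : v ∈ Q := hQUB (Finset.mem_inter.2 ⟨hv, hvB⟩)
        rw [← hmsep] at hvQ
        exact (Finset.mem_inter.1 hvQ).1
    · -- minimality
      intro J hJ2 hUJ
      have hJ2' : Is2Closed A' c₀ (J ∩ A') := twoClosed_restrict hJ2
      have hUJ' : SepSet A' c₀ c ∪ SepSet A' c₀ d ⊆ J ∩ A' := by
        intro v hv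
        have hvA' : v ∈ A' := by
          rcases Finset.mem_union.1 hv with h1 | h1 <;> exact (Finset.mem_filter.1 h1).1
        have hvJ : v ∈ J := by
          apply hUJ
          rcases Finset.mem_union.1 hv with h1 | h1
          · exact Finset.mem_union_left _
              (Finset.mem_filter.2 ⟨hA'sub hvA', (Finset.mem_filter.1 h1).2⟩)
          · exact Finset.mem_union_right _
              (Finset.mem_filter.2 ⟨hA'sub hvA', (Finset.mem_filter.1 h1).2⟩)
        exact Finset.mem_inter.2 ⟨hvJ, hvA'⟩
      have hS'J : SepSet A' c₀ m' ⊆ J ∩ A' := hm'min (J ∩ A') hJ2' hUJ'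
      have hS'Jpt : ∀ v ∈ A, Xm ≤ LinearMap.ker (hypl v) → c₀ v ≠ m' v → v ∈ J := by
        intro v hv hle hne
        have hvA' : v ∈ A' := Finset.mem_filter.2 ⟨hv, hle⟩
        exact (Finset.mem_inter.1 (hS'J (Finset.mem_filter.2 ⟨hvA', hne⟩))).1
      intro h hmem
      have hhA : h ∈ A := (Finset.mem_filter.1 hmem).1
      have hhsep : c₀ h ≠ m h := (Finset.mem_filter.1 hmem).2
      by_cases hhA' : h ∈ A'
      · have hmm' : h ∈ SepSet A' c₀ m' := by
          refine Finset.mem_filter.2 ⟨hhA', ?_⟩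
          rw [← hmover h hhA']
          exact hhsep
        exact (Finset.mem_inter.1 (hS'J hmm')).1
      · -- B-side forcing
        have hhB : ¬ Xm ≤ LinearMap.ker (hypl h) := hBfact h hhA hhA'
        have hhBmem : h ∈ A \ A' := Finset.mem_sdiff.2 ⟨hhA, hhA'⟩
        have hhQ : h ∈ Q := by
          rw [← hmsep]
          exact Finset.mem_inter.2 ⟨hmem, hhBmem⟩
        by_cases hhU : h ∈ SepSet A c₀ c ∪ SepSet A c₀ d
        · exact hUJ hhU
        -- minimal element R of F containing h
        have hFhne : (F.filter (fun T => h ∈ T)).Nonempty :=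
          ⟨Q, Finset.mem_filter.2 ⟨hQF, hhQ⟩⟩
        obtain ⟨R, hRFh, hRmin⟩ := Finset.exists_min_image _ Finset.card hFhne
        have hRF : R ∈ F := (Finset.mem_filter.1 hRFh).1
        have hhR : h ∈ R := (Finset.mem_filter.1 hRFh).2
        have hRleast : ∀ T ∈ F, h ∈ T → R ⊆ T := by
          intro T hT hhT
          rcases hchain R hRF T hT with hsub | hsub
          · exact hsub
          · have heq : T = R := Finset.eq_of_subset_of_card_le hsub
              (hRmin T (Finset.mem_filter.2 ⟨hT, hhT⟩))
            rw [heq]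
        -- maximal element P of F avoiding h
        have hFnhne : (F.filter (fun T => h ∉ T)).Nonempty :=
          ⟨∅, Finset.mem_filter.2 ⟨hbotF, Finset.notMem_empty h⟩⟩
        obtain ⟨P, hPFnh, hPmax⟩ := Finset.exists_max_image _ Finset.card hFnhne
        have hPF : P ∈ F := (Finset.mem_filter.1 hPFnh).1
        have hhP : h ∉ P := (Finset.mem_filter.1 hPFnh).2
        have hPgreatest : ∀ T ∈ F, h ∉ T → T ⊆ P := by
          intro T hT hhT
          rcases hchain T hT P hPF with hsub | hsub
          · exact hsub
          · have heq : T = P := Finset.eq_of_subset_of_card_le hsub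
              (hPmax T (Finset.mem_filter.2 ⟨hT, hhT⟩)) |>.symm
            rw [heq]
        have hPB : P ⊆ A \ A' := by
          have h1 := hPF
          rw [hFdef, Finset.mem_filter] at h1
          exact Finset.mem_powerset.1 h1.1
        have hRB : R ⊆ A \ A' := by
          have h1 := hRF
          rw [hFdef, Finset.mem_filter] at h1
          exact Finset.mem_powerset.1 h1.1
        have hPsubR : P ⊆ R := by
          rcases hchain P hPF R hRF with hsub | hsub
          · exact hsub
          · exact absurd (hsub hhR) hhP
        -- saturation: R ⊆ P ∪ {h}
        have hRPh : R ⊆ P ∪ {h} := by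
          by_contra hcon2
          obtain ⟨g, hgR, hgPh⟩ := Finset.not_subset.1 hcon2
          have hgP : g ∉ P := fun hmem' => hgPh (Finset.mem_union_left _ hmem')
          have hgh : g ≠ h := fun heq =>
            hgPh (Finset.mem_union_right _ (by rw [heq]; exact Finset.mem_singleton_self h))
          -- chambers for P and R
          have hPF2 := hPF
          rw [hFdef, Finset.mem_filter] at hPF2
          obtain ⟨_, μP, hμPch, hμPover, hμPsep⟩ := hPF2
          have hRF2 := hRF
          rw [hFdef, Finset.mem_filter] at hRF2
          obtain ⟨_, μR, hμRch, hμRover, hμRsep⟩ := hRF2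
          have hDeq : A.filter (fun v => μP v ≠ μR v) = R \ P :=
            diff_eq_sdiff (fun v hv => hμPover v hv) (fun v hv => hμRover v hv)
              hμPsep hμRsep hPsubR
          have hcard2 : 2 ≤ (A.filter (fun v => μP v ≠ μR v)).card := by
            rw [hDeq]
            have hhRP : h ∈ R \ P := Finset.mem_sdiff.2 ⟨hhR, hhP⟩
            have hgRP : g ∈ R \ P := Finset.mem_sdiff.2 ⟨hgR, hgP⟩
            have hsub2 : ({g, h} : Finset (V n)) ⊆ R \ P := by
              intro x hx
              rcases Finset.mem_insert.1 hx with rfl | hx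
              · exact hgRP
              · rw [Finset.mem_singleton.1 hx]
                exact hhRP
            have hcard3 : ({g, h} : Finset (V n)).card = 2 := by
              rw [Finset.card_insert_of_notMem (by simpa using hgh), Finset.card_singleton]
            rw [← hcard3]
            exact Finset.card_le_card hsub2
          obtain ⟨e, β, hech, hβD, heagree, heβ⟩ := cross_one hA hμPch hμRch hcard2
          have hβRP : β ∈ R \ P := by
            rw [hDeq] at hβD
            exact hβD
          have hβR : β ∈ R := (Finset.mem_sdiff.1 hβRP).1
          have hβP : β ∉ P := (Finset.mem_sdiff.1 hβRP).2
          have hβB : β ∈ A \ A' := hRB hβR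
          have hβA : β ∈ A := (Finset.mem_sdiff.1 hβB).1
          have heover : ∀ v ∈ A', e v = m' v := by
            intro v hv
            have hvβ : v ≠ β := by
              rintro rfl
              exact (Finset.mem_sdiff.1 hβB).2 hv
            rw [heagree v (hA'sub hv) hvβ]
            exact hμPover v hv
          have hβnotsep : c₀ β = μP β := by
            by_contra hne
            exact hβP ((hchar μP P hμPsep β hβB).2 hne)
          have hesep : SepSet A c₀ e ∩ (A \ A') = P ∪ {β} := by
            ext v
            rw [Finset.mem_inter, Finset.mem_union, Finset.mem_singleton]
            constructor
            · rintro ⟨h1, h2⟩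
              by_cases hvβ : v = β
              · right; exact hvβ
              · left
                have hvA := (Finset.mem_sdiff.1 h2).1
                have hne := (Finset.mem_filter.1 h1).2
                rw [heagree v hvA hvβ] at hne
                exact (hchar μP P hμPsep v h2).2 hne
            · rintro (hvP | rfl)
              · have hvB : v ∈ A \ A' := hPB hvP
                have hvA := (Finset.mem_sdiff.1 hvB).1
                have hne : c₀ v ≠ μP v := (hchar μP P hμPsep v hvB).1 hvP
                have hvβ : v ≠ β := by
                  rintro rfl
                  exact hβP hvP
                refine ⟨Finset.mem_filter.2 ⟨hvA, ?_⟩, hvB⟩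
                rw [heagree v hvA hvβ]
                exact hne
              · refine ⟨Finset.mem_filter.2 ⟨hβA, ?_⟩, hβB⟩
                intro hcon5
                exact heβ (hcon5.symm.trans hβnotsep)
          have hP'F : P ∪ {β} ∈ F := by
            rw [hFdef, Finset.mem_filter]
            refine ⟨Finset.mem_powerset.2 ?_, e, hech, heover, hesep⟩
            intro x hx
            rcases Finset.mem_union.1 hx with h1 | h1
            · exact hPB h1
            · rw [Finset.mem_singleton.1 h1]
              exact hβB
          by_cases hβh : β = h
          · subst hβh
            have hsub3 := hRleast (P ∪ {β}) hP'F
              (Finset.mem_union_right _ (Finset.mem_singleton_self β))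
            have hgmem := hsub3 hgR
            rcases Finset.mem_union.1 hgmem with h1 | h1
            · exact hgP h1
            · exact hgh (Finset.mem_singleton.1 h1)
          · have hhP' : h ∉ P ∪ {β} := by
              intro hmem'
              rcases Finset.mem_union.1 hmem' with h1 | h1
              · exact hhP h1
              · exact hβh (Finset.mem_singleton.1 h1).symm
            have hsub4 := hPgreatest (P ∪ {β}) hP'F hhP'
            exact hβP (hsub4 (Finset.mem_union_right _ (Finset.mem_singleton_self β)))
        -- find b* in UB avoiding P
        have hbstar : ∃ b, b ∈ UB ∧ b ∉ P := by
          by_contra hcon3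
          push_neg at hcon3
          have hPC : P ∈ C := Finset.mem_filter.2 ⟨hPF, fun b hb => hcon3 b hb⟩
          exact hhP (hQleast P hPC hhQ)
        obtain ⟨b, hbUB, hbP⟩ := hbstar
        have hbU : b ∈ SepSet A c₀ c ∪ SepSet A c₀ d := (Finset.mem_inter.1 hbUB).1
        have hbB' : b ∈ A \ A' := (Finset.mem_inter.1 hbUB).2
        have hbA : b ∈ A := (Finset.mem_sdiff.1 hbB').1
        have hbBc : ¬ Xm ≤ LinearMap.ker (hypl b) := hBfact b hbA (Finset.mem_sdiff.1 hbB').2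
        have hhb : h ≠ b := by
          rintro rfl
          exact hhU hbU
        have hbnR : b ∉ R := by
          intro hbR
          rcases Finset.mem_union.1 (hRPh hbR) with h1 | h1
          · exact hbP h1
          · exact hhb (Finset.mem_singleton.1 h1).symm
        -- chamber data for R
        have hRF2 := hRF
        rw [hFdef, Finset.mem_filter] at hRF2
        obtain ⟨_, μR, hμRch, hμRover, hμRsep⟩ := hRF2
        have hhRsep : c₀ h ≠ μR h := (hchar μR R hμRsep h hhBmem).1 hhR
        have hbRsep : c₀ b = μR b := by
          by_contra hne
          exact hbnR ((hchar μR R hμRsep b hbB').2 hne)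
        -- the witnessing chamber g ∈ {c,d}
        obtain ⟨gch, hgch, hgJ, hbg, hgm'⟩ :
            ∃ g0, IsChamber A g0 ∧ SepSet A c₀ g0 ⊆ J ∧ c₀ b ≠ g0 b ∧
              ∀ v ∈ A, Xm ≤ LinearMap.ker (hypl v) → c₀ v ≠ g0 v → c₀ v ≠ m' v := by
          rcases Finset.mem_union.1 hbU with h1 | h1
          · refine ⟨c, hc, fun x hx => hUJ (Finset.mem_union_left _ hx),
              (Finset.mem_filter.1 h1).2, ?_⟩
            intro v hv hle hne
            have hvA' : v ∈ A' := Finset.mem_filter.2 ⟨hv, hle⟩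
            have hvm' := hm'ub (Finset.mem_union_left _ (Finset.mem_filter.2 ⟨hvA', hne⟩))
            exact (Finset.mem_filter.1 hvm').2
          · refine ⟨d, hd, fun x hx => hUJ (Finset.mem_union_right _ hx),
              (Finset.mem_filter.1 h1).2, ?_⟩
            intro v hv hle hne
            have hvA' : v ∈ A' := Finset.mem_filter.2 ⟨hv, hle⟩
            have hvm' := hm'ub (Finset.mem_union_right _ (Finset.mem_filter.2 ⟨hvA', hne⟩))
            exact (Finset.mem_filter.1 hvm').2
        exact force_elem hA hx₀ (hXmod ir1) hr1 hrdef.symm hXmdim hxsX hxs hJ2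
          hS'Jpt hgch hgJ hgm' hμRch ((hoverconv μR).1 hμRover) hhA hbA hhB hbBc hhb
          hhRsep hbRsep hbg (hUJ hbU)

end SJ


theorem supersolvable_join_twoClosure {n : ℕ} (A : Finset (V n)) (hA : IsArrangement A)
    (c₀ : V n → Bool) (hc₀ : IsChamber A c₀)
    (hss : ∃ X : Fin (rankA A + 1) → Submodule ℝ (V n),
      IsModularFlag A X ∧ ∀ i, IncidentSub A c₀ (X i))
    (c d j : V n → Bool) (hc : IsChamber A c) (hd : IsChamber A d) (hj : IsChamber A j)
    (hubc : SepSet A c₀ c ⊆ SepSet A c₀ j) (hubd : SepSet A c₀ d ⊆ SepSet A c₀ j)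
    (hlub : ∀ e, IsChamber A e → SepSet A c₀ c ⊆ SepSet A c₀ e →
      SepSet A c₀ d ⊆ SepSet A c₀ e → SepSet A c₀ j ⊆ SepSet A c₀ e) :
    Is2Closed A c₀ (SepSet A c₀ j) ∧
      SepSet A c₀ c ∪ SepSet A c₀ d ⊆ SepSet A c₀ j ∧
      ∀ J ⊆ A, Is2Closed A c₀ J → SepSet A c₀ c ∪ SepSet A c₀ d ⊆ J →
        SepSet A c₀ j ⊆ J := by
  classical
  refine ⟨?_, Finset.union_subset hubc hubd, ?_⟩
  · -- the separation set of a chamber is 2-closed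
    intro u w hcd H hH
    rw [Finset.mem_sdiff] at hH
    obtain ⟨z, hz⟩ := hj
    refine ⟨fun v => !(j v), ⟨-z, SJ.neg_realizes (SJ.Realizes.mono hz (SJ.loc_subset u w))⟩,
      ?_, ?_⟩
    · refine Finset.mem_filter.2 ⟨hH.1, ?_⟩
      have hHA : H ∈ A := SJ.loc_subset u w hH.1
      have heq : c₀ H = j H := by
        by_contra hne
        exact hH.2 (Finset.mem_inter.2 ⟨Finset.mem_filter.2 ⟨hHA, hne⟩, hH.1⟩)
      rw [heq]
      cases hjh : j H <;> simp [hjh]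
    · intro v hv
      rw [SepSet, Finset.mem_filter] at hv
      rw [Finset.mem_sdiff]
      refine ⟨hv.1, ?_⟩
      intro hmem
      have hne := (Finset.mem_filter.1 (Finset.mem_inter.1 hmem).1).2
      have h2 := hv.2
      cases hj1 : j v <;> cases hc1 : c₀ v <;> simp_all
  · intro J _ hJ2 hUJ
    obtain ⟨m, hmch, hub, hmin⟩ :=
      SJ.main_lemma A.card A (le_refl _) hA c₀ hc₀ hss c d hc hd
    have hjm := hlub m hmch (fun x hx => hub (Finset.mem_union_left _ hx))
      (fun x hx => hub (Finset.mem_union_right _ hx))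
    exact fun x hx => hmin J hJ2 hUJ (hjm hx)
end

section
/- Let A be a real central hyperplane arrangement with modular line l and fundamental chamber c₀ incident to l, and let π: P(A,c₀) → P(A_l,(c₀)_l) be the localization map of chamber posets. Then the fiber U = π⁻¹(π(c₀)) is linearly ordered c₀ < c₁ < ... < c_t, and this induces a linear order H₁,...,H_t on A − A_l where H_i is the unique hyperplane in S(c_{i−1}, c_i); moreover |A − A_l| = t equals the length of this chain. -/
open Matrix
open scoped Classical

section Aux

variable {n : ℕ}

lemma hypl_apply (v x : V n) : hypl v x = v ⬝ᵥ x := rfl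

lemma mem_ker_hypl {v x : V n} : x ∈ LinearMap.ker (hypl v) ↔ v ⬝ᵥ x = 0 := by
  simp [LinearMap.mem_ker, hypl_apply]

/-- Distinct hyperplanes of an arrangement are not proportional; dual vector exists. -/
lemma exists_dual {A : Finset (V n)} (hA : IsArrangement A) {u w : V n}
    (hu : u ∈ A) (hw : w ∈ A) (hne : u ≠ w) :
    ∃ a : V n, w ⬝ᵥ a = 0 ∧ u ⬝ᵥ a ≠ 0 := by
  by_contra hcon
  push_neg at hcon
  -- then ker w ≤ ker u pointwise, derive u = c • w
  have hw0 : w ≠ 0 := hA.1 w hw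
  have hww : w ⬝ᵥ w ≠ 0 := by
    simpa [dotProduct_self_eq_zero] using hw0
  set c : ℝ := (u ⬝ᵥ w) / (w ⬝ᵥ w) with hc
  have hq : w ⬝ᵥ (u - c • w) = 0 := by
    rw [dotProduct_sub, dotProduct_smul]
    have : w ⬝ᵥ u = u ⬝ᵥ w := dotProduct_comm _ _
    rw [this]
    rw [smul_eq_mul, hc, div_mul_cancel₀ _ hww, sub_self]
  have hq2 : u ⬝ᵥ (u - c • w) = 0 := hcon _ hq
  have hq3 : (u - c • w) ⬝ᵥ (u - c • w) = 0 := by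
    rw [sub_dotProduct, smul_dotProduct]
    have h1 : u ⬝ᵥ (u - c • w) = 0 := hq2
    have h2 : w ⬝ᵥ (u - c • w) = 0 := hq
    rw [h1, h2]
    simp
  have hquw : u = c • w := by
    have := dotProduct_self_eq_zero.mp hq3
    have := sub_eq_zero.mp this
    exact this
  have hc0 : c ≠ 0 := by
    intro h
    apply hA.1 u hu
    rw [hquw, h, zero_smul]
  have hsame : SameHyp u w := by
    intro x
    rw [hquw, smul_dotProduct]
    constructor
    · intro h
      rcases mul_eq_zero.mp h with h | h
      · exact absurd h hc0
      · exact h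
    · intro h
      simp [h]
  exact hne (hA.2 u hu w hw hsame)

/-- If `z` vanishes on `ker u ∩ ker w`, then `z` evaluates as a combination of `u, w`. -/
lemma exists_eval_comb {A : Finset (V n)} (hA : IsArrangement A) {u w z : V n}
    (hu : u ∈ A) (hw : w ∈ A) (hne : u ≠ w)
    (hker : ∀ x, u ⬝ᵥ x = 0 → w ⬝ᵥ x = 0 → z ⬝ᵥ x = 0) :
    ∃ α β : ℝ, ∀ x, z ⬝ᵥ x = α * (u ⬝ᵥ x) + β * (w ⬝ᵥ x) := by
  obtain ⟨a, haw, hau⟩ := exists_dual hA hu hw hne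
  obtain ⟨b, hbu, hbw⟩ := exists_dual hA hw hu hne.symm
  obtain ⟨a', hua', hwa'⟩ : ∃ a', u ⬝ᵥ a' = 1 ∧ w ⬝ᵥ a' = 0 :=
    ⟨(u ⬝ᵥ a)⁻¹ • a, by rw [dotProduct_smul, smul_eq_mul, inv_mul_cancel₀ hau], by rw [dotProduct_smul, haw]; simp⟩
  obtain ⟨b', hub', hwb'⟩ : ∃ b', u ⬝ᵥ b' = 0 ∧ w ⬝ᵥ b' = 1 :=
    ⟨(w ⬝ᵥ b)⁻¹ • b, by rw [dotProduct_smul, hbu]; simp, by rw [dotProduct_smul, smul_eq_mul, inv_mul_cancel₀ hbw]⟩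
  refine ⟨z ⬝ᵥ a', z ⬝ᵥ b', fun x => ?_⟩
  have hx : z ⬝ᵥ (x - (u ⬝ᵥ x) • a' - (w ⬝ᵥ x) • b') = 0 := by
    apply hker
    · rw [dotProduct_sub, dotProduct_sub, dotProduct_smul, dotProduct_smul,
        hua', hub']
      simp
    · rw [dotProduct_sub, dotProduct_sub, dotProduct_smul, dotProduct_smul,
        hwa', hwb']
      simp
  rw [dotProduct_sub, dotProduct_sub, dotProduct_smul, dotProduct_smul] at hx
  simp only [smul_eq_mul] at hx
  nlinarith [hx]

/-- rank-nullity for a single nonzero functional. -/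
lemma finrank_ker_hypl {v : V n} (hv : v ≠ 0) :
    Module.finrank ℝ (LinearMap.ker (hypl v)) + 1 = n := by
  have hsurj : LinearMap.range (hypl v) = ⊤ := by
    rw [LinearMap.range_eq_top]
    intro r
    have hvv : v ⬝ᵥ v ≠ 0 := by simpa [dotProduct_self_eq_zero] using hv
    refine ⟨(r / (v ⬝ᵥ v)) • v, ?_⟩
    rw [hypl_apply, dotProduct_smul, smul_eq_mul, div_mul_cancel₀ _ hvv]
  have h := LinearMap.finrank_range_add_finrank_ker (hypl v)
  rw [hsurj] at h
  simp only [finrank_top, Module.finrank_self] at h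
  rw [Module.finrank_fin_fun] at h
  omega

/-- Kernels of two non-proportional functionals are codisjoint. -/
lemma sup_ker_eq_top {A : Finset (V n)} (hA : IsArrangement A) {u w : V n}
    (hu : u ∈ A) (hw : w ∈ A) (hne : u ≠ w) :
    LinearMap.ker (hypl u) ⊔ LinearMap.ker (hypl w) = ⊤ := by
  obtain ⟨a, haw, hau⟩ := exists_dual hA hu hw hne
  rw [eq_top_iff]
  intro x _
  have : x = (x - ((u ⬝ᵥ x) / (u ⬝ᵥ a)) • a) + ((u ⬝ᵥ x) / (u ⬝ᵥ a)) • a := by ring_nf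
  rw [this]
  apply Submodule.add_mem_sup
  · rw [mem_ker_hypl, dotProduct_sub, dotProduct_smul, smul_eq_mul, div_mul_cancel₀ _ hau, sub_self]
  · rw [mem_ker_hypl, dotProduct_smul, haw]
    simp

/-- Easy half of duality: the common kernel of `A` has codimension at most `rankA A`. -/
lemma finrank_inf_ker_ge (A : Finset (V n)) :
    n ≤ Module.finrank ℝ ↥(A.inf fun v => LinearMap.ker (hypl v)) + rankA A := by
  obtain ⟨s, hsub, hspan, hind⟩ := exists_linearIndependent ℝ (↑A : Set (V n))
  have hsfin : s.Finite := A.finite_toSet.subset hsub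
  haveI : Fintype s := hsfin.fintype
  set Φ : V n →ₗ[ℝ] (s → ℝ) := LinearMap.pi (fun i : s => hypl i.1) with hΦ
  have hkerΦ : A.inf (fun v => LinearMap.ker (hypl v)) = LinearMap.ker Φ := by
    apply le_antisymm
    · intro x hx
      rw [hΦ, LinearMap.mem_ker]
      funext i
      have : x ∈ LinearMap.ker (hypl i.1) :=
        Submodule.mem_finsetInf.mp hx i.1 (by exact_mod_cast hsub i.2)
      simpa [LinearMap.pi_apply] using this
    · intro x hx
      rw [hΦ, LinearMap.mem_ker] at hx
      have hs : ∀ v ∈ s, v ⬝ᵥ x = 0 := by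
        intro v hv
        have := congrFun hx ⟨v, hv⟩
        simpa [LinearMap.pi_apply, hypl_apply] using this
      have hspanle : Submodule.span ℝ s ≤ LinearMap.ker (hypl x) := by
        rw [Submodule.span_le]
        intro v hv
        rw [SetLike.mem_coe, mem_ker_hypl, dotProduct_comm]
        exact hs v hv
      rw [Submodule.mem_finsetInf]
      intro v hv
      rw [mem_ker_hypl, ← dotProduct_comm, ← mem_ker_hypl (v := x)]
      apply hspanle
      rw [hspan]
      exact Submodule.subset_span hv
  have hrn := LinearMap.finrank_range_add_finrank_ker Φ
  rw [Module.finrank_fin_fun] at hrn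
  have hrange : Module.finrank ℝ (LinearMap.range Φ) ≤ rankA A := by
    have h1 : Module.finrank ℝ (LinearMap.range Φ) ≤ Module.finrank ℝ (s → ℝ) :=
      Submodule.finrank_le _
    have h2 : Module.finrank ℝ (s → ℝ) = Fintype.card s := by
      simp [Module.finrank_pi]
    have h3 : rankA A = Fintype.card s := by
      rw [rankA, ← hspan, finrank_span_set_eq_card hind, Set.toFinset_card]
    omega
  rw [hkerΦ]
  omega

/-- The key modular-line lemma: any rank-2 intersection of two hyperplanes off `l`
lies in some hyperplane of `A` containing `l`. -/
lemma key_hyp {A : Finset (V n)} (hA : IsArrangement A) {l : Submodule ℝ (V n)}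
    (hmod : IsModular A l) (hline : Module.finrank ℝ l = n - (rankA A - 1))
    {u w : V n} (hu : u ∈ A) (hw : w ∈ A) (hne : u ≠ w)
    (hul : ¬ l ≤ LinearMap.ker (hypl u)) :
    ∃ z ∈ A, l ≤ LinearMap.ker (hypl z) ∧
      ∀ x, u ⬝ᵥ x = 0 → w ⬝ᵥ x = 0 → z ⬝ᵥ x = 0 := by
  classical
  set X0 : Submodule ℝ (V n) := A.inf (fun v => LinearMap.ker (hypl v)) with hX0
  set X : Submodule ℝ (V n) := LinearMap.ker (hypl u) ⊓ LinearMap.ker (hypl w) with hX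
  set r : ℕ := rankA A with hr
  -- basic rank facts
  have hr1 : 1 ≤ r := by
    rw [hr, rankA]
    by_contra hcon
    push_neg at hcon
    interval_cases h : Module.finrank ℝ (Submodule.span ℝ (↑A : Set (V n)))
    have hbot : Submodule.span ℝ (↑A : Set (V n)) = ⊥ := Submodule.finrank_eq_zero.mp h
    have : u ∈ (⊥ : Submodule ℝ (V n)) := hbot ▸ Submodule.subset_span hu
    exact hA.1 u hu (by simpa using this)
  have hrn' : r ≤ n := by
    rw [hr, rankA]
    have := Submodule.finrank_le (Submodule.span ℝ (↑A : Set (V n)))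
    rwa [Module.finrank_fin_fun] at this
  -- X0 ≤ l
  have hX0l : X0 ≤ l := by
    obtain ⟨S₀, hS₀A, hS₀⟩ := hmod.1
    rw [hS₀]
    exact Finset.inf_mono hS₀A
  have hX0u : X0 ≤ LinearMap.ker (hypl u) := Finset.inf_le hu
  have hX0w : X0 ≤ LinearMap.ker (hypl w) := Finset.inf_le hw
  have hlt : l ⊓ LinearMap.ker (hypl u) < l := by
    refine lt_of_le_of_ne inf_le_left (fun h => hul ?_)
    rw [← h]; exact inf_le_right
  have hfrlt : Module.finrank ℝ (l ⊓ LinearMap.ker (hypl u) : Submodule ℝ (V n)) <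
      Module.finrank ℝ l := Submodule.finrank_lt_finrank_of_lt hlt
  have hfrX0 := finrank_inf_ker_ge A
  rw [← hX0, ← hr] at hfrX0
  have hX0eq : X0 = l ⊓ LinearMap.ker (hypl u) := by
    apply Submodule.eq_of_le_of_finrank_le (le_inf hX0l hX0u)
    omega
  have hlXeq : l ⊓ X = X0 := by
    apply le_antisymm
    · rw [hX0eq, hX]
      exact le_inf inf_le_left (le_trans inf_le_right inf_le_left)
    · exact le_inf hX0l (le_inf hX0u hX0w)
  -- dimension of X
  have hku := finrank_ker_hypl (hA.1 u hu)
  have hkw := finrank_ker_hypl (hA.1 w hw)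
  have hsup := sup_ker_eq_top hA hu hw hne
  have hdimX := Submodule.finrank_sup_add_finrank_inf_eq
      (LinearMap.ker (hypl u)) (LinearMap.ker (hypl w))
  rw [hsup, finrank_top, Module.finrank_fin_fun, ← hX] at hdimX
  -- dimension of l ⊔ X
  have hdimS := Submodule.finrank_sup_add_finrank_inf_eq l X
  rw [hlXeq] at hdimS
  have hfrsup : Module.finrank ℝ (l ⊔ X : Submodule ℝ (V n)) < n := by omega
  -- modularity
  have hXmem : X ∈ InterLattice A := by
    refine ⟨{u, w}, ?_, ?_⟩
    · intro v hv
      simp only [Finset.mem_insert, Finset.mem_singleton] at hv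
      rcases hv with rfl | rfl <;> assumption
    · rw [Finset.inf_insert, Finset.inf_singleton, hX]
  obtain ⟨S', hS'A, hS'⟩ := hmod.2 X hXmem
  have hS'ne : S'.Nonempty := by
    rcases S'.eq_empty_or_nonempty with h | h
    · exfalso
      rw [h, Finset.inf_empty] at hS'
      rw [hS', finrank_top, Module.finrank_fin_fun] at hfrsup
      omega
    · exact h
  obtain ⟨z, hz⟩ := hS'ne
  have hinfle : l ⊔ X ≤ LinearMap.ker (hypl z) := by
    rw [hS']
    exact Finset.inf_le hz
  refine ⟨z, hS'A hz, le_trans le_sup_left hinfle, fun x hux hwx => ?_⟩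
  have hxX : x ∈ X := by
    rw [hX, Submodule.mem_inf, mem_ker_hypl, mem_ker_hypl]
    exact ⟨hux, hwx⟩
  have := hinfle (le_sup_right (a := l) hxX)
  rwa [mem_ker_hypl] at this

/-- A chamber has a realizing point avoiding any finite set of extra nonzero normals. -/
lemma exists_generic {A : Finset (V n)} {c₀ : V n → Bool} (hc : IsChamber A c₀)
    (F : Finset (V n)) :
    (∀ f ∈ F, f ≠ 0) → ∃ y, Realizes A c₀ y ∧ ∀ f ∈ F, f ⬝ᵥ y ≠ 0 := by
  classical
  induction F using Finset.induction_on with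
  | empty =>
    intro _
    obtain ⟨y, hy⟩ := hc
    exact ⟨y, hy, by simp⟩
  | @insert f F hfF ih =>
    intro hF
    obtain ⟨y, hy, hyF⟩ := ih (fun g hg => hF g (Finset.mem_insert_of_mem hg))
    have hf0 : f ≠ 0 := hF f (Finset.mem_insert_self f F)
    have hff : 0 < f ⬝ᵥ f := by
      have h1 : 0 ≤ f ⬝ᵥ f := Finset.sum_nonneg fun i _ => mul_self_nonneg _
      rcases lt_or_eq_of_le h1 with h | h
      · exact h
      · exact absurd (dotProduct_self_eq_zero.mp h.symm) hf0
    set G : Finset (V n) := A ∪ F with hG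
    have habs : ∀ v ∈ G, 0 < |v ⬝ᵥ y| := by
      intro v hv
      rw [abs_pos]
      rcases Finset.mem_union.mp hv with h | h
      · have h2 := hy v h
        by_cases hcv : c₀ v
        · rw [if_pos hcv] at h2; exact ne_of_gt h2
        · rw [if_neg hcv] at h2; exact ne_of_lt h2
      · exact hyF v h
    set δ : ℝ := if hGn : G.Nonempty then G.inf' hGn (fun v => |v ⬝ᵥ y| / (|v ⬝ᵥ f| + 1)) else 1
      with hδ
    have hδpos : 0 < δ := by
      rw [hδ]
      split
      · next hGn =>
        rw [Finset.lt_inf'_iff]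
        intro v hv
        exact div_pos (habs v hv) (by positivity)
      · exact one_pos
    have hδle : ∀ v ∈ G, δ ≤ |v ⬝ᵥ y| / (|v ⬝ᵥ f| + 1) := by
      intro v hv
      rw [hδ, dif_pos ⟨v, hv⟩]
      exact Finset.inf'_le _ hv
    set t : ℝ := if (δ/2) * (f ⬝ᵥ f) = -(f ⬝ᵥ y) then δ/4 else δ/2 with hT
    have htpos : 0 < t := by rw [hT]; split <;> linarith
    have htlt : t < δ := by rw [hT]; split <;> linarith
    have htbad : t * (f ⬝ᵥ f) ≠ -(f ⬝ᵥ y) := by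
      rw [hT]
      split
      · next h =>
        intro h2
        rw [← h] at h2
        have := mul_right_cancel₀ (ne_of_gt hff) h2
        linarith
      · next h => exact fun h2 => h h2
    have hbound : ∀ v ∈ G, |t * (v ⬝ᵥ f)| < |v ⬝ᵥ y| := by
      intro v hv
      have h1 : t * (|v ⬝ᵥ f| + 1) < |v ⬝ᵥ y| := by
        have := hδle v hv
        have hd : 0 < |v ⬝ᵥ f| + 1 := by positivity
        calc t * (|v ⬝ᵥ f| + 1) < δ * (|v ⬝ᵥ f| + 1) := by
              exact mul_lt_mul_of_pos_right htlt hd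
          _ ≤ (|v ⬝ᵥ y| / (|v ⬝ᵥ f| + 1)) * (|v ⬝ᵥ f| + 1) := by
              exact mul_le_mul_of_nonneg_right this (le_of_lt hd)
          _ = |v ⬝ᵥ y| := by field_simp
      have h2 : |t * (v ⬝ᵥ f)| = t * |v ⬝ᵥ f| := by
        rw [abs_mul, abs_of_pos htpos]
      nlinarith [abs_nonneg (v ⬝ᵥ f)]
    refine ⟨y + t • f, ?_, ?_⟩
    · intro v hv
      have hb := hbound v (Finset.mem_union_left _ hv)
      have hval : v ⬝ᵥ (y + t • f) = v ⬝ᵥ y + t * (v ⬝ᵥ f) := by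
        rw [dotProduct_add, dotProduct_smul, smul_eq_mul]
      have hsgn := hy v hv
      by_cases hcv : c₀ v
      · rw [if_pos hcv] at hsgn ⊢
        rw [hval]
        have h1 := neg_abs_le (t * (v ⬝ᵥ f))
        have h2 : |v ⬝ᵥ y| = v ⬝ᵥ y := abs_of_pos hsgn
        linarith [hb]
      · rw [if_neg hcv] at hsgn ⊢
        rw [hval]
        have h1 := le_abs_self (t * (v ⬝ᵥ f))
        have h2 : |v ⬝ᵥ y| = -(v ⬝ᵥ y) := abs_of_neg hsgn
        linarith [hb]
    · intro g hg
      have hval : g ⬝ᵥ (y + t • f) = g ⬝ᵥ y + t * (g ⬝ᵥ f) := by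
        rw [dotProduct_add, dotProduct_smul, smul_eq_mul]
      rcases Finset.mem_insert.mp hg with rfl | hgF
      · rw [hval]
        intro h0
        exact htbad (by linarith)
      · have hb := hbound g (Finset.mem_union_right _ hgF)
        rw [hval]
        intro h0
        have hneg : t * (g ⬝ᵥ f) = -(g ⬝ᵥ y) := by linarith
        rw [hneg, abs_neg] at hb
        exact lt_irrefl _ hb

/-- `±1` sign of a boolean. -/
def Esgn (b : Bool) : ℝ := if b then 1 else -1

lemma Esgn_pos {b : Bool} {a : ℝ} (h : if b then 0 < a else a < 0) :
    0 < Esgn b * a := by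
  cases b <;> simp_all [Esgn] <;> linarith

lemma Esgn_not (b : Bool) : Esgn (!b) = -Esgn b := by cases b <;> simp [Esgn]

lemma bool_flip {a b : Bool} (h : a ≠ b) : a = !b := by
  cases a <;> cases b <;> simp_all

/-- Pure-arithmetic heart of the downward-closedness argument. -/
lemma chain_sign {Ez Eu Ew α β ux wx uy wy up wp zp zy su sw : ℝ}
    (h2 : α * ux + β * wx = 0)
    (hzy : zy = α * uy + β * wy) (hzp : zp = α * up + β * wp)
    (h3 : uy = su * ux) (h4 : wy = sw * wx)
    (hsusw : su < sw)
    (hEzy : 0 < Ez * zy) (hEzp : 0 < Ez * zp)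
    (hEux : 0 < Eu * ux) (hEwx : 0 < Ew * wx)
    (hEwp : Ew * wp < 0) :
    Eu * up < 0 := by
  have hb : β * wx = -(α * ux) := by linarith
  have hγ : Ez * zy = (Ez * α * ux) * (su - sw) := by
    calc Ez * zy = Ez * (α * (su * ux)) + Ez * (sw * (β * wx)) := by
          rw [hzy, h3, h4]; ring
      _ = Ez * (α * (su * ux)) + Ez * (sw * (-(α * ux))) := by rw [hb]
      _ = (Ez * α * ux) * (su - sw) := by ring
  have hγneg : Ez * α * ux < 0 := by
    by_contra hcon
    push_neg at hcon
    nlinarith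
  have hδ : Ez * β * wx = -(Ez * α * ux) := by rw [mul_assoc, hb]; ring
  have hδpos : 0 < Ez * β * wx := by linarith
  have key1 : (Ez * β * wp) * (Ew * wx) = (Ez * β * wx) * (Ew * wp) := by ring
  have h5 : (Ez * β * wp) * (Ew * wx) < 0 := by
    rw [key1]; exact mul_neg_of_pos_of_neg hδpos hEwp
  have h6 : Ez * β * wp < 0 := by
    by_contra hcon
    push_neg at hcon
    nlinarith
  have h7 : 0 < Ez * α * up := by
    have hh : Ez * zp = Ez * α * up + Ez * β * wp := by rw [hzp]; ring
    linarith
  have key2 : (Ez * α * up) * (Eu * ux) = (Ez * α * ux) * (Eu * up) := by ring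
  by_contra hcon
  push_neg at hcon
  nlinarith

end Aux

theorem modular_line_fiber_chain {n : ℕ} (A : Finset (V n)) (hA : IsArrangement A)
    (c₀ : V n → Bool) (hc₀ : IsChamber A c₀) (l : Submodule ℝ (V n))
    (hmod : IsModular A l) (hline : Module.finrank ℝ l = n - (rankA A - 1))
    (hinc : IncidentSub A c₀ l) :
    ∃ (t : ℕ) (c : Fin (t + 1) → V n → Bool) (H : Fin t → V n),
      t = {v | v ∈ A ∧ ¬ l ≤ LinearMap.ker (hypl v)}.ncard ∧
      c 0 = c₀ ∧
      (∀ i, IsChamber A (c i) ∧ ∀ v ∈ A, l ≤ LinearMap.ker (hypl v) → c i v = c₀ v) ∧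
      (∀ i : Fin t, SepSet A (c i.castSucc) (c i.succ) = {H i}) ∧
      Function.Injective H ∧
      (∀ v ∈ A, (¬ l ≤ LinearMap.ker (hypl v)) ↔ ∃ i, H i = v) ∧
      (∀ d, IsChamber A d → (∀ v ∈ A, l ≤ LinearMap.ker (hypl v) → d v = c₀ v) →
        ∃ i, ∀ v ∈ A, d v = c i v) := by
  classical
  obtain ⟨x, hxl, hx⟩ := hinc
  obtain ⟨p0, hp0⟩ := hc₀
  -- the hyperplanes not containing l
  set B : Finset (V n) := A.filter (fun v => ¬ l ≤ LinearMap.ker (hypl v)) with hB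
  have hBmem : ∀ {v}, v ∈ B ↔ v ∈ A ∧ ¬ l ≤ LinearMap.ker (hypl v) := by
    intro v; rw [hB, Finset.mem_filter]
  have hxsgn : ∀ v ∈ B, if c₀ v then 0 < v ⬝ᵥ x else v ⬝ᵥ x < 0 := by
    intro v hv
    exact hx v (hBmem.mp hv).1 (hBmem.mp hv).2
  have hxne : ∀ v ∈ B, v ⬝ᵥ x ≠ 0 := by
    intro v hv
    have := hxsgn v hv
    by_cases hcv : c₀ v
    · rw [if_pos hcv] at this; exact ne_of_gt this
    · rw [if_neg hcv] at this; exact ne_of_lt this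
  have hxA : ∀ v ∈ A, l ≤ LinearMap.ker (hypl v) → v ⬝ᵥ x = 0 := by
    intro v _ hlv
    exact mem_ker_hypl.mp (hlv hxl)
  -- generic chamber point
  set F : Finset (V n) := ((B ×ˢ B).filter (fun p => p.1 ≠ p.2)).image
      (fun p => (p.2 ⬝ᵥ x) • p.1 - (p.1 ⬝ᵥ x) • p.2) with hF
  have hFne : ∀ f ∈ F, f ≠ 0 := by
    intro f hf
    rw [hF, Finset.mem_image] at hf
    obtain ⟨⟨u, w⟩, hp, rfl⟩ := hf
    rw [Finset.mem_filter, Finset.mem_product] at hp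
    obtain ⟨⟨huB, hwB⟩, hne⟩ := hp
    intro h0
    have h1 : (w ⬝ᵥ x) • u = (u ⬝ᵥ x) • w := by
      have := sub_eq_zero.mp h0
      exact this
    have hwx : w ⬝ᵥ x ≠ 0 := hxne w hwB
    have h2 : u = ((w ⬝ᵥ x)⁻¹ * (u ⬝ᵥ x)) • w := by
      have h3 : ((w ⬝ᵥ x)⁻¹ * (w ⬝ᵥ x)) • u = ((w ⬝ᵥ x)⁻¹ * (u ⬝ᵥ x)) • w := by
        rw [mul_smul, mul_smul, h1]
      rwa [inv_mul_cancel₀ hwx, one_smul] at h3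
    have hc0 : (w ⬝ᵥ x)⁻¹ * (u ⬝ᵥ x) ≠ 0 :=
      mul_ne_zero (inv_ne_zero hwx) (hxne u huB)
    have hsame : SameHyp u w := by
      intro x'
      rw [h2, smul_dotProduct, smul_eq_mul]
      constructor
      · intro h
        rcases mul_eq_zero.mp h with h | h
        · exact absurd h hc0
        · exact h
      · intro h; rw [h, mul_zero]
    exact hne (hA.2 u (hBmem.mp huB).1 w (hBmem.mp hwB).1 hsame)
  obtain ⟨y, hy, hyF⟩ := exists_generic ⟨p0, hp0⟩ F hFne
  -- crossing parameters
  set sp : V n → ℝ := fun v => (v ⬝ᵥ y) / (v ⬝ᵥ x) with hsp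
  have hspos : ∀ v ∈ B, 0 < sp v := by
    intro v hv
    have h1 := hxsgn v hv
    have h2 := hy v (hBmem.mp hv).1
    rw [hsp]
    by_cases hcv : c₀ v
    · rw [if_pos hcv] at h1 h2; exact div_pos h2 h1
    · rw [if_neg hcv] at h1 h2; exact div_pos_of_neg_of_neg h2 h1
  have hsmul : ∀ v ∈ B, v ⬝ᵥ y = sp v * (v ⬝ᵥ x) := by
    intro v hv
    rw [hsp]
    simp only
    rw [div_mul_cancel₀ _ (hxne v hv)]
  have hsinj : ∀ u ∈ B, ∀ w ∈ B, u ≠ w → sp u ≠ sp w := by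
    intro u hu w hw hne heq
    have hfF : (w ⬝ᵥ x) • u - (u ⬝ᵥ x) • w ∈ F := by
      rw [hF, Finset.mem_image]
      exact ⟨(u, w), by rw [Finset.mem_filter, Finset.mem_product]; exact ⟨⟨hu, hw⟩, hne⟩, rfl⟩
    have hne0 := hyF _ hfF
    rw [sub_dotProduct, smul_dotProduct, smul_dotProduct, smul_eq_mul, smul_eq_mul] at hne0
    rw [hsp] at heq
    simp only at heq
    rw [div_eq_div_iff (hxne u hu) (hxne w hw)] at heq
    apply hne0
    linarith
  -- enumeration of B in increasing crossing order
  set t : ℕ := B.card with ht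
  set T : Finset ℝ := B.image sp with hT
  have hTcard : T.card = t := by
    rw [hT, ht]
    apply Finset.card_image_of_injOn
    intro u hu w hw heq
    by_contra hne
    exact hsinj u hu w hw hne heq
  set e : Fin t ≃o {z // z ∈ T} := T.orderIsoOfFin hTcard with he
  have hHspec : ∀ i : Fin t, ∃ v, v ∈ B ∧ sp v = (e i : ℝ) := by
    intro i
    obtain ⟨v, hv, hveq⟩ := Finset.mem_image.mp (e i).2
    exact ⟨v, hv, hveq⟩
  set H : Fin t → V n := fun i => Classical.choose (hHspec i) with hH
  have hHB : ∀ i, H i ∈ B := fun i => (Classical.choose_spec (hHspec i)).1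
  have hHs : ∀ i, sp (H i) = (e i : ℝ) := fun i => (Classical.choose_spec (hHspec i)).2
  set q : Fin t → ℝ := fun k => sp (H k) with hq
  have hqmono : StrictMono q := by
    intro i j hij
    rw [hq]
    simp only
    rw [hHs, hHs]
    exact_mod_cast e.strictMono hij
  have hHinj : Function.Injective H := by
    intro i j hij
    by_contra hne
    rcases lt_or_gt_of_ne hne with h | h
    · exact absurd (congrArg sp hij) (ne_of_lt (hqmono h))
    · exact absurd (congrArg sp hij) (ne_of_gt (hqmono h))
  have hHsurj : ∀ v ∈ B, ∃ i, H i = v := by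
    intro v hv
    have hvT : sp v ∈ T := by rw [hT]; exact Finset.mem_image_of_mem sp hv
    obtain ⟨i, hi⟩ := e.surjective ⟨sp v, hvT⟩
    refine ⟨i, ?_⟩
    have heq : sp (H i) = sp v := by
      rw [hHs, hi]
    by_contra hne
    exact hsinj (H i) (hHB i) v hv hne heq
  have hqpos : ∀ k, 0 < q k := fun k => hspos (H k) (hHB k)
  -- separating parameters
  set r : Fin (t+1) → ℝ := fun i =>
    if h : (i : ℕ) < t then
      ((if h0 : (i : ℕ) = 0 then 0 else q ⟨(i : ℕ) - 1, by omega⟩) + q ⟨(i : ℕ), h⟩) / 2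
    else if ht0 : 0 < t then q ⟨t - 1, by omega⟩ + 1 else 1
    with hrdef
  have hrq : ∀ (i : Fin (t+1)) (k : Fin t),
      ((k : ℕ) < (i : ℕ) → q k < r i) ∧ ((i : ℕ) ≤ (k : ℕ) → r i < q k) := by
    intro i k
    rw [hrdef]
    simp only
    by_cases h : (i : ℕ) < t
    · rw [dif_pos h]
      by_cases h0 : (i : ℕ) = 0
      · rw [dif_pos h0]
        constructor
        · intro hk; exact absurd hk (by omega)
        · intro _
          have h1 := hqpos ⟨(i : ℕ), h⟩
          have h2 : q ⟨(i : ℕ), h⟩ ≤ q k := by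
            apply hqmono.monotone
            simp only [Fin.le_def, Fin.val_mk]
            omega
          linarith
      · rw [dif_neg h0]
        constructor
        · intro hk
          have h1 : q k ≤ q ⟨(i : ℕ) - 1, by omega⟩ := by
            apply hqmono.monotone
            simp only [Fin.le_def, Fin.val_mk]
            omega
          have h2 : q ⟨(i : ℕ) - 1, by omega⟩ < q ⟨(i : ℕ), h⟩ := by
            apply hqmono
            simp only [Fin.lt_def, Fin.val_mk]
            omega
          linarith
        · intro hk
          have h1 : q ⟨(i : ℕ), h⟩ ≤ q k := by
            apply hqmono.monotone
            simp only [Fin.le_def, Fin.val_mk]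
            omega
          have h2 : q ⟨(i : ℕ) - 1, by omega⟩ < q ⟨(i : ℕ), h⟩ := by
            apply hqmono
            simp only [Fin.lt_def, Fin.val_mk]
            omega
          linarith
    · rw [dif_neg h]
      have hit : (i : ℕ) = t := by have := i.isLt; omega
      have ht0 : 0 < t := lt_of_le_of_lt (Nat.zero_le _) k.isLt
      rw [dif_pos ht0]
      constructor
      · intro _
        have h1 : q k ≤ q ⟨t - 1, by omega⟩ := by
          apply hqmono.monotone
          simp only [Fin.le_def, Fin.val_mk]
          have := k.isLt
          omega
        linarith
      · intro hk
        exact absurd k.isLt (by omega)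
  -- the chambers
  set c : Fin (t+1) → V n → Bool := fun i v =>
    if ∃ k : Fin t, H k = v ∧ (k : ℕ) < (i : ℕ) then !c₀ v else c₀ v with hcdef
  have hcval : ∀ (i : Fin (t+1)) (k : Fin t),
      ((k : ℕ) < (i : ℕ) → c i (H k) = !c₀ (H k)) ∧
      ((i : ℕ) ≤ (k : ℕ) → c i (H k) = c₀ (H k)) := by
    intro i k
    constructor
    · intro hk
      rw [hcdef]
      simp only
      rw [if_pos ⟨k, rfl, hk⟩]
    · intro hk
      rw [hcdef]
      simp only
      rw [if_neg]
      rintro ⟨k', hk', hki⟩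
      have : k' = k := hHinj hk'
      omega
  have hcnotB : ∀ (i : Fin (t+1)) v, v ∉ B → c i v = c₀ v := by
    intro i v hv
    rw [hcdef]
    simp only
    rw [if_neg]
    rintro ⟨k, hk, _⟩
    exact hv (hk ▸ hHB k)
  have hcA : ∀ (i : Fin (t+1)), ∀ v ∈ A, l ≤ LinearMap.ker (hypl v) → c i v = c₀ v := by
    intro i v hv hlv
    apply hcnotB
    rw [hBmem]
    rintro ⟨-, h⟩
    exact h hlv
  -- each c i is a chamber
  have hchamber : ∀ i : Fin (t+1), IsChamber A (c i) := by
    intro i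
    refine ⟨y - r i • x, ?_⟩
    intro v hv
    have hval : v ⬝ᵥ (y - r i • x) = v ⬝ᵥ y - r i * (v ⬝ᵥ x) := by
      rw [dotProduct_sub, dotProduct_smul, smul_eq_mul]
    by_cases hvB : v ∈ B
    · obtain ⟨k, hk⟩ := hHsurj v hvB
      have hqk : v ⬝ᵥ y = q k * (v ⬝ᵥ x) := by
        rw [hsmul v hvB, hq]
        simp only
        rw [hk]
      have hxs := hxsgn v hvB
      by_cases hki : (k : ℕ) < (i : ℕ)
      · have hc1 : c i v = !c₀ v := hk ▸ (hcval i k).1 hki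
        have hlt : q k < r i := (hrq i k).1 hki
        rw [hc1, hval, hqk]
        by_cases hcv : c₀ v
        · rw [if_pos hcv] at hxs
          rw [hcv]
          simp only [Bool.not_true, Bool.false_eq_true, if_false]
          nlinarith [mul_pos hxs (sub_pos.mpr hlt)]
        · have hcv' : c₀ v = false := by revert hcv; cases c₀ v <;> simp
          rw [if_neg hcv] at hxs
          rw [hcv']
          simp only [Bool.not_false, if_true]
          nlinarith [mul_pos_of_neg_of_neg hxs (by linarith : q k - r i < 0)]
      · have hc1 : c i v = c₀ v := hk ▸ (hcval i k).2 (by omega)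
        have hlt : r i < q k := (hrq i k).2 (by omega)
        rw [hc1, hval, hqk]
        by_cases hcv : c₀ v
        · rw [if_pos hcv] at hxs
          rw [if_pos hcv]
          nlinarith [mul_pos hxs (by linarith : (0:ℝ) < q k - r i)]
        · rw [if_neg hcv] at hxs
          rw [if_neg hcv]
          nlinarith [mul_neg_of_neg_of_pos hxs (by linarith : (0:ℝ) < q k - r i)]
    · have hc1 : c i v = c₀ v := hcnotB i v hvB
      have hvx : v ⬝ᵥ x = 0 := by
        apply hxA v hv
        by_contra hcon
        exact hvB (hBmem.mpr ⟨hv, hcon⟩)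
      rw [hc1, hval, hvx, mul_zero, sub_zero]
      exact hy v hv
  refine ⟨t, c, H, ?_, ?_, ?_, ?_, hHinj, ?_, ?_⟩
  · -- cardinality
    have hset : {v | v ∈ A ∧ ¬ l ≤ LinearMap.ker (hypl v)} = (↑B : Set (V n)) := by
      ext v
      rw [Set.mem_setOf_eq, Finset.mem_coe, hBmem]
    rw [hset, Set.ncard_coe_finset, ht]
  · -- c 0 = c₀
    funext v
    rw [hcdef]
    simp only
    rw [if_neg]
    rintro ⟨k, hk, hki⟩
    rw [Fin.val_zero] at hki
    exact absurd hki (Nat.not_lt_zero _)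
  · intro i
    exact ⟨hchamber i, hcA i⟩
  · -- separation sets
    intro i
    ext v
    simp only [SepSet, Finset.mem_filter, Finset.mem_singleton]
    have hic : (i.castSucc : ℕ) = (i : ℕ) := Fin.coe_castSucc i
    have his : (i.succ : ℕ) = (i : ℕ) + 1 := Fin.val_succ i
    constructor
    · rintro ⟨hvA, hne⟩
      by_contra hvH
      apply hne
      by_cases hvB : v ∈ B
      · obtain ⟨k, hk⟩ := hHsurj v hvB
        have hkval : (k : ℕ) ≠ (i : ℕ) := by
          intro h
          exact hvH (by rw [← hk]; exact congrArg H (Fin.ext h))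
        by_cases hki : (k : ℕ) < (i : ℕ)
        · have h1 := hk ▸ (hcval i.castSucc k).1 (by omega)
          have h2 := hk ▸ (hcval i.succ k).1 (by omega)
          rw [h1, h2]
        · have h1 := hk ▸ (hcval i.castSucc k).2 (by omega)
          have h2 := hk ▸ (hcval i.succ k).2 (by omega)
          rw [h1, h2]
      · rw [hcnotB _ v hvB, hcnotB _ v hvB]
    · rintro rfl
      refine ⟨(hBmem.mp (hHB i)).1, ?_⟩
      have h1 := (hcval i.castSucc i).2 (by omega)
      have h2 := (hcval i.succ i).1 (by omega)
      rw [h1, h2]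
      cases c₀ (H i) <;> simp
  · -- range of H
    intro v hv
    constructor
    · intro hlv
      exact hHsurj v (hBmem.mpr ⟨hv, hlv⟩)
    · rintro ⟨i, rfl⟩
      exact (hBmem.mp (hHB i)).2
  · -- every chamber in the fiber occurs in the chain
    intro d hd hdl
    obtain ⟨p, hp⟩ := hd
    have hdown : ∀ j k : Fin t, j < k → d (H k) ≠ c₀ (H k) → d (H j) ≠ c₀ (H j) := by
      intro j k hjk hflip
      have hjB := hHB j
      have hkB := hHB k
      have hjA := (hBmem.mp hjB).1
      have hkA := (hBmem.mp hkB).1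
      have hne : H j ≠ H k := fun h => (ne_of_lt hjk) (hHinj h)
      obtain ⟨z, hzA, hzl, hzker⟩ := key_hyp hA hmod hline hjA hkA hne (hBmem.mp hjB).2
      obtain ⟨α, β, hcomb⟩ := exists_eval_comb hA hjA hkA hne hzker
      have hzx : z ⬝ᵥ x = 0 := hxA z hzA hzl
      have h2 : α * (H j ⬝ᵥ x) + β * (H k ⬝ᵥ x) = 0 := by rw [← hcomb x]; exact hzx
      have h3 : H j ⬝ᵥ y = q j * (H j ⬝ᵥ x) := by
        rw [hq]; simp only; exact hsmul _ hjB
      have h4 : H k ⬝ᵥ y = q k * (H k ⬝ᵥ x) := by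
        rw [hq]; simp only; exact hsmul _ hkB
      have hsusw : q j < q k := hqmono hjk
      have hEzy : 0 < Esgn (c₀ z) * (z ⬝ᵥ y) := Esgn_pos (hy z hzA)
      have hdz : d z = c₀ z := hdl z hzA hzl
      have hEzp : 0 < Esgn (c₀ z) * (z ⬝ᵥ p) := by
        have h5 := Esgn_pos (hp z hzA)
        rwa [hdz] at h5
      have hEux : 0 < Esgn (c₀ (H j)) * (H j ⬝ᵥ x) := Esgn_pos (hxsgn _ hjB)
      have hEwx : 0 < Esgn (c₀ (H k)) * (H k ⬝ᵥ x) := Esgn_pos (hxsgn _ hkB)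
      have hEwp : Esgn (c₀ (H k)) * (H k ⬝ᵥ p) < 0 := by
        have h5 := Esgn_pos (hp (H k) hkA)
        rw [bool_flip hflip, Esgn_not] at h5
        linarith
      have hfin := chain_sign h2 (hcomb y) (hcomb p) h3 h4 hsusw hEzy hEzp hEux hEwx hEwp
      intro heq
      have h6 := Esgn_pos (hp (H j) hjA)
      rw [heq] at h6
      linarith
    have hex : ∃ m : ℕ, ∀ h : m < t, ¬ (d (H ⟨m, h⟩) ≠ c₀ (H ⟨m, h⟩)) :=
      ⟨t, fun h => absurd h (lt_irrefl t)⟩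
    have hm0le : Nat.find hex ≤ t := Nat.find_le (fun h => absurd h (lt_irrefl t))
    set m₀ : ℕ := Nat.find hex with hm0
    have hm0spec := Nat.find_spec hex
    have hm0min : ∀ m, m < m₀ → ∀ h : m < t, d (H ⟨m, h⟩) ≠ c₀ (H ⟨m, h⟩) := by
      intro m hm h
      have hmin := Nat.find_min hex hm
      rw [not_forall] at hmin
      obtain ⟨h', hh⟩ := hmin
      rw [not_not] at hh
      exact hh
    have hflip_iff : ∀ k : Fin t, (d (H k) ≠ c₀ (H k)) ↔ (k : ℕ) < m₀ := by
      intro k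
      constructor
      · intro hfk
        by_contra hcon
        push_neg at hcon
        rcases eq_or_lt_of_le hcon with h | h
        · apply hm0spec (show m₀ < t by omega)
          have hkk : (⟨m₀, show m₀ < t by omega⟩ : Fin t) = k := Fin.ext h
          rw [hkk]
          exact hfk
        · have hflip0 := hdown ⟨m₀, by omega⟩ k (by rw [Fin.lt_def]; exact h) hfk
          exact hm0spec (by omega) hflip0
      · intro hk
        exact hm0min (k : ℕ) hk k.isLt
    refine ⟨⟨m₀, by omega⟩, ?_⟩
    intro v hv
    by_cases hvB : v ∈ B
    · obtain ⟨k, hk⟩ := hHsurj v hvB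
      by_cases hki : (k : ℕ) < m₀
      · have hc1 : c ⟨m₀, by omega⟩ v = !c₀ v := hk ▸ (hcval ⟨m₀, by omega⟩ k).1 hki
        rw [hc1, ← hk]
        exact bool_flip ((hflip_iff k).mpr hki)
      · have hc1 : c ⟨m₀, by omega⟩ v = c₀ v := hk ▸ (hcval ⟨m₀, by omega⟩ k).2 (by simp only [Fin.val_mk]; omega)
        rw [hc1, ← hk]
        by_contra hne
        exact hki ((hflip_iff k).mp hne)
    · rw [hcnotB _ v hvB]
      apply hdl v hv
      by_contra hcon
      exact hvB (hBmem.mpr ⟨hv, hcon⟩)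
end
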